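/- arXiv:2012.07837 — 5 statements merged into one kernel-verified Lean document; each statement's English description precedes it below -/
import Mathlib

section
/- Let M > 0 and let f = h + conj(g) belong to the class P⁰_H(M), with power series h(z) = z + Σ_{n=2}^∞ a_n zⁿ and g(z) = Σ_{n=2}^∞ b_n zⁿ. Then for every integer n ≥ 2 one has |a_n| + |b_n| ≤ 2M/(n(n−1)). -/
open Filter MeasureTheory

section Aux
open Complex

noncomputable def Eθ (m : ℤ) (θ : ℝ) : ℂ := Complex.exp ((m : ℂ) * Complex.I * θ)

lemma Eθ_norm (m : ℤ) (θ : ℝ) : ‖Eθ m θ‖ = 1 := by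
  simp [Eθ, Complex.norm_exp]

lemma Eθ_continuous (m : ℤ) : Continuous (Eθ m) :=
  Complex.continuous_exp.comp (by continuity)

lemma Eθ_add (j m : ℤ) (θ : ℝ) : Eθ (j + m) θ = Eθ j θ * Eθ m θ := by
  rw [Eθ, Eθ, Eθ, ← Complex.exp_add]; push_cast; ring_nf

lemma Eθ_conj (m : ℤ) (θ : ℝ) : (starRingEnd ℂ) (Eθ m θ) = Eθ (-m) θ := by
  rw [Eθ, Eθ, ← Complex.exp_conj]; congr 1; simp [map_mul, Complex.conj_I]

lemma Eθ_integral (m : ℤ) :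
    ∫ θ in Set.Ioc (0:ℝ) (2*Real.pi), Eθ m θ = if m = 0 then (2*Real.pi : ℂ) else 0 := by
  have h2π : (0:ℝ) ≤ 2*Real.pi := by positivity
  rw [← intervalIntegral.integral_of_le h2π]
  rcases eq_or_ne m 0 with hm | hm
  · simp [Eθ, hm]
  · rw [if_neg hm]
    have hc : ((m : ℂ) * Complex.I) ≠ 0 := by simp [Complex.I_ne_zero, hm]
    have := integral_exp_mul_complex (a := (0:ℝ)) (b := 2*Real.pi) hc
    simp only [Eθ]
    rw [this]
    have : ((m:ℂ) * Complex.I * (2*Real.pi : ℝ)) = m * (2 * Real.pi * Complex.I) := by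
      push_cast; ring
    rw [this, Complex.exp_int_mul_two_pi_mul_I]
    simp

section Swap
variable (u : ℕ → ℂ) (hu : Summable fun k => ‖u k‖)

lemma phi_continuous (hu : Summable fun k => ‖u k‖) :
    Continuous (fun θ : ℝ => ∑' j : ℕ, u j * Eθ j θ) := by
  apply continuous_tsum (u := fun j => ‖u j‖)
    (fun j => continuous_const.mul (Eθ_continuous j)) hu
  intro n x
  simp only [Pi.mul_apply, norm_mul, Eθ_norm, mul_one, le_refl]

lemma integral_phi_mul (hu : Summable fun k => ‖u k‖) (m : ℤ) :
    ∫ θ in Set.Ioc (0:ℝ) (2*Real.pi), (∑' j : ℕ, u j * Eθ j θ) * Eθ m θ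
      = ∑' j : ℕ, u j * (if (j:ℤ) + m = 0 then (2*Real.pi : ℂ) else 0) := by
  have hμ : ((volume : Measure ℝ) (Set.Ioc (0:ℝ) (2*Real.pi))).toReal = 2*Real.pi := by
    rw [Real.volume_Ioc, sub_zero]
    rw [ENNReal.toReal_ofReal (by positivity)]
  have hint : ∀ j : ℕ, Integrable (fun θ : ℝ => u j * Eθ j θ * Eθ m θ)
      (volume.restrict (Set.Ioc (0:ℝ) (2*Real.pi))) := by
    intro j
    exact (Continuous.integrableOn_Ioc (by
      exact (continuous_const.mul (Eθ_continuous j)).mul (Eθ_continuous m)))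
  have hnorm : ∀ j : ℕ, (∫ θ in Set.Ioc (0:ℝ) (2*Real.pi), ‖u j * Eθ j θ * Eθ m θ‖)
      = (2*Real.pi) * ‖u j‖ := by
    intro j
    have : (fun θ : ℝ => ‖u j * Eθ j θ * Eθ m θ‖) = fun _ : ℝ => ‖u j‖ := by
      funext θ; rw [norm_mul, norm_mul, Eθ_norm, Eθ_norm, mul_one, mul_one]
    rw [this, setIntegral_const, measureReal_def, hμ, smul_eq_mul]
  have hsum : Summable fun j : ℕ => ∫ θ in Set.Ioc (0:ℝ) (2*Real.pi), ‖u j * Eθ j θ * Eθ m θ‖ := by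
    simp_rw [hnorm]; exact hu.mul_left _
  have key := MeasureTheory.hasSum_integral_of_summable_integral_norm hint hsum
  have h1 : (∫ θ in Set.Ioc (0:ℝ) (2*Real.pi), (∑' j : ℕ, u j * Eθ j θ * Eθ m θ))
      = ∫ θ in Set.Ioc (0:ℝ) (2*Real.pi), (∑' j : ℕ, u j * Eθ j θ) * Eθ m θ := by
    congr 1; funext θ; exact tsum_mul_right
  rw [h1] at key
  rw [← key.tsum_eq]
  congr 1
  funext j
  have : (fun θ : ℝ => u j * Eθ j θ * Eθ m θ) = fun θ : ℝ => u j * Eθ ((j:ℤ) + m) θ := by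
    funext θ; rw [Eθ_add]; ring
  rw [this, MeasureTheory.integral_const_mul, Eθ_integral]
end Swap

lemma caratheodory_core (u : ℕ → ℂ) (hu : Summable fun k => ‖u k‖)
    (hpos : ∀ θ : ℝ, 0 ≤ (∑' j : ℕ, u j * Eθ j θ).re)
    (k : ℕ) (hk : k ≠ 0) : ‖u k‖ ≤ 2 * (u 0).re := by
  set S := Set.Ioc (0:ℝ) (2*Real.pi) with hS
  set φ : ℝ → ℂ := fun θ => ∑' j : ℕ, u j * Eθ j θ with hφ
  have hφc : Continuous φ := phi_continuous u hu
  -- the three integrals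
  have Lneg : ∫ θ in S, φ θ * Eθ (-(k:ℤ)) θ = (2*Real.pi : ℂ) * u k := by
    rw [integral_phi_mul u hu]
    rw [tsum_eq_single k (fun j hj => by rw [if_neg (by omega), mul_zero])]
    rw [if_pos (by omega)]; ring
  have Lpos : ∫ θ in S, φ θ * Eθ (k:ℤ) θ = 0 := by
    rw [integral_phi_mul u hu]
    have h0 : ∀ j : ℕ, u j * (if ((j:ℤ)+(k:ℤ)=0) then (2*Real.pi:ℂ) else 0) = 0 := by
      intro j; rw [if_neg (by omega), mul_zero]
    simp only [h0, tsum_zero]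
  have L0 : ∫ θ in S, φ θ * Eθ 0 θ = (2*Real.pi : ℂ) * u 0 := by
    rw [integral_phi_mul u hu]
    rw [tsum_eq_single 0 (fun j hj => by rw [if_neg (by omega), mul_zero])]
    rw [if_pos (by omega)]; ring
  have hπ : (0:ℝ) < 2*Real.pi := by positivity
  have hintφ : ∀ m : ℤ, Integrable (fun θ => φ θ * Eθ m θ) (volume.restrict S) :=
    fun m => Continuous.integrableOn_Ioc (hφc.mul (Eθ_continuous m))
  have hintc : Integrable (fun θ => (starRingEnd ℂ) (φ θ) * Eθ (-(k:ℤ)) θ)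
      (volume.restrict S) :=
    Continuous.integrableOn_Ioc ((Complex.continuous_conj.comp hφc).mul (Eθ_continuous _))
  have Lconj : ∫ θ in S, (starRingEnd ℂ) (φ θ) * Eθ (-(k:ℤ)) θ = 0 := by
    have heq : (fun θ => (starRingEnd ℂ) (φ θ) * Eθ (-(k:ℤ)) θ)
        = fun θ => (starRingEnd ℂ) (φ θ * Eθ (k:ℤ) θ) := by
      funext θ; rw [map_mul, Eθ_conj]
    rw [heq, integral_conj, Lpos, map_zero]
  have key : ∫ θ in S, ((2 * (φ θ).re : ℝ) : ℂ) * Eθ (-(k:ℤ)) θ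
      = 2 * (Real.pi : ℂ) * u k := by
    have heq : (fun θ => ((2 * (φ θ).re : ℝ) : ℂ) * Eθ (-(k:ℤ)) θ)
        = fun θ => φ θ * Eθ (-(k:ℤ)) θ + (starRingEnd ℂ) (φ θ) * Eθ (-(k:ℤ)) θ := by
      funext θ
      rw [← add_mul, Complex.add_conj]
    rw [heq, integral_add (hintφ _) hintc, Lneg, Lconj, add_zero]
  have hφint : Integrable φ (volume.restrict S) := Continuous.integrableOn_Ioc hφc
  have hI : ∫ θ in S, 2 * (φ θ).re = 2 * (2 * Real.pi * (u 0).re) := by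
    have hre := integral_re hφint
    simp only [RCLike.re_to_complex] at hre
    rw [MeasureTheory.integral_const_mul, hre]
    have hφ0 : ∫ θ in S, φ θ = 2 * (Real.pi:ℂ) * u 0 := by
      have heq : (fun θ => φ θ) = fun θ => φ θ * Eθ 0 θ := by
        funext θ; simp [Eθ]
      rw [heq, L0]
    rw [hφ0]
    have h2 : (2 * (Real.pi:ℂ) * u 0) = ((2 * Real.pi : ℝ) : ℂ) * u 0 := by push_cast; ring
    rw [h2, Complex.re_ofReal_mul]
  have hbound : ‖∫ θ in S, ((2 * (φ θ).re : ℝ) : ℂ) * Eθ (-(k:ℤ)) θ‖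
      ≤ ∫ θ in S, 2 * (φ θ).re := by
    refine (norm_integral_le_integral_norm _).trans (le_of_eq ?_)
    congr 1
    funext θ
    rw [norm_mul, Eθ_norm, mul_one, Complex.norm_real, Real.norm_of_nonneg
      (by have := hpos θ; positivity)]
  rw [key, hI] at hbound
  have hnorm : ‖2 * (Real.pi : ℂ) * u k‖ = 2 * Real.pi * ‖u k‖ := by
    rw [norm_mul, norm_mul]
    simp [Complex.norm_real, Real.pi_nonneg]
  rw [hnorm] at hbound
  nlinarith [norm_nonneg (u k), Real.pi_pos]

/-- one derivative step: scalar power series for `deriv f` -/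
lemma deriv_step (f : ℂ → ℂ) (p : FormalMultilinearSeries ℂ ℂ ℂ)
    (hp : HasFPowerSeriesOnBall f p 0 1) :
    ∃ q : FormalMultilinearSeries ℂ ℂ ℂ,
      HasFPowerSeriesOnBall (deriv f) q 0 1 ∧
      ∀ k, q.coeff k = ((k:ℂ) + 1) * p.coeff (k+1) := by
  classical
  set L : (ℂ →L[ℂ] ℂ) →L[ℂ] ℂ := ContinuousLinearMap.apply ℂ ℂ (1:ℂ) with hL
  refine ⟨L.compFormalMultilinearSeries p.derivSeries, ?_, ?_⟩
  · have h1 : HasFPowerSeriesOnBall (fderiv ℂ f) p.derivSeries 0 1 := hp.fderiv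
    have h2 := L.comp_hasFPowerSeriesOnBall h1
    have h3 : (L ∘ fderiv ℂ f) = deriv f := by
      funext z; rfl
    rwa [h3] at h2
  · intro k
    have h4 : (L.compFormalMultilinearSeries p.derivSeries).coeff k
        = p.derivSeries k (fun _ => (1:ℂ)) 1 := rfl
    rw [h4, FormalMultilinearSeries.derivSeries_apply_diag]
    rw [FormalMultilinearSeries.apply_eq_pow_smul_coeff]
    simp

lemma exists_series (e : ℕ → ℂ) (f : ℂ → ℂ)
    (hf : ∀ z ∈ Metric.ball (0:ℂ) 1, HasSum (fun n => e n * z ^ n) (f z)) :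
    ∃ p : FormalMultilinearSeries ℂ ℂ ℂ,
      HasFPowerSeriesOnBall (deriv (deriv f)) p 0 1 ∧
      ∀ k, p.coeff k = ((k:ℂ) + 1) * ((k:ℂ) + 2) * e (k+2) := by
  classical
  set p0 : FormalMultilinearSeries ℂ ℂ ℂ :=
    fun n => ContinuousMultilinearMap.mkPiRing ℂ (Fin n) (e n) with hp0
  have hcoeff : ∀ n, p0.coeff n = e n := by
    intro n
    simp [hp0, FormalMultilinearSeries.coeff, ContinuousMultilinearMap.mkPiRing_apply]
  have hnorm : ∀ n, ‖p0 n‖ = ‖e n‖ := by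
    intro n
    rw [FormalMultilinearSeries.norm_apply_eq_norm_coef, hcoeff]
  have hrad : 1 ≤ p0.radius := by
    apply ENNReal.le_of_forall_nnreal_lt
    intro r hr
    have hr1 : (r : ℝ) < 1 := by exact_mod_cast hr
    have hball : ((r : ℝ) : ℂ) ∈ Metric.ball (0:ℂ) 1 := by
      simp [Complex.norm_real, _root_.abs_of_nonneg r.2, hr1]
    have hsum := (hf _ hball).summable
    have ht : Filter.Tendsto (fun n => ‖p0 n‖ * (r:ℝ) ^ n) Filter.atTop (nhds 0) := by
      have h0 := hsum.tendsto_atTop_zero.norm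
      rw [norm_zero] at h0
      have hnn : (fun n => ‖p0 n‖ * (r:ℝ)^n) = fun n => ‖e n * ((r:ℝ):ℂ)^n‖ := by
        funext n
        rw [norm_mul, hnorm, norm_pow, Complex.norm_real, NNReal.norm_eq]
      rw [hnn]
      exact h0
    exact p0.le_radius_of_tendsto ht
  have hball0 : HasFPowerSeriesOnBall f p0 0 1 := by
    refine ⟨hrad, one_pos, ?_⟩
    intro y hy
    have hy' : y ∈ Metric.ball (0:ℂ) 1 := by
      rw [← ENNReal.coe_one, Metric.eball_coe, NNReal.coe_one] at hy; exact hy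
    have := hf y hy'
    rw [zero_add]
    convert this using 1
    case e'_3 => rfl
    funext n
    simp [hp0, ContinuousMultilinearMap.mkPiRing_apply]
    ring
  obtain ⟨p1, hp1, hc1⟩ := deriv_step f p0 hball0
  obtain ⟨p2, hp2, hc2⟩ := deriv_step (deriv f) p1 hp1
  refine ⟨p2, hp2, fun k => ?_⟩
  rw [hc2, hc1, hcoeff]
  push_cast
  ring

lemma nu_exists (x y : ℂ) : ∃ ν : ℂ, ‖ν‖ = 1 ∧ ‖x + ν * y‖ = ‖x‖ + ‖y‖ := by
  by_cases hy : y = 0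
  · exact ⟨1, by simp, by simp [hy]⟩
  have hyy : (starRingEnd ℂ) y * y = ((‖y‖^2 : ℝ) : ℂ) := by
    rw [mul_comm, Complex.mul_conj, Complex.normSq_eq_norm_sq]
  have hy0 : ‖y‖ ≠ 0 := norm_ne_zero_iff.mpr hy
  have hy' : (‖y‖ : ℂ) ≠ 0 := by simpa [Complex.ofReal_ne_zero] using hy0
  have hconj : ‖(starRingEnd ℂ) y‖ = ‖y‖ := by
    simp
  by_cases hx : x = 0
  · refine ⟨(starRingEnd ℂ) y / (‖y‖ : ℝ), ?_, ?_⟩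
    · rw [norm_div]
      simp [hy]
    · rw [hx, zero_add, norm_zero, zero_add, div_mul_eq_mul_div, hyy, norm_div]
      simp only [Complex.norm_real, abs_norm, Real.norm_eq_abs,
        _root_.abs_of_nonneg (norm_nonneg y), _root_.abs_of_nonneg (sq_nonneg ‖y‖)]
      rw [pow_two, mul_div_assoc, div_self hy0, mul_one]
  · have hx0 : ‖x‖ ≠ 0 := norm_ne_zero_iff.mpr hx
    have hx' : (‖x‖ : ℂ) ≠ 0 := by simpa [Complex.ofReal_ne_zero] using hx0
    refine ⟨(x * (starRingEnd ℂ) y) / ((‖x‖ : ℂ) * (‖y‖ : ℂ)), ?_, ?_⟩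
    · rw [norm_div, norm_mul, norm_mul, hconj]
      simp only [Complex.norm_real, norm_norm]
      rw [div_self (mul_ne_zero hx0 hy0)]
    · have key : x + (x * (starRingEnd ℂ) y) / ((‖x‖ : ℂ) * (‖y‖ : ℂ)) * y
          = (((‖x‖ + ‖y‖)/‖x‖ : ℝ) : ℂ) * x := by
        rw [div_mul_eq_mul_div, mul_assoc, hyy, mul_div_assoc]
        have h2 : ((‖y‖^2:ℝ):ℂ) / ((‖x‖:ℂ) * (‖y‖:ℂ)) = (‖y‖:ℂ)/(‖x‖:ℂ) := by
          push_cast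
          rw [pow_two, mul_comm ((‖x‖:ℂ)), mul_div_mul_left _ _ hy']
        rw [h2, Complex.ofReal_div, Complex.ofReal_add, add_div, div_self hx']
        ring
      rw [key, norm_mul, Complex.norm_real, Real.norm_eq_abs,
        _root_.abs_of_nonneg (by positivity), div_mul_cancel₀ _ hx0]

lemma limit_le (X C : ℝ) (m : ℕ)
    (hb : ∀ r : ℝ, 0 < r → r < 1 → X * r ^ m ≤ C) : X ≤ C := by
  have h1 : Filter.Tendsto (fun j : ℕ => (1 - 1/((j:ℝ)+2) : ℝ)) Filter.atTop (nhds 1) := by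
    have h0 : Filter.Tendsto (fun j : ℕ => (1/((j:ℝ)+2) : ℝ)) Filter.atTop (nhds 0) := by
      exact tendsto_one_div_add_atTop_nhds_zero_nat.comp (Filter.tendsto_add_atTop_nat 1)
        |>.congr (fun j => by simp only [Function.comp]; push_cast; rw [one_div]; ring_nf)
    have := (tendsto_const_nhds (x := (1:ℝ)) (f := Filter.atTop (α := ℕ))).sub h0
    simpa using this
  have ht : Filter.Tendsto (fun j : ℕ => X * (1 - 1/((j:ℝ)+2)) ^ m) Filter.atTop (nhds X) := by
    have := (h1.pow m).const_mul X
    simpa using this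
  refine le_of_tendsto ht (Filter.Eventually.of_forall fun j => hb _ ?_ ?_)
  · have hj : (1:ℝ)/((j:ℝ)+2) ≤ 1/2 := by
      apply div_le_div_of_nonneg_left (by norm_num) (by norm_num)
      · push_cast; linarith [Nat.cast_nonneg (α := ℝ) j]
    have : (0:ℝ) < 1/((j:ℝ)+2) := by positivity
    linarith
  · have : (0:ℝ) < 1/((j:ℝ)+2) := by positivity
    linarith

lemma full_series_h (a : ℕ → ℂ) (h : ℂ → ℂ)
    (hh : ∀ z ∈ Metric.ball (0:ℂ) 1, HasSum (fun n : ℕ => a (n + 2) * z ^ (n + 2)) (h z - z)) :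
    ∀ z ∈ Metric.ball (0:ℂ) 1,
      HasSum (fun n : ℕ => (if n = 0 then 0 else if n = 1 then 1 else a n) * z ^ n) (h z) := by
  intro z hz
  set e : ℕ → ℂ := fun n => if n = 0 then 0 else if n = 1 then 1 else a n with he
  have hfun : (fun n : ℕ => e (n+2) * z ^ (n+2)) = fun n => a (n+2) * z^(n+2) := by
    funext n; simp [he]
  have h1 : HasSum (fun n => e (n+2) * z^(n+2)) (h z - z) := by rw [hfun]; exact hh z hz
  have h2 := (hasSum_nat_add_iff (f := fun n => e n * z ^ n) 2).mp h1
  have h3 : h z - z + ∑ i ∈ Finset.range 2, e i * z ^ i = h z := by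
    simp [he, Finset.sum_range_succ]
  rwa [h3] at h2

lemma full_series_g (b : ℕ → ℂ) (g : ℂ → ℂ)
    (hg : ∀ z ∈ Metric.ball (0:ℂ) 1, HasSum (fun n : ℕ => b (n + 2) * z ^ (n + 2)) (g z)) :
    ∀ z ∈ Metric.ball (0:ℂ) 1,
      HasSum (fun n : ℕ => (if n ≤ 1 then 0 else b n) * z ^ n) (g z) := by
  intro z hz
  set e : ℕ → ℂ := fun n => if n ≤ 1 then 0 else b n with he
  have hfun : (fun n : ℕ => e (n+2) * z ^ (n+2)) = fun n => b (n+2) * z^(n+2) := by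
    funext n; simp [he]
  have h1 : HasSum (fun n => e (n+2) * z^(n+2)) (g z) := by rw [hfun]; exact hg z hz
  have h2 := (hasSum_nat_add_iff (f := fun n => e n * z ^ n) 2).mp h1
  have h3 : g z + ∑ i ∈ Finset.range 2, e i * z ^ i = g z := by
    simp [he, Finset.sum_range_succ]
  rwa [h3] at h2

end Aux

/-- Euclidean distance from `f 0` to the boundary of `f(𝔻)`, defined as
`liminf_{|z| → 1⁻} |f z - f 0|`. -/
noncomputable def bdyDist (f : ℂ → ℂ) : ℝ :=
  Filter.liminf (fun z : ℂ => ‖f z - f 0‖)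
    (Filter.comap (fun z : ℂ => ‖z‖) (nhdsWithin 1 (Set.Iio 1)))

/-- `f = h + conj g` belongs to the class `P⁰_H(M)`:  `h z = z + ∑_{n≥2} a n * z^n`,
`g z = ∑_{n≥2} b n * z^n` on the unit disk, and `Re (z h''(z)) > -M + |z g''(z)|` there. -/
def PH0 (M : ℝ) (a b : ℕ → ℂ) (h g : ℂ → ℂ) : Prop :=
  (∀ z ∈ Metric.ball (0 : ℂ) 1,
      HasSum (fun n : ℕ => a (n + 2) * z ^ (n + 2)) (h z - z)) ∧
  (∀ z ∈ Metric.ball (0 : ℂ) 1,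
      HasSum (fun n : ℕ => b (n + 2) * z ^ (n + 2)) (g z)) ∧
  (∀ z ∈ Metric.ball (0 : ℂ) 1,
      -M + ‖z * deriv (deriv g) z‖ < (z * deriv (deriv h) z).re)

/-- Coefficient bound `|a_n| + |b_n| ≤ 2M/(n(n-1))` for `f ∈ P⁰_H(M)`. -/
theorem coeff_sum_bound (M : ℝ) (hM : 0 < M) (a b : ℕ → ℂ) (h g : ℂ → ℂ)
    (hf : PH0 M a b h g) (n : ℕ) (hn : 2 ≤ n) :
    ‖a n‖ + ‖b n‖ ≤ 2 * M / ((n : ℝ) * ((n : ℝ) - 1)) := by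
  obtain ⟨hh, hg, hineq⟩ := hf
  obtain ⟨P, hP, hPc⟩ := exists_series _ h (full_series_h a h hh)
  obtain ⟨Q, hQ, hQc⟩ := exists_series _ g (full_series_g b g hg)
  obtain ⟨ν, hν1, hνadd⟩ := nu_exists (a n) (b n)
  have main : ∀ r : ℝ, 0 < r → r < 1 →
      ((n:ℝ) * ((n:ℝ)-1) * (‖a n‖ + ‖b n‖)) * r ^ (n-1) ≤ 2*M := by
    intro r hr0 hr1
    set u : ℕ → ℂ := fun j => match j with
      | 0 => (M:ℂ)
      | (k+1) => (P.coeff k + ν * Q.coeff k) * (r:ℂ)^(k+1) with hu_def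
    have hrnn : ((r.toNNReal : ℝ)) = r := Real.coe_toNNReal r hr0.le
    have hrlt : (r.toNNReal : ENNReal) < 1 := by
      rw [← ENNReal.coe_one, ENNReal.coe_lt_coe, ← NNReal.coe_lt_coe, hrnn]
      exact hr1
    have hPsum : Summable (fun k => ‖P.coeff k‖ * r ^ k) := by
      have := P.summable_norm_mul_pow (r := r.toNNReal) (hrlt.trans_le hP.r_le)
      simpa [hrnn, FormalMultilinearSeries.norm_apply_eq_norm_coef] using this
    have hQsum : Summable (fun k => ‖Q.coeff k‖ * r ^ k) := by
      have := Q.summable_norm_mul_pow (r := r.toNNReal) (hrlt.trans_le hQ.r_le)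
      simpa [hrnn, FormalMultilinearSeries.norm_apply_eq_norm_coef] using this
    have husum : Summable (fun j => ‖u j‖) := by
      rw [← summable_nat_add_iff 1]
      refine Summable.of_nonneg_of_le (fun k => norm_nonneg _) (fun k => ?_) (hPsum.add hQsum)
      have h1 : ‖u (k+1)‖ = ‖P.coeff k + ν * Q.coeff k‖ * r^(k+1) := by
        rw [hu_def]
        simp only [norm_mul, norm_pow, Complex.norm_real, Real.norm_eq_abs,
          _root_.abs_of_nonneg hr0.le]
      rw [h1]
      have h2 : ‖P.coeff k + ν * Q.coeff k‖ ≤ ‖P.coeff k‖ + ‖Q.coeff k‖ := by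
        refine (norm_add_le _ _).trans ?_
        rw [norm_mul, hν1, one_mul]
      have h3 : r^(k+1) ≤ r^k := by
        rw [pow_succ]
        nlinarith [pow_nonneg hr0.le k, pow_pos hr0 k]
      nlinarith [norm_nonneg (P.coeff k + ν * Q.coeff k), pow_nonneg hr0.le k,
        pow_nonneg hr0.le (k+1), norm_nonneg (P.coeff k), norm_nonneg (Q.coeff k)]
    have hpos : ∀ θ : ℝ, 0 ≤ (∑' j, u j * Eθ j θ).re := by
      intro θ
      set z : ℂ := (r:ℂ) * Eθ 1 θ with hz_def
      have hznorm : ‖z‖ = r := by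
        rw [hz_def, norm_mul, Eθ_norm, mul_one, Complex.norm_real, Real.norm_eq_abs,
          _root_.abs_of_nonneg hr0.le]
      have hzmem : z ∈ Metric.ball (0:ℂ) 1 := by
        simp [Metric.mem_ball, dist_zero_right, hznorm, hr1]
      have hzE : z ∈ Metric.eball (0:ℂ) 1 := by
        rw [← ENNReal.coe_one, Metric.eball_coe, NNReal.coe_one]; exact hzmem
      have hzpow : ∀ m : ℕ, z ^ m = ((r:ℂ)^m) * Eθ m θ := by
        intro m
        rw [hz_def, mul_pow]
        congr 1
        rw [Eθ, Eθ, ← Complex.exp_nat_mul]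
        congr 1
        push_cast
        ring
      have hsh : HasSum (fun k => z * (z ^ k • P.coeff k)) (z * deriv (deriv h) z) := by
        have h0 := hP.hasSum hzE
        rw [zero_add] at h0
        have h1 : (fun k => P k fun _ => z) = fun k => z ^ k • P.coeff k := by
          funext k; rw [FormalMultilinearSeries.apply_eq_pow_smul_coeff]
        rw [h1] at h0
        exact h0.mul_left z
      have hsg : HasSum (fun k => ν * (z * (z ^ k • Q.coeff k)))
          (ν * (z * deriv (deriv g) z)) := by
        have h0 := hQ.hasSum hzE
        rw [zero_add] at h0
        have h1 : (fun k => Q k fun _ => z) = fun k => z ^ k • Q.coeff k := by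
          funext k; rw [FormalMultilinearSeries.apply_eq_pow_smul_coeff]
        rw [h1] at h0
        exact (h0.mul_left z).mul_left ν
      have hsum2 : HasSum (fun k => u (k+1) * Eθ (k+1) θ)
          (z * deriv (deriv h) z + ν * (z * deriv (deriv g) z)) := by
        have hadd := hsh.add hsg
        have hfun2 : (fun k => z * (z ^ k • P.coeff k) + ν * (z * (z ^ k • Q.coeff k)))
            = fun k => u (k+1) * Eθ (k+1) θ := by
          funext k
          show z * (z ^ k • P.coeff k) + ν * (z * (z ^ k • Q.coeff k))
            = (P.coeff k + ν * Q.coeff k) * (r:ℂ)^(k+1) * Eθ (↑(k+1)) θ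
          simp only [smul_eq_mul]
          rw [mul_assoc (P.coeff k + ν * Q.coeff k) ((r:ℂ)^(k+1)) (Eθ (↑(k+1)) θ),
            ← hzpow (k+1)]
          ring
        exact hfun2 ▸ hadd
      have hsum3 := (hasSum_nat_add_iff (f := fun j => u j * Eθ j θ) 1).mp hsum2
      have hval : (z * deriv (deriv h) z + ν * (z * deriv (deriv g) z))
          + ∑ i ∈ Finset.range 1, u i * Eθ i θ
          = z * deriv (deriv h) z + ν * (z * deriv (deriv g) z) + (M:ℂ) := by
        simp [hu_def, Eθ]
      rw [hval] at hsum3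
      rw [hsum3.tsum_eq]
      have hlow := hineq z hzmem
      have hre : (z * deriv (deriv h) z + ν * (z * deriv (deriv g) z) + (M:ℂ)).re
          = (z * deriv (deriv h) z).re + (ν * (z * deriv (deriv g) z)).re + M := by
        simp [Complex.add_re, Complex.ofReal_re]
      rw [hre]
      have habs : -(‖z * deriv (deriv g) z‖)
          ≤ (ν * (z * deriv (deriv g) z)).re := by
        have h5 := Complex.abs_re_le_norm (ν * (z * deriv (deriv g) z))
        have h6 : ‖ν * (z * deriv (deriv g) z)‖
            = ‖z * deriv (deriv g) z‖ := by
          rw [norm_mul, hν1, one_mul]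
        rw [h6] at h5
        have h7 := neg_abs_le ((ν * (z * deriv (deriv g) z)).re)
        linarith
      linarith
    have hcore := caratheodory_core u husum hpos (n-1) (by omega)
    have hn2 : n - 1 = (n - 2) + 1 := by omega
    have hu0 : (u 0).re = M := by simp [hu_def]
    have hnn : (0:ℝ) ≤ (n:ℝ) * ((n:ℝ)-1) := by
      have h2n : (2:ℝ) ≤ (n:ℝ) := by exact_mod_cast hn
      nlinarith
    have hPcoeff : P.coeff (n-2) + ν * Q.coeff (n-2)
        = (((n:ℝ) * ((n:ℝ)-1) : ℝ) : ℂ) * (a n + ν * b n) := by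
      rw [hPc, hQc]
      have he2 : (n-2) + 2 = n := by omega
      rw [he2]
      have hc2 : ((n-2 : ℕ) : ℂ) = (n:ℂ) - 2 := by
        push_cast [Nat.cast_sub hn]
        ring
      rw [hc2, if_neg (show ¬n = 0 by omega), if_neg (show ¬n = 1 by omega),
        if_neg (show ¬n ≤ 1 by omega)]
      push_cast
      ring
    have huval : ‖u (n-1)‖
        = (n:ℝ)*((n:ℝ)-1) * (‖a n‖ + ‖b n‖) * r^(n-1) := by
      rw [hn2]
      show ‖(P.coeff (n-2) + ν * Q.coeff (n-2)) * (r:ℂ)^((n-2)+1)‖ = _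
      rw [hPcoeff, norm_mul, norm_mul, Complex.norm_real, Real.norm_eq_abs,
        _root_.abs_of_nonneg hnn, norm_pow, Complex.norm_real, Real.norm_eq_abs,
        _root_.abs_of_nonneg hr0.le, hνadd]
    rw [huval, hu0] at hcore
    calc ((n:ℝ) * ((n:ℝ)-1) * (‖a n‖ + ‖b n‖)) * r ^ (n-1)
        = (n:ℝ)*((n:ℝ)-1) * (‖a n‖ + ‖b n‖) * r^(n-1) := by ring
      _ ≤ 2*M := hcore
  have hfinal := limit_le _ (2*M) (n-1) main
  have hpos' : (0:ℝ) < (n:ℝ) * ((n:ℝ)-1) := by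
    have h2n : (2:ℝ) ≤ (n:ℝ) := by exact_mod_cast hn
    nlinarith
  rw [le_div_iff₀ hpos']
  nlinarith [hfinal]
end

section
/- Let M > 0 and let f = h + conj(g) belong to the class P⁰_H(M), with power series h(z) = z + Σ_{n=2}^∞ a_n zⁿ and g(z) = Σ_{n=2}^∞ b_n zⁿ. Then for every integer n ≥ 2 one has | |a_n| − |b_n| | ≤ 2M/(n(n−1)). -/
open Filter MeasureTheory

open FormalMultilinearSeries Finset Complex


/-- Helper: build `HasFPowerSeriesOnBall` on the unit ball from pointwise `HasSum`. -/
lemma hasFPSOB_of_hasSum (c : ℕ → ℂ) (F : ℂ → ℂ)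
    (hF : ∀ z ∈ Metric.ball (0:ℂ) 1, HasSum (fun n => c n * z ^ n) (F z)) :
    HasFPowerSeriesOnBall F (FormalMultilinearSeries.ofScalars ℂ c) 0 1 := by
  constructor
  · -- 1 ≤ radius
    refine ENNReal.le_of_forall_nnreal_lt fun r hr => ?_
    have hr1 : (r : ℝ) < 1 := by exact_mod_cast hr
    have hz : (r : ℂ) ∈ Metric.ball (0:ℂ) 1 := by
      simp [_root_.abs_of_nonneg r.coe_nonneg, hr1]
    have hs : Summable fun n => c n * (r : ℂ) ^ n := (hF _ hz).summable
    have ht : Filter.Tendsto (fun n => ‖c n * (r : ℂ) ^ n‖) atTop (nhds 0) := by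
      simpa using (hs.tendsto_atTop_zero.norm)
    obtain ⟨C, hC⟩ := ht.bddAbove_range
    refine FormalMultilinearSeries.le_radius_of_bound _ C fun n => ?_
    have h1 : ‖ofScalars ℂ c n‖ * (r:ℝ) ^ n = ‖c n * (r : ℂ) ^ n‖ := by
      rw [ofScalars_norm]
      simp [_root_.abs_of_nonneg r.coe_nonneg]
    rw [h1]
    exact hC ⟨n, rfl⟩
  · exact one_pos
  · intro y hy
    have hy' : y ∈ Metric.ball (0:ℂ) 1 := by
      rw [← NNReal.coe_one, ← Metric.eball_coe, ENNReal.coe_one]; exact hy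
    have h2 := hF y hy'
    have h3 : ∀ n, ofScalars ℂ c n (fun _ => y) = c n * y ^ n := fun n => by
      rw [ofScalars_apply_eq, smul_eq_mul]
    simpa [h3] using h2

/-- Termwise derivative of a power series on the unit ball. -/
lemma hasSum_deriv_of_hasSum (c : ℕ → ℂ) (F : ℂ → ℂ)
    (hF : ∀ z ∈ Metric.ball (0:ℂ) 1, HasSum (fun n => c n * z ^ n) (F z)) :
    ∀ z ∈ Metric.ball (0:ℂ) 1,
      HasSum (fun n : ℕ => ((n:ℂ)+1) * c (n+1) * z ^ n) (deriv F z) := by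
  intro z hz
  have hball := hasFPSOB_of_hasSum c F hF
  have hd := hball.fderiv
  have hz' : z ∈ Metric.eball (0:ℂ) 1 := by
    rw [← ENNReal.coe_one, Metric.eball_coe, NNReal.coe_one]; exact hz
  have hsum := hd.hasSum hz'
  rw [zero_add] at hsum
  have hsum1 := hsum.mapL (ContinuousLinearMap.apply ℂ ℂ (1:ℂ))
  have hterm : ∀ n, (ofScalars ℂ c).derivSeries n (fun _ => z) 1
      = ((n:ℂ)+1) * c (n+1) * z ^ n := by
    intro n
    have hdiag := (ofScalars ℂ c).derivSeries_apply_diag n z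
    rw [ofScalars_apply_eq, smul_eq_mul] at hdiag
    rcases eq_or_ne z 0 with rfl | hz0
    · rcases Nat.eq_zero_or_pos n with rfl | hn
      · have hone := (ofScalars ℂ c).derivSeries_apply_diag 0 1
        rw [ofScalars_apply_eq, smul_eq_mul] at hone
        have harg : (fun _ : Fin 0 => (0:ℂ)) = (fun _ : Fin 0 => (1:ℂ)) := by
          funext i; exact absurd i.2 (by simp)
        rw [harg, hone]
        norm_num
      · have h0 : (ofScalars ℂ c).derivSeries n (fun _ : Fin n => (0:ℂ)) = 0 :=
          ContinuousMultilinearMap.map_coord_zero _ ⟨0, hn⟩ rfl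
        rw [h0]
        have : n ≠ 0 := hn.ne'
        simp [zero_pow this]
    · -- z ≠ 0: use linearity of the CLM
      have hlin : (ofScalars ℂ c).derivSeries n (fun _ => z) z
          = z * (ofScalars ℂ c).derivSeries n (fun _ => z) 1 := by
        have := ((ofScalars ℂ c).derivSeries n (fun _ => z)).map_smul z 1
        simpa [smul_eq_mul] using this
      have key : z * (ofScalars ℂ c).derivSeries n (fun _ => z) 1
          = (n+1 : ℕ) • (c (n+1) * z ^ (n+1)) := by rw [← hlin, hdiag]
      apply mul_left_cancel₀ hz0
      rw [key, nsmul_eq_mul]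
      push_cast
      ring
  have : (fun n : ℕ => (ContinuousLinearMap.apply ℂ ℂ (1:ℂ)) ((ofScalars ℂ c).derivSeries n (fun _ => z)))
      = fun n : ℕ => ((n:ℂ)+1) * c (n+1) * z ^ n := by
    funext n; simpa using hterm n
  rw [this] at hsum1
  have h4 : (ContinuousLinearMap.apply ℂ ℂ (1:ℂ)) (fderiv ℂ F z) = deriv F z := fderiv_apply_one_eq_deriv
  rwa [h4] at hsum1

/-- existence of k-th roots in the unit disk -/
lemma exists_root (k : ℕ) (hk : 1 ≤ k) (w : ℂ) (hw : ‖w‖ < 1) :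
    ∃ z : ℂ, ‖z‖ < 1 ∧ z ^ k = w := by
  refine ⟨((‖w‖ ^ (1/(k:ℝ)) : ℝ) : ℂ) * Complex.exp (Complex.arg w * Complex.I / k),
    ?_, ?_⟩
  · rw [norm_mul, Complex.norm_exp]
    have : ((Complex.arg w * Complex.I / k)).re = 0 := by
      simp [Complex.div_re]
    rw [this, Real.exp_zero, mul_one]
    rw [Complex.norm_of_nonneg (Real.rpow_nonneg (norm_nonneg w) _)]
    exact Real.rpow_lt_one (norm_nonneg w) hw (by positivity)
  · rw [mul_pow, ← Complex.exp_nat_mul]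
    have h1 : (((‖w‖ ^ (1/(k:ℝ)) : ℝ) : ℂ)) ^ k
        = ((‖w‖ : ℝ) : ℂ) := by
      rw [← Complex.ofReal_pow]
      congr 1
      rw [← Real.rpow_natCast (‖w‖ ^ (1/(k:ℝ))) k, ← Real.rpow_mul (norm_nonneg w)]
      rw [one_div, inv_mul_cancel₀ (by positivity : (k:ℝ) ≠ 0)]
      exact Real.rpow_one _
    have hk0 : (k : ℂ) ≠ 0 := by exact_mod_cast (Nat.one_le_iff_ne_zero.mp hk)
    have h2 : (k : ℂ) * (Complex.arg w * Complex.I / k) = Complex.arg w * Complex.I := by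
      field_simp
    rw [h1, h2, Complex.norm_mul_exp_arg_mul_I]

/-- root of unity averaging sum -/
lemma root_sum (k : ℕ) (hk : 1 ≤ k) (m : ℕ) :
    (∑ j ∈ Finset.range k, (Complex.exp (2 * Real.pi * Complex.I / k)) ^ (m * j))
      = if k ∣ m then (k : ℂ) else 0 := by
  set ω := Complex.exp (2 * Real.pi * Complex.I / k) with hω
  have hprim : IsPrimitiveRoot ω k := Complex.isPrimitiveRoot_exp k (Nat.one_le_iff_ne_zero.mp hk)
  have hpow : ∀ j, ω ^ (m * j) = (ω ^ m) ^ j := fun j => pow_mul ω m j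
  simp_rw [hpow]
  by_cases hdvd : k ∣ m
  · have h1 : ω ^ m = 1 := by
      obtain ⟨t, rfl⟩ := hdvd
      rw [pow_mul, hprim.pow_eq_one, one_pow]
    simp [h1, hdvd]
  · have h1 : ω ^ m ≠ 1 := fun h => hdvd ((hprim.pow_eq_one_iff_dvd m).mp h)
    rw [geom_sum_eq h1, if_neg hdvd]
    have h2 : (ω ^ m) ^ k = 1 := by
      rw [← pow_mul, mul_comm, pow_mul, hprim.pow_eq_one, one_pow]
    rw [h2, sub_self, zero_div]

lemma avg_hasSum (k : ℕ) (hk : 1 ≤ k) (qc : ℕ → ℂ) (q : ℂ → ℂ)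
    (hqs : ∀ z ∈ Metric.ball (0:ℂ) 1, HasSum (fun m : ℕ => qc m * z ^ m) (q z))
    (z : ℂ) (hz : ‖z‖ < 1) :
    HasSum (fun j : ℕ => qc (j * k) * (z ^ k) ^ j)
      ((k:ℂ)⁻¹ * ∑ j ∈ Finset.range k, q ((Complex.exp (2 * Real.pi * Complex.I / k)) ^ j * z)) := by
  set ω := Complex.exp (2 * Real.pi * Complex.I / k) with hω
  have hωabs : ‖ω‖ = 1 := by
    rw [hω, Complex.norm_exp]
    norm_num [Complex.div_re]
  have hmem : ∀ j : ℕ, ω ^ j * z ∈ Metric.ball (0:ℂ) 1 := by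
    intro j
    simp only [Metric.mem_ball, dist_zero_right, norm_mul, norm_pow, hωabs,
      one_pow, one_mul]
    exact hz
  have h1 : HasSum (fun m : ℕ => ∑ j ∈ Finset.range k, qc m * (ω ^ j * z) ^ m)
      (∑ j ∈ Finset.range k, q (ω ^ j * z)) :=
    hasSum_sum fun j _ => hqs _ (hmem j)
  have h2 := h1.mul_left ((k:ℂ)⁻¹)
  have hk0 : (k : ℂ) ≠ 0 := by exact_mod_cast (Nat.one_le_iff_ne_zero.mp hk)
  have h3 : (fun m : ℕ => (k:ℂ)⁻¹ * ∑ j ∈ Finset.range k, qc m * (ω ^ j * z) ^ m)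
      = fun m : ℕ => if k ∣ m then qc m * z ^ m else 0 := by
    funext m
    have : ∀ j, qc m * (ω ^ j * z) ^ m = (qc m * z ^ m) * ω ^ (m * j) := by
      intro j
      rw [mul_pow, ← pow_mul, mul_comm j m]
      ring
    simp_rw [this, ← Finset.mul_sum, hω, root_sum k hk m]
    by_cases hdvd : k ∣ m
    · rw [if_pos hdvd, if_pos hdvd]
      field_simp
    · rw [if_neg hdvd, if_neg hdvd, mul_zero, mul_zero]
  rw [h3] at h2
  have hinj : Function.Injective (fun j : ℕ => j * k) := fun i j hij =>
    Nat.eq_of_mul_eq_mul_right (Nat.lt_of_lt_of_le Nat.zero_lt_one hk) hij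
  have hout : ∀ m : ℕ, m ∉ Set.range (fun j : ℕ => j * k) →
      (if k ∣ m then qc m * z ^ m else 0) = 0 := by
    intro m hm
    rw [if_neg]
    rintro ⟨t, rfl⟩
    exact hm ⟨t, by ring⟩
  have h4 := (hinj.hasSum_iff hout).mpr h2
  have h5 : (fun j : ℕ => qc (j * k) * (z ^ k) ^ j)
      = ((fun m => if k ∣ m then qc m * z ^ m else 0) ∘ fun j : ℕ => j * k) := by
    funext j
    simp only [Function.comp_apply]
    rw [if_pos ⟨j, mul_comm j k⟩, mul_comm j k, pow_mul]
  rw [h5]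
  exact h4

lemma carath (M : ℝ) (hM : 0 < M) (qc : ℕ → ℂ) (q : ℂ → ℂ) (k : ℕ) (hk : 1 ≤ k)
    (hq0 : qc 0 = (M : ℂ))
    (hqs : ∀ z ∈ Metric.ball (0:ℂ) 1, HasSum (fun m : ℕ => qc m * z ^ m) (q z))
    (hre : ∀ z ∈ Metric.ball (0:ℂ) 1, 0 < (q z).re) :
    ‖qc k‖ ≤ 2 * M := by
  have hk0 : (k:ℝ) ≠ 0 := by positivity
  set Qc : ℕ → ℂ := fun j => qc (j * k) with hQc
  set Q : ℂ → ℂ := fun w => ∑' j : ℕ, Qc j * w ^ j with hQdef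
  have key : ∀ w ∈ Metric.ball (0:ℂ) 1,
      HasSum (fun j : ℕ => Qc j * w ^ j) (Q w) ∧ 0 < (Q w).re := by
    intro w hw
    rw [Metric.mem_ball, dist_zero_right] at hw
    obtain ⟨z, hz, hzk⟩ := exists_root k hk w hw
    have hs := avg_hasSum k hk qc q hqs z hz
    rw [hzk] at hs
    have h1 : HasSum (fun j : ℕ => Qc j * w ^ j) (Q w) := hs.summable.hasSum
    refine ⟨h1, ?_⟩
    have hQw := h1.unique hs
    rw [hQw]
    have hcast : ((k:ℂ))⁻¹ = (((k:ℝ)⁻¹ : ℝ) : ℂ) := by push_cast; ring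
    rw [hcast, Complex.re_ofReal_mul]
    apply mul_pos (by positivity)
    rw [Complex.re_sum]
    apply Finset.sum_pos
    · intro j _
      apply hre
      rw [Metric.mem_ball, dist_zero_right, norm_mul, norm_pow]
      have : ‖Complex.exp (2 * Real.pi * Complex.I / k)‖ = 1 := by
        rw [Complex.norm_exp]; norm_num [Complex.div_re]
      rw [this, one_pow, one_mul]
      exact hz
    · exact Finset.nonempty_range_iff.mpr (Nat.one_le_iff_ne_zero.mp hk)
  have h0mem : (0:ℂ) ∈ Metric.ball (0:ℂ) 1 := by simp
  have hQ0 : Q 0 = (M:ℂ) := by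
    have h1 := (key 0 h0mem).1
    have h2 : HasSum (fun j : ℕ => Qc j * (0:ℂ) ^ j) (Qc 0) := by
      have := hasSum_single (f := fun j : ℕ => Qc j * (0:ℂ) ^ j) 0
        (fun b hb => by simp [zero_pow hb])
      simpa using this
    rw [h1.unique h2]
    simpa [hQc] using hq0
  have hQball := hasFPSOB_of_hasSum Qc Q (fun w hw => (key w hw).1)
  have hderivQ : deriv Q 0 = qc k := by
    have h1 := hQball.hasFPowerSeriesAt.deriv
    rw [h1, ofScalars_apply_eq]
    simp [hQc]
  have hsub : Metric.ball (0:ℂ) 1 ⊆ Metric.eball 0 1 := fun w hw => by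
    rw [← ENNReal.coe_one, Metric.eball_coe, NNReal.coe_one]; exact hw
  have hDQ : DifferentiableOn ℂ Q (Metric.ball (0:ℂ) 1) :=
    hQball.differentiableOn.mono hsub
  set φ : ℂ → ℂ := fun w => (Q w - M) * (Q w + M)⁻¹ with hφ
  have hden : ∀ w ∈ Metric.ball (0:ℂ) 1, Q w + (M:ℂ) ≠ 0 := by
    intro w hw hcon
    have h1 := (key w hw).2
    have h2 : (Q w + (M:ℂ)).re = 0 := by rw [hcon]; simp
    rw [Complex.add_re, Complex.ofReal_re] at h2
    linarith
  have hmaps : Set.MapsTo φ (Metric.ball (0:ℂ) 1) (Metric.ball (0:ℂ) 1) := by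
    intro w hw
    have hrepos := (key w hw).2
    have hlt : ‖Q w - M‖ < ‖Q w + M‖ := by
      rw [Complex.norm_def, Complex.norm_def]
      apply Real.sqrt_lt_sqrt (Complex.normSq_nonneg _)
      simp only [Complex.normSq_apply, Complex.sub_re, Complex.add_re, Complex.sub_im,
        Complex.add_im, Complex.ofReal_re, Complex.ofReal_im]
      nlinarith
    have habs : ‖Q w + M‖ ≠ 0 := by
      simpa using hden w hw
    rw [Metric.mem_ball, dist_zero_right, hφ]
    simp only [norm_mul, norm_inv]
    rw [mul_inv_lt_iff₀ (lt_of_le_of_ne (norm_nonneg _) (Ne.symm habs)), one_mul]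
    exact hlt
  have hdiff : DifferentiableOn ℂ φ (Metric.ball (0:ℂ) 1) :=
    (hDQ.sub_const _).mul ((hDQ.add_const _).inv hden)
  have hφ0 : φ 0 = 0 := by
    rw [hφ]; simp [hQ0]
  have hschwarz := Complex.norm_deriv_le_one_of_mapsTo_ball hdiff
    (by rw [hφ0]; exact hmaps.mono_right Metric.ball_subset_closedBall) one_pos
  have hQat : DifferentiableAt ℂ Q 0 :=
    hDQ.differentiableAt (Metric.isOpen_ball.mem_nhds h0mem)
  have hQd : HasDerivAt Q (qc k) 0 := hderivQ ▸ hQat.hasDerivAt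
  have hφd : HasDerivAt φ ((qc k) * ((Q 0 + M)⁻¹) + (Q 0 - M) * (-(qc k) / (Q 0 + M) ^ 2)) 0 :=
    (hQd.sub_const _).mul ((hQd.add_const _).inv (hden 0 h0mem))
  have hval : deriv φ 0 = qc k * ((2 * M : ℂ))⁻¹ := by
    rw [hφd.deriv, hQ0]
    ring_nf
  rw [hval] at hschwarz
  have h2M : ‖((2 * M : ℂ))⁻¹‖ = (2 * M)⁻¹ := by
    rw [norm_inv]
    congr 1
    simpa using Complex.norm_of_nonneg (by positivity : (0:ℝ) ≤ 2 * M)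
  rw [norm_mul, h2M] at hschwarz
  have hfin := mul_le_mul_of_nonneg_right hschwarz (by positivity : (0:ℝ) ≤ 2*M)
  rw [mul_assoc, inv_mul_cancel₀ (by positivity : (2*M:ℝ) ≠ 0), mul_one, one_mul] at hfin
  exact hfin

/-- Coefficient bound `||a_n| - |b_n|| ≤ 2M/(n(n-1))` for `f ∈ P⁰_H(M)`. -/
theorem coeff_diff_bound (M : ℝ) (hM : 0 < M) (a b : ℕ → ℂ) (h g : ℂ → ℂ)
    (hf : PH0 M a b h g) (n : ℕ) (hn : 2 ≤ n) :
    |‖a n‖ - ‖b n‖| ≤ 2 * M / ((n : ℝ) * ((n : ℝ) - 1)) := by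
  obtain ⟨ha, hb, hineq⟩ := hf
  set c : ℕ → ℂ := fun m => if m = 0 then 0 else if m = 1 then 1 else a m with hc
  set d : ℕ → ℂ := fun m => if m < 2 then 0 else b m with hd
  -- full power series for h and g
  have hcsum : ∀ z ∈ Metric.ball (0:ℂ) 1, HasSum (fun m : ℕ => c m * z ^ m) (h z) := by
    intro z hz
    have h1 := ha z hz
    have h2 : (fun n : ℕ => a (n+2) * z ^ (n+2)) = fun n : ℕ => c (n+2) * z ^ (n+2) := by
      funext m; simp [hc]
    rw [h2] at h1
    have h3 : ∑ i ∈ Finset.range 2, c i * z ^ i = z := by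
      simp [Finset.sum_range_succ, hc]
    rw [← hasSum_nat_add_iff' 2, h3]
    exact h1
  have hdsum : ∀ z ∈ Metric.ball (0:ℂ) 1, HasSum (fun m : ℕ => d m * z ^ m) (g z) := by
    intro z hz
    have h1 := hb z hz
    have h2 : (fun n : ℕ => b (n+2) * z ^ (n+2)) = fun n : ℕ => d (n+2) * z ^ (n+2) := by
      funext m; simp [hd]
    rw [h2] at h1
    have h3 : ∑ i ∈ Finset.range 2, d i * z ^ i = 0 := by
      simp [Finset.sum_range_succ, hd]
    rw [← hasSum_nat_add_iff' 2, h3, sub_zero]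
    exact h1
  -- second derivatives termwise
  have hu : ∀ z ∈ Metric.ball (0:ℂ) 1,
      HasSum (fun m : ℕ => ((m:ℂ)+1)*((m:ℂ)+2)*c (m+2)*z^m) (deriv (deriv h) z) := by
    intro z hz
    have h1 := hasSum_deriv_of_hasSum c h hcsum
    have h2 := hasSum_deriv_of_hasSum (fun m : ℕ => ((m:ℂ)+1) * c (m+1)) (deriv h) h1 z hz
    convert h2 using 1
    funext m
    push_cast
    ring
  have hv : ∀ z ∈ Metric.ball (0:ℂ) 1,
      HasSum (fun m : ℕ => ((m:ℂ)+1)*((m:ℂ)+2)*d (m+2)*z^m) (deriv (deriv g) z) := by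
    intro z hz
    have h1 := hasSum_deriv_of_hasSum d g hdsum
    have h2 := hasSum_deriv_of_hasSum (fun m : ℕ => ((m:ℂ)+1) * d (m+1)) (deriv g) h1 z hz
    convert h2 using 1
    funext m
    push_cast
    ring
  -- the rotation ε
  set α : ℂ := if a n = 0 then 1 else a n / (‖a n‖ : ℂ) with hα
  set β : ℂ := if b n = 0 then 1 else b n / (‖b n‖ : ℂ) with hβ
  have hαa : a n = α * (‖a n‖ : ℂ) := by
    by_cases h0 : a n = 0
    · simp [hα, h0]
    · have : ‖a n‖ ≠ 0 := by simpa using h0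
      rw [hα, if_neg h0, div_mul_cancel₀ _ (by exact_mod_cast this)]
  have hβb : b n = β * (‖b n‖ : ℂ) := by
    by_cases h0 : b n = 0
    · simp [hβ, h0]
    · have : ‖b n‖ ≠ 0 := by simpa using h0
      rw [hβ, if_neg h0, div_mul_cancel₀ _ (by exact_mod_cast this)]
  have hαabs : ‖α‖ = 1 := by
    by_cases h0 : a n = 0
    · simp [hα, h0]
    · have h1 : ‖a n‖ ≠ 0 := by simpa using h0
      simp [hα, h0, norm_div, Complex.norm_real, Real.norm_eq_abs, _root_.abs_of_nonneg (norm_nonneg _),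
        div_self h1]
  have hβabs : ‖β‖ = 1 := by
    by_cases h0 : b n = 0
    · simp [hβ, h0]
    · have h1 : ‖b n‖ ≠ 0 := by simpa using h0
      simp [hβ, h0, norm_div, Complex.norm_real, Real.norm_eq_abs, _root_.abs_of_nonneg (norm_nonneg _),
        div_self h1]
  set ε : ℂ := -α * (starRingEnd ℂ) β with hε
  have hεabs : ‖ε‖ = 1 := by
    rw [hε, norm_mul]
    simp [hαabs, hβabs]
  have hεkey : ‖a n + ε * b n‖
      = |‖a n‖ - ‖b n‖| := by
    have h1 : a n + ε * b n = α * ((‖a n‖ : ℂ) - (‖b n‖ : ℂ)) := by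
      rw [hε]
      conv_lhs => rw [hαa, hβb]
      have h2 : (starRingEnd ℂ) β * β = 1 := by
        rw [mul_comm, Complex.mul_conj]
        rw [Complex.normSq_eq_norm_sq, hβabs]
        norm_num
      calc α * (‖a n‖ : ℂ) + -α * (starRingEnd ℂ) β * (β * (‖b n‖ : ℂ))
          = α * (‖a n‖ : ℂ) - α * ((starRingEnd ℂ) β * β) * (‖b n‖ : ℂ) := by
            ring
        _ = α * ((‖a n‖ : ℂ) - (‖b n‖ : ℂ)) := by rw [h2]; ring
    rw [h1, norm_mul, hαabs, one_mul, ← Complex.ofReal_sub, Complex.norm_real, Real.norm_eq_abs]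
  -- the function q and its series
  set k : ℕ := n - 1 with hkdef
  have hk : 1 ≤ k := by omega
  set qc : ℕ → ℂ := fun m => if m = 0 then (M:ℂ)
      else (m:ℂ) * ((m:ℂ)+1) * (c (m+1) + ε * d (m+1)) with hqc
  set q : ℂ → ℂ := fun z =>
      (M:ℂ) + (z * deriv (deriv h) z + ε * (z * deriv (deriv g) z)) with hq
  have hqs : ∀ z ∈ Metric.ball (0:ℂ) 1, HasSum (fun m : ℕ => qc m * z ^ m) (q z) := by
    intro z hz
    have h1 := ((hu z hz).mul_left z).add ((hv z hz).mul_left (ε * z))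
    rw [← hasSum_nat_add_iff' 1]
    have h2 : ∑ i ∈ Finset.range 1, qc i * z ^ i = (M:ℂ) := by simp [hqc]
    rw [h2]
    have h3 : (fun m : ℕ => qc (m+1) * z^(m+1)) = fun m : ℕ =>
        z * (((m:ℂ)+1) * ((m:ℂ)+2) * c (m+2) * z^m)
          + ε * z * (((m:ℂ)+1) * ((m:ℂ)+2) * d (m+2) * z^m) := by
      funext m
      have hne : (m + 1 : ℕ) ≠ 0 := Nat.succ_ne_zero m
      rw [hqc]
      simp only [hne, if_false]
      push_cast
      ring
    have h4 : q z - (M:ℂ) = z * deriv (deriv h) z + ε * z * deriv (deriv g) z := by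
      rw [hq]; ring
    rw [h3, h4]
    exact h1
  have hre : ∀ z ∈ Metric.ball (0:ℂ) 1, 0 < (q z).re := by
    intro z hz
    have h1 := hineq z hz
    rw [hq]
    simp only [Complex.add_re, Complex.ofReal_re]
    have h2 : -(‖z * deriv (deriv g) z‖) ≤ (ε * (z * deriv (deriv g) z)).re := by
      have h3 := Complex.abs_re_le_norm (ε * (z * deriv (deriv g) z))
      rw [norm_mul, hεabs, one_mul] at h3
      linarith [(abs_le.mp h3).1]
    linarith
  have hbound := carath M hM qc q k hk (by simp [hqc]) hqs hre
  -- unravel qc k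
  have hk1 : k + 1 = n := by omega
  have hck : c (k+1) = a n := by
    rw [hk1, hc]
    simp only []
    rw [if_neg (by omega), if_neg (by omega)]
  have hdk : d (k+1) = b n := by
    rw [hk1, hd]
    simp only []
    rw [if_neg (by omega)]
  have hqck : qc k = (k:ℂ) * ((k:ℂ)+1) * (a n + ε * b n) := by
    rw [hqc]
    simp only [if_neg (by omega : ¬ k = 0)]
    rw [hck, hdk]
  have habs : ‖qc k‖
      = (k:ℝ) * ((k:ℝ)+1) * |‖a n‖ - ‖b n‖| := by
    rw [hqck, norm_mul, norm_mul, hεkey]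
    have c1 : ‖(k:ℂ)‖ = (k:ℝ) := by
      rw [Complex.norm_natCast]
    have c2 : ‖(k:ℂ)+1‖ = (k:ℝ)+1 := by
      have : ((k:ℂ)+1) = (((k:ℝ)+1 : ℝ) : ℂ) := by push_cast; ring
      rw [this, Complex.norm_real, Real.norm_eq_abs, _root_.abs_of_nonneg (by positivity)]
    rw [c1, c2]
  rw [habs] at hbound
  have hcast : (k:ℝ) * ((k:ℝ)+1) = (n:ℝ) * ((n:ℝ)-1) := by
    have : (k:ℝ) = (n:ℝ) - 1 := by
      rw [hkdef]
      push_cast [Nat.cast_sub (by omega : 1 ≤ n)]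
      ring
    rw [this]
    ring
  rw [hcast] at hbound
  have hpos : (0:ℝ) < (n:ℝ) * ((n:ℝ)-1) := by
    have h2 : (2:ℝ) ≤ (n:ℝ) := by exact_mod_cast hn
    nlinarith
  rw [le_div_iff₀ hpos]
  linarith [hbound]
end

section
/- Let M > 0 and let f = h + conj(g) belong to the class P⁰_H(M), with power series h(z) = z + Σ_{n=2}^∞ a_n zⁿ and g(z) = Σ_{n=2}^∞ b_n zⁿ. Then for every integer n ≥ 2 one has |a_n| ≤ 2M/(n(n−1)). -/
open Filter MeasureTheory

lemma summable_geom_sq {x : ℝ} (h0 : 0 ≤ x) (h1 : x < 1) :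
    Summable (fun m : ℕ => ((m:ℝ)+2)*((m:ℝ)+1) * x^m) := by
  have hx : ‖x‖ < 1 := by rwa [Real.norm_eq_abs, abs_of_nonneg h0]
  have h2 : Summable (fun m : ℕ => (m:ℝ)^2 * x^m) :=
    summable_pow_mul_geometric_of_norm_lt_one 2 hx
  have h3 : Summable (fun m : ℕ => (m:ℝ)^1 * x^m) :=
    summable_pow_mul_geometric_of_norm_lt_one 1 hx
  have h4 : Summable (fun m : ℕ => x^m) := summable_geometric_of_lt_one h0 h1
  have := (h2.add (h3.mul_left 3)).add (h4.mul_left 2)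
  refine this.congr fun m => ?_
  ring

lemma summable_main (a : ℕ → ℂ) {ρ : ℝ}
    (hs : Summable (fun m : ℕ => a (m+2) * (ρ:ℂ)^(m+2))) {r : ℝ} (h0 : 0 ≤ r) (hrρ : r < ρ) :
    Summable (fun m : ℕ => ((m:ℝ)+2)*((m:ℝ)+1) * ‖a (m+2)‖ * r^m) := by
  have hρ0 : 0 < ρ := lt_of_le_of_lt h0 hrρ
  have htend : Filter.Tendsto (fun m : ℕ => ‖a (m+2)‖ * ρ^(m+2)) atTop (nhds 0) := by
    have := hs.tendsto_atTop_zero.norm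
    simp only [norm_zero] at this
    refine this.congr fun m => ?_
    rw [norm_mul, norm_pow, Complex.norm_real,
      Real.norm_eq_abs, abs_of_nonneg hρ0.le]
  obtain ⟨C, hC⟩ := htend.bddAbove_range
  have hCb : ∀ m : ℕ, ‖a (m+2)‖ * ρ^(m+2) ≤ C := fun m =>
    hC (Set.mem_range_self m)
  have hC0 : 0 ≤ C := le_trans (by positivity) (hCb 0)
  have hsum : Summable (fun m : ℕ => (C/ρ^2) * (((m:ℝ)+2)*((m:ℝ)+1) * (r/ρ)^m)) :=
    (summable_geom_sq (by positivity) (by rw [div_lt_one hρ0]; exact hrρ)).mul_left _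
  refine Summable.of_nonneg_of_le (fun m => by positivity) (fun m => ?_) hsum
  have hab : ‖a (m+2)‖ ≤ C / ρ^(m+2) := by
    rw [le_div_iff₀ (by positivity)]
    exact hCb m
  calc ((m:ℝ)+2)*((m:ℝ)+1) * ‖a (m+2)‖ * r^m
      ≤ ((m:ℝ)+2)*((m:ℝ)+1) * (C / ρ^(m+2)) * r^m := by gcongr
    _ = (C/ρ^2) * (((m:ℝ)+2)*((m:ℝ)+1) * (r/ρ)^m) := by
        rw [div_pow]
        field_simp
        ring

lemma I1 (j : ℤ) :
    (∫ θ in (0:ℝ)..(2*Real.pi), Complex.exp (j * θ * Complex.I)) =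
      if j = 0 then ((2*Real.pi : ℝ) : ℂ) else 0 := by
  by_cases hj : j = 0
  · simp [hj]
  · rw [if_neg hj]
    have e : ∀ θ : ℝ, Complex.exp ((j : ℂ) * θ * Complex.I)
        = Complex.exp (((j : ℂ) * Complex.I) * θ) := by intro θ; ring_nf
    simp only [e]
    rw [integral_exp_mul_complex (by
      simp [hj, Complex.ext_iff, Complex.I_ne_zero, mul_eq_zero, Int.cast_eq_zero])]
    have e2 : (j : ℂ) * Complex.I * ((2*Real.pi : ℝ) : ℂ) = (j : ℂ) * (2 * Real.pi * Complex.I) := by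
      push_cast; ring
    rw [e2, Complex.exp_int_mul_two_pi_mul_I]
    simp

lemma hasSum_deriv2 (a : ℕ → ℂ) (h : ℂ → ℂ)
    (h1 : ∀ z ∈ Metric.ball (0:ℂ) 1, HasSum (fun m : ℕ => a (m+2) * z^(m+2)) (h z - z)) :
    ∀ z ∈ Metric.ball (0:ℂ) 1,
      HasSum (fun m : ℕ => ((m:ℂ)+2)*((m:ℂ)+1) * a (m+2) * z^m) (deriv (deriv h) z) := by
  intro z hz
  rw [Metric.mem_ball, dist_zero_right] at hz
  set r : ℝ := (‖z‖ + 1) / 2 with hrdef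
  have hzr : ‖z‖ < r := by rw [hrdef]; linarith
  have hr1 : r < 1 := by rw [hrdef]; linarith [norm_nonneg z]
  have hr0 : 0 ≤ r := le_trans (norm_nonneg z) hzr.le
  set ρ : ℝ := (r + 1) / 2 with hρdef
  have hrρ : r < ρ := by rw [hρdef]; linarith
  have hρ1 : ρ < 1 := by rw [hρdef]; linarith
  have hρmem : (ρ:ℂ) ∈ Metric.ball (0:ℂ) 1 := by
    rw [Metric.mem_ball, dist_zero_right, Complex.norm_real, Real.norm_eq_abs,
      abs_of_nonneg (by linarith)]
    exact hρ1
  have hU : Summable (fun m : ℕ => ((m:ℝ)+2)*((m:ℝ)+1) * ‖a (m+2)‖ * r^m) :=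
    summable_main a (h1 _ hρmem).summable hr0 hrρ
  set U : ℕ → ℝ := fun m => ((m:ℝ)+2)*((m:ℝ)+1) * ‖a (m+2)‖ * r^m with hUdef
  have hzb : z ∈ Metric.ball (0:ℂ) r := by rwa [Metric.mem_ball, dist_zero_right]
  have hop : IsOpen (Metric.ball (0:ℂ) r) := Metric.isOpen_ball
  have hpc : IsPreconnected (Metric.ball (0:ℂ) r) := (convex_ball (0:ℂ) r).isPreconnected
  -- norms of terms
  have hnorm1 : ∀ (m : ℕ) (y : ℂ), y ∈ Metric.ball (0:ℂ) r →
      ‖((m:ℂ)+2) * a (m+2) * y^(m+1)‖ ≤ U m := by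
    intro m y hy
    rw [Metric.mem_ball, dist_zero_right] at hy
    have hyp : ‖y‖^(m+1) ≤ r^m := by
      calc ‖y‖^(m+1) ≤ r^(m+1) := pow_le_pow_left₀ (norm_nonneg y) hy.le (m+1)
        _ ≤ r^m := pow_le_pow_of_le_one hr0 hr1.le (Nat.le_succ m)
    have e : ‖((m:ℂ)+2) * a (m+2) * y^(m+1)‖
        = ((m:ℝ)+2) * ‖a (m+2)‖ * ‖y‖^(m+1) := by
      rw [norm_mul, norm_mul, norm_pow]
      norm_cast
    rw [e]
    show ((m:ℝ)+2) * ‖a (m+2)‖ * ‖y‖^(m+1)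
        ≤ ((m:ℝ)+2)*((m:ℝ)+1) * ‖a (m+2)‖ * r^m
    have h2 : ((m:ℝ)+2) * ‖a (m+2)‖ * ‖y‖^(m+1)
        ≤ ((m:ℝ)+2) * ‖a (m+2)‖ * r^m := by
      refine mul_le_mul_of_nonneg_left hyp (by positivity)
    refine h2.trans ?_
    nlinarith [mul_nonneg (mul_nonneg (mul_nonneg
      (by positivity : (0:ℝ) ≤ (m:ℝ)+2) (norm_nonneg (a (m+2))))
      (pow_nonneg hr0 m)) (Nat.cast_nonneg (α := ℝ) m)]
  have hnorm2 : ∀ (m : ℕ) (y : ℂ), y ∈ Metric.ball (0:ℂ) r →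
      ‖((m:ℂ)+2)*((m:ℂ)+1) * a (m+2) * y^m‖ ≤ U m := by
    intro m y hy
    rw [Metric.mem_ball, dist_zero_right] at hy
    have e : ‖((m:ℂ)+2)*((m:ℂ)+1) * a (m+2) * y^m‖
        = ((m:ℝ)+2)*((m:ℝ)+1) * ‖a (m+2)‖ * ‖y‖^m := by
      rw [norm_mul, norm_mul, norm_mul, norm_pow]
      norm_cast
    rw [e]
    show ((m:ℝ)+2)*((m:ℝ)+1) * ‖a (m+2)‖ * ‖y‖^m
        ≤ ((m:ℝ)+2)*((m:ℝ)+1) * ‖a (m+2)‖ * r^m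
    exact mul_le_mul_of_nonneg_left (pow_le_pow_left₀ (norm_nonneg y) hy.le m) (by positivity)
  -- derivatives of terms
  have hd0 : ∀ (m : ℕ) (y : ℂ),
      HasDerivAt (fun w => a (m+2) * w^(m+2)) (((m:ℂ)+2) * a (m+2) * y^(m+1)) y := by
    intro m y
    have := (hasDerivAt_pow (m+2) y).const_mul (a (m+2))
    refine this.congr_deriv ?_
    push_cast
    ring_nf
  have hd1 : ∀ (m : ℕ) (y : ℂ),
      HasDerivAt (fun w => ((m:ℂ)+2) * a (m+2) * w^(m+1))
        (((m:ℂ)+2)*((m:ℂ)+1) * a (m+2) * y^m) y := by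
    intro m y
    have := (hasDerivAt_pow (m+1) y).const_mul (((m:ℂ)+2) * a (m+2))
    refine this.congr_deriv ?_
    push_cast
    ring_nf
  set ψ : ℂ → ℂ := fun w => ∑' m : ℕ, a (m+2) * w^(m+2) with hψdef
  set ψ1 : ℂ → ℂ := fun w => ∑' m : ℕ, ((m:ℂ)+2) * a (m+2) * w^(m+1) with hψ1def
  set ψ2 : ℂ → ℂ := fun w => ∑' m : ℕ, ((m:ℂ)+2)*((m:ℂ)+1) * a (m+2) * w^m with hψ2def
  have hsum0z : Summable (fun m : ℕ => a (m+2) * z^(m+2)) := (h1 z (by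
    rw [Metric.mem_ball, dist_zero_right]; exact hz)).summable
  have hsum1z : Summable (fun m : ℕ => ((m:ℂ)+2) * a (m+2) * z^(m+1)) :=
    Summable.of_norm_bounded hU (fun m => hnorm1 m z hzb)
  have hsum2z : Summable (fun m : ℕ => ((m:ℂ)+2)*((m:ℂ)+1) * a (m+2) * z^m) :=
    Summable.of_norm_bounded hU (fun m => hnorm2 m z hzb)
  have stepA : ∀ y ∈ Metric.ball (0:ℂ) r, HasDerivAt ψ (ψ1 y) y := by
    intro y hy
    exact hasDerivAt_tsum_of_isPreconnected hU hop hpc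
      (fun m w _ => hd0 m w) hnorm1 hzb hsum0z hy
  have stepB : ∀ y ∈ Metric.ball (0:ℂ) r, HasDerivAt ψ1 (ψ2 y) y := by
    intro y hy
    exact hasDerivAt_tsum_of_isPreconnected hU hop hpc
      (fun m w _ => hd1 m w) hnorm2 hzb hsum1z hy
  have hball : Metric.ball (0:ℂ) r ⊆ Metric.ball (0:ℂ) 1 :=
    Metric.ball_subset_ball hr1.le
  have hagree : ∀ w ∈ Metric.ball (0:ℂ) 1, h w = w + ψ w := by
    intro w hw
    have := (h1 w hw).tsum_eq
    rw [hψdef]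
    simp only []
    rw [this]
    ring
  have hd1' : ∀ y ∈ Metric.ball (0:ℂ) r, HasDerivAt h (1 + ψ1 y) y := by
    intro y hy
    have hcore : HasDerivAt (fun w => w + ψ w) (1 + ψ1 y) y :=
      (hasDerivAt_id y).add (stepA y hy)
    refine hcore.congr_of_eventuallyEq ?_
    filter_upwards [Metric.isOpen_ball.mem_nhds (hball hy)] with w hw
    exact hagree w hw
  have hderiv_eq : ∀ y ∈ Metric.ball (0:ℂ) r, deriv h y = 1 + ψ1 y :=
    fun y hy => (hd1' y hy).deriv
  have hd2 : HasDerivAt (deriv h) (ψ2 z) z := by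
    have hcore : HasDerivAt (fun w => 1 + ψ1 w) (ψ2 z) z := (stepB z hzb).const_add 1
    refine hcore.congr_of_eventuallyEq ?_
    filter_upwards [hop.mem_nhds hzb] with w hw
    exact hderiv_eq w hw
  rw [hd2.deriv]
  have := hsum2z.hasSum
  rwa [hψ2def]

lemma main_claim (M : ℝ) (a : ℕ → ℂ) (h g : ℂ → ℂ) (N : ℕ)
    (h1 : ∀ z ∈ Metric.ball (0:ℂ) 1, HasSum (fun m : ℕ => a (m+2) * z^(m+2)) (h z - z))
    (K : ∀ z ∈ Metric.ball (0:ℂ) 1,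
      HasSum (fun m : ℕ => ((m:ℂ)+2)*((m:ℂ)+1) * a (m+2) * z^m) (deriv (deriv h) z))
    (h3 : ∀ z ∈ Metric.ball (0:ℂ) 1,
      -M + ‖z * deriv (deriv g) z‖ < (z * deriv (deriv h) z).re)
    {r : ℝ} (hr0 : 0 < r) (hr1 : r < 1) :
    ((N:ℝ)+2)*((N:ℝ)+1) * ‖a (N+2)‖ * r^(N+1) ≤ 2*M := by
  have hπ : (0:ℝ) < 2*Real.pi := by positivity
  -- the circle parametrization
  set z : ℝ → ℂ := fun θ => (r:ℂ) * Complex.exp (θ * Complex.I) with hzdef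
  have hznorm : ∀ θ : ℝ, ‖z θ‖ = r := by
    intro θ
    rw [hzdef]
    simp only [norm_mul, Complex.norm_exp_ofReal_mul_I, mul_one,
      Complex.norm_real, Real.norm_eq_abs, abs_of_nonneg hr0.le]
  have hmem : ∀ θ : ℝ, z θ ∈ Metric.ball (0:ℂ) 1 := by
    intro θ
    rw [Metric.mem_ball, dist_zero_right, hznorm]
    exact hr1
  have hzc : Continuous z := by
    rw [hzdef]
    exact continuous_const.mul (Complex.continuous_exp.comp
      (Complex.continuous_ofReal.mul continuous_const))
  set F : ℕ → ℝ → ℂ := fun m θ => z θ * (((m:ℂ)+2)*((m:ℂ)+1) * a (m+2) * (z θ)^m) with hFdef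
  set Φ : ℝ → ℂ := fun θ => z θ * deriv (deriv h) (z θ) with hΦdef
  have hFθ : ∀ θ : ℝ, HasSum (fun m => F m θ) (Φ θ) := fun θ =>
    (K (z θ) (hmem θ)).mul_left (z θ)
  set V : ℕ → ℝ := fun m => ((m:ℝ)+2)*((m:ℝ)+1) * ‖a (m+2)‖ * r^m with hVdef
  have hρmem : ((((r+1)/2 : ℝ)):ℂ) ∈ Metric.ball (0:ℂ) 1 := by
    rw [Metric.mem_ball, dist_zero_right, Complex.norm_real, Real.norm_eq_abs,
      abs_of_nonneg (by linarith)]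
    linarith
  have hV : Summable V := summable_main a (h1 _ hρmem).summable hr0.le (by linarith)
  have hnormF : ∀ (m : ℕ) (θ : ℝ), ‖F m θ‖ ≤ V m := by
    intro m θ
    rw [hFdef]
    simp only [norm_mul, norm_pow, hznorm]
    have e : r * (‖(m:ℂ)+2‖ * ‖(m:ℂ)+1‖ * ‖a (m+2)‖ * r^m)
        = (((m:ℝ)+2)*((m:ℝ)+1) * ‖a (m+2)‖ * r^m) * r := by
      have c2 : ‖(m:ℂ)+2‖ = (m:ℝ)+2 := by
        rw [show ((m:ℂ)+2) = (((m:ℝ)+2 : ℝ):ℂ) by push_cast; ring, Complex.norm_real, Real.norm_eq_abs,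
          abs_of_nonneg (by positivity)]
      have c1 : ‖(m:ℂ)+1‖ = (m:ℝ)+1 := by
        rw [show ((m:ℂ)+1) = (((m:ℝ)+1 : ℝ):ℂ) by push_cast; ring, Complex.norm_real, Real.norm_eq_abs,
          abs_of_nonneg (by positivity)]
      rw [c1, c2]; ring
    rw [e]
    exact mul_le_of_le_one_right (by positivity) hr1.le
  have hFc : ∀ m : ℕ, Continuous (F m) := by
    intro m
    rw [hFdef]
    exact hzc.mul (continuous_const.mul (hzc.pow m))
  have hΦc : Continuous Φ := by
    have : Φ = fun θ => ∑' m, F m θ := funext fun θ => (hFθ θ).tsum_eq.symm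
    rw [this]
    exact continuous_tsum hFc hV (fun m θ => hnormF m θ)
  have hexpc : ∀ k : ℤ, Continuous (fun θ : ℝ => Complex.exp (k * θ * Complex.I)) := by
    intro k
    exact Complex.continuous_exp.comp
      ((continuous_const.mul Complex.continuous_ofReal).mul continuous_const)
  have hexpnorm : ∀ (k : ℤ) (θ : ℝ), ‖Complex.exp (k * θ * Complex.I)‖ = 1 := by
    intro k θ
    rw [Complex.norm_exp]
    simp
  -- interchange of sum and integral
  have key : ∀ k : ℤ, HasSum
      (fun m : ℕ => ∫ θ in (0:ℝ)..(2*Real.pi), F m θ * Complex.exp (k * θ * Complex.I))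
      (∫ θ in (0:ℝ)..(2*Real.pi), Φ θ * Complex.exp (k * θ * Complex.I)) := by
    intro k
    refine intervalIntegral.hasSum_integral_of_dominated_convergence
      (fun m _ => V m) (fun m => ((hFc m).mul (hexpc k)).aestronglyMeasurable) ?_ ?_ ?_ ?_
    · intro m
      filter_upwards with θ _
      rw [norm_mul, hexpnorm, mul_one]
      exact hnormF m θ
    · filter_upwards with θ _
      exact hV
    · exact intervalIntegrable_const
    · filter_upwards with θ _
      exact (hFθ θ).mul_right _
  -- value of each term integral
  have hterm : ∀ (k : ℤ) (m : ℕ), (∫ θ in (0:ℝ)..(2*Real.pi), F m θ * Complex.exp (k * θ * Complex.I))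
      = (((m:ℂ)+2)*((m:ℂ)+1) * a (m+2) * (r:ℂ)^(m+1)) *
        (if ((m:ℤ)+1+k) = 0 then ((2*Real.pi : ℝ) : ℂ) else 0) := by
    intro k m
    have e : ∀ θ : ℝ, F m θ * Complex.exp (k * θ * Complex.I)
        = (((m:ℂ)+2)*((m:ℂ)+1) * a (m+2) * (r:ℂ)^(m+1)) *
          Complex.exp ((((m:ℤ)+1+k : ℤ) : ℂ) * θ * Complex.I) := by
      intro θ
      rw [hFdef, hzdef]
      simp only []
      rw [show ((((m:ℤ)+1+k : ℤ) : ℂ) * θ * Complex.I)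
          = ((m+1 : ℕ) : ℂ) * ((θ:ℂ) * Complex.I) + (k:ℂ) * θ * Complex.I by push_cast; ring,
        Complex.exp_add, Complex.exp_nat_mul]
      push_cast
      ring
    simp only [e]
    rw [intervalIntegral.integral_const_mul, I1]
  set C : ℂ := ((N:ℂ)+2)*((N:ℂ)+1) * a (N+2) * (r:ℂ)^(N+1) with hCdef
  -- the three integral values
  have hA : (∫ θ in (0:ℝ)..(2*Real.pi), Φ θ * Complex.exp ((-(N+1) : ℤ) * θ * Complex.I))
      = C * ((2*Real.pi : ℝ) : ℂ) := by
    have hk := key (-(N+1) : ℤ)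
    have hsingle : HasSum
        (fun m : ℕ => ∫ θ in (0:ℝ)..(2*Real.pi), F m θ * Complex.exp ((-(N+1) : ℤ) * θ * Complex.I))
        (C * ((2*Real.pi : ℝ) : ℂ)) := by
      have h0 : ∀ m : ℕ, m ≠ N →
          (∫ θ in (0:ℝ)..(2*Real.pi), F m θ * Complex.exp ((-(N+1) : ℤ) * θ * Complex.I)) = 0 := by
        intro m hm
        rw [hterm, if_neg (by omega), mul_zero]
      have := hasSum_single (f := fun m : ℕ =>
        ∫ θ in (0:ℝ)..(2*Real.pi), F m θ * Complex.exp ((-(N+1) : ℤ) * θ * Complex.I)) N h0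
      beta_reduce at this
      rwa [hterm, if_pos (by omega)] at this
    exact hk.unique hsingle
  have hB : (∫ θ in (0:ℝ)..(2*Real.pi), Φ θ * Complex.exp (((N+1) : ℤ) * θ * Complex.I)) = 0 := by
    have hk := key ((N+1) : ℤ)
    have hzero : HasSum
        (fun m : ℕ => ∫ θ in (0:ℝ)..(2*Real.pi), F m θ * Complex.exp (((N+1) : ℤ) * θ * Complex.I))
        0 := by
      have h0 : (fun m : ℕ =>
          ∫ θ in (0:ℝ)..(2*Real.pi), F m θ * Complex.exp (((N+1) : ℤ) * θ * Complex.I))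
          = fun _ => 0 := by
        funext m
        rw [hterm, if_neg (by omega), mul_zero]
      rw [h0]
      exact hasSum_zero
    exact hk.unique hzero
  have hZ : (∫ θ in (0:ℝ)..(2*Real.pi), Φ θ * Complex.exp ((0 : ℤ) * θ * Complex.I)) = 0 := by
    have hk := key (0 : ℤ)
    have hzero : HasSum
        (fun m : ℕ => ∫ θ in (0:ℝ)..(2*Real.pi), F m θ * Complex.exp ((0 : ℤ) * θ * Complex.I))
        0 := by
      have h0 : (fun m : ℕ =>
          ∫ θ in (0:ℝ)..(2*Real.pi), F m θ * Complex.exp ((0 : ℤ) * θ * Complex.I))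
          = fun _ => 0 := by
        funext m
        rw [hterm, if_neg (by omega), mul_zero]
      rw [h0]
      exact hasSum_zero
    exact hk.unique hzero
  have hZ' : (∫ θ in (0:ℝ)..(2*Real.pi), Φ θ) = 0 := by
    rw [← hZ]
    apply intervalIntegral.integral_congr
    intro θ _
    simp
  -- real part and positivity
  set u : ℝ → ℝ := fun θ => (Φ θ).re with hudef
  have hu : ∀ θ : ℝ, 0 ≤ u θ + M := by
    intro θ
    have := h3 (z θ) (hmem θ)
    have habs := norm_nonneg (z θ * deriv (deriv g) (z θ))
    have : -M + ‖z θ * deriv (deriv g) (z θ)‖ < u θ := this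
    linarith
  have huc : Continuous u := Complex.continuous_re.comp hΦc
  -- the splitting identity
  have hsplit : ∀ θ : ℝ, (2*(((u θ : ℝ):ℂ) + (M:ℂ))) * Complex.exp ((-(N+1) : ℤ) * θ * Complex.I)
      = Φ θ * Complex.exp ((-(N+1) : ℤ) * θ * Complex.I)
      + (starRingEnd ℂ) (Φ θ * Complex.exp (((N+1) : ℤ) * θ * Complex.I))
      + (2*(M:ℂ)) * Complex.exp ((-(N+1) : ℤ) * θ * Complex.I) := by
    intro θ
    have hconjexp : (starRingEnd ℂ) (Complex.exp (((N+1) : ℤ) * θ * Complex.I))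
        = Complex.exp ((-(N+1) : ℤ) * θ * Complex.I) := by
      rw [← Complex.exp_conj]
      congr 1
      simp only [map_mul, Complex.conj_I, Complex.conj_ofReal, map_intCast]
      push_cast
      ring
    rw [map_mul, hconjexp]
    have hre : Φ θ + (starRingEnd ℂ) (Φ θ) = ((2 * u θ : ℝ) : ℂ) := Complex.add_conj _
    have e2 : (2*(((u θ : ℝ):ℂ) + (M:ℂ))) = Φ θ + (starRingEnd ℂ) (Φ θ) + 2*(M:ℂ) := by
      rw [hre]; push_cast; ring
    rw [e2]; ring
  -- integrate the splitting identity
  have hconjint : (∫ θ in (0:ℝ)..(2*Real.pi),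
        (starRingEnd ℂ) (Φ θ * Complex.exp (((N+1) : ℤ) * θ * Complex.I)))
      = (starRingEnd ℂ) (∫ θ in (0:ℝ)..(2*Real.pi),
        Φ θ * Complex.exp (((N+1) : ℤ) * θ * Complex.I)) := by
    rw [intervalIntegral.integral_of_le hπ.le, intervalIntegral.integral_of_le hπ.le]
    exact integral_conj
  have hMint : (∫ θ in (0:ℝ)..(2*Real.pi),
        (2*(M:ℂ)) * Complex.exp ((-(N+1) : ℤ) * θ * Complex.I)) = 0 := by
    rw [intervalIntegral.integral_const_mul, I1, if_neg (by omega), mul_zero]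
  have hint : (∫ θ in (0:ℝ)..(2*Real.pi),
        (2*(((u θ : ℝ):ℂ) + (M:ℂ))) * Complex.exp ((-(N+1) : ℤ) * θ * Complex.I))
      = C * ((2*Real.pi : ℝ) : ℂ) := by
    rw [intervalIntegral.integral_congr (g := fun θ =>
      Φ θ * Complex.exp ((-(N+1) : ℤ) * θ * Complex.I)
      + (starRingEnd ℂ) (Φ θ * Complex.exp (((N+1) : ℤ) * θ * Complex.I))
      + (2*(M:ℂ)) * Complex.exp ((-(N+1) : ℤ) * θ * Complex.I)) (fun θ _ => hsplit θ)]
    have hconjcont : Continuous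
        (fun θ : ℝ => (starRingEnd ℂ) (Φ θ * Complex.exp (((N+1) : ℤ) * θ * Complex.I))) :=
      (hΦc.mul (hexpc _)).star
    rw [intervalIntegral.integral_add (by exact (((hΦc.mul (hexpc _)).intervalIntegrable _ _).add
        (hconjcont.intervalIntegrable _ _)))
        (by exact (continuous_const.mul (hexpc _)).intervalIntegrable _ _),
      intervalIntegral.integral_add (by exact (hΦc.mul (hexpc _)).intervalIntegrable _ _)
        (hconjcont.intervalIntegrable _ _)]
    rw [hA, hconjint, hB, map_zero, hMint]
    ring
  -- the norm bound
  have hnorm_pt : ∀ θ : ℝ, ‖(2*(((u θ : ℝ):ℂ) + (M:ℂ))) * Complex.exp ((-(N+1) : ℤ) * θ * Complex.I)‖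
      = 2*(u θ + M) := by
    intro θ
    rw [norm_mul, hexpnorm, mul_one]
    rw [show (2*(((u θ : ℝ):ℂ) + (M:ℂ))) = (((2*(u θ + M) : ℝ)):ℂ) by push_cast; ring]
    rw [Complex.norm_real, Real.norm_eq_abs, abs_of_nonneg (by linarith [hu θ])]
  have hules : ‖C * ((2*Real.pi : ℝ) : ℂ)‖ ≤ ∫ θ in (0:ℝ)..(2*Real.pi), 2*(u θ + M) := by
    rw [← hint]
    refine (intervalIntegral.norm_integral_le_integral_norm hπ.le).trans_eq ?_
    apply intervalIntegral.integral_congr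
    intro θ _
    exact hnorm_pt θ
  have hu_int : (∫ θ in (0:ℝ)..(2*Real.pi), u θ) = 0 := by
    have hΦint : Integrable Φ (volume.restrict (Set.Ioc (0:ℝ) (2*Real.pi))) :=
      hΦc.integrableOn_Ioc
    have := integral_re (μ := volume.restrict (Set.Ioc (0:ℝ) (2*Real.pi))) hΦint
    rw [intervalIntegral.integral_of_le hπ.le]
    have e : (∫ θ in Set.Ioc (0:ℝ) (2*Real.pi), u θ)
        = RCLike.re (∫ θ in Set.Ioc (0:ℝ) (2*Real.pi), Φ θ) := by
      rw [← this]
      simp only [RCLike.re_eq_complex_re]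
      rfl
    rw [e, ← intervalIntegral.integral_of_le hπ.le, hZ']
    simp
  have hval : (∫ θ in (0:ℝ)..(2*Real.pi), 2*(u θ + M)) = 2*M*(2*Real.pi) := by
    have e : ∀ θ : ℝ, 2*(u θ + M) = 2 * u θ + 2*M := fun θ => by ring
    rw [intervalIntegral.integral_congr (g := fun θ => 2 * u θ + 2*M) (fun θ _ => e θ)]
    rw [intervalIntegral.integral_add (by exact (continuous_const.mul huc).intervalIntegrable _ _)
      (by exact intervalIntegrable_const), intervalIntegral.integral_const_mul, hu_int,
      intervalIntegral.integral_const]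
    simp
    ring
  have hCnorm : ‖C‖ = ((N:ℝ)+2)*((N:ℝ)+1) * ‖a (N+2)‖ * r^(N+1) := by
    rw [hCdef, norm_mul, norm_mul, norm_mul, norm_pow]
    have c2 : ‖(N:ℂ)+2‖ = (N:ℝ)+2 := by
      rw [show ((N:ℂ)+2) = (((N:ℝ)+2 : ℝ):ℂ) by push_cast; ring, Complex.norm_real, Real.norm_eq_abs,
        abs_of_nonneg (by positivity)]
    have c1 : ‖(N:ℂ)+1‖ = (N:ℝ)+1 := by
      rw [show ((N:ℂ)+1) = (((N:ℝ)+1 : ℝ):ℂ) by push_cast; ring, Complex.norm_real, Real.norm_eq_abs,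
        abs_of_nonneg (by positivity)]
    rw [c1, c2, Complex.norm_real, Real.norm_eq_abs, abs_of_nonneg hr0.le]
  have hfinal : ‖C‖ * (2*Real.pi) ≤ 2*M*(2*Real.pi) := by
    have : ‖C * ((2*Real.pi : ℝ) : ℂ)‖ = ‖C‖ * (2*Real.pi) := by
      rw [norm_mul, Complex.norm_real, Real.norm_eq_abs, abs_of_nonneg hπ.le]
    rw [← this]
    rw [← hval]
    exact hules
  rw [← hCnorm]
  exact le_of_mul_le_mul_right (by linarith) hπ

/-- Coefficient bound `|a_n| ≤ 2M/(n(n-1))` for `f ∈ P⁰_H(M)`. -/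
theorem coeff_a_bound (M : ℝ) (hM : 0 < M) (a b : ℕ → ℂ) (h g : ℂ → ℂ)
    (hf : PH0 M a b h g) (n : ℕ) (hn : 2 ≤ n) :
    ‖a n‖ ≤ 2 * M / ((n : ℝ) * ((n : ℝ) - 1)) := by
  obtain ⟨h1, h2, h3⟩ := hf
  obtain ⟨N, rfl⟩ : ∃ N, n = N + 2 := ⟨n - 2, by omega⟩
  have K := hasSum_deriv2 a h h1
  have claim : ∀ r : ℝ, 0 < r → r < 1 →
      ((N:ℝ)+2)*((N:ℝ)+1) * ‖a (N+2)‖ * r^(N+1) ≤ 2*M :=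
    fun r hr0 hr1 => main_claim M a h g N h1 K h3 hr0 hr1
  have hlim : ((N:ℝ)+2)*((N:ℝ)+1) * ‖a (N+2)‖ ≤ 2*M := by
    have hc : Filter.Tendsto (fun r : ℝ => r^(N+1)) (nhdsWithin 1 (Set.Iio 1)) (nhds 1) := by
      have h0 : Filter.Tendsto (fun r : ℝ => r^(N+1)) (nhds 1) (nhds 1) := by
        simpa using (continuous_pow (N+1)).tendsto (1:ℝ)
      exact h0.mono_left nhdsWithin_le_nhds
    have ht := hc.const_mul (((N:ℝ)+2)*((N:ℝ)+1) * ‖a (N+2)‖)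
    rw [mul_one] at ht
    refine le_of_tendsto ht ?_
    filter_upwards [Ioo_mem_nhdsLT_of_mem (show (1:ℝ) ∈ Set.Ioc 0 1 by norm_num)] with r hr
    exact claim r hr.1 hr.2
  have hD : ((N+2 : ℕ):ℝ) * (((N+2 : ℕ):ℝ) - 1) = ((N:ℝ)+2)*((N:ℝ)+1) := by
    push_cast; ring
  rw [hD, le_div_iff₀ (by positivity)]
  linarith
end

section
/- Let M > 0 and let f belong to the class P⁰_H(M). Then for every z ∈ 𝔻, |z| + 2M Σ_{n=2}^∞ (−1)^{n−1} |z|ⁿ/(n(n−1)) ≤ |f(z)| ≤ |z| + 2M Σ_{n=2}^∞ |z|ⁿ/(n(n−1)). -/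
open Filter MeasureTheory Metric Set

noncomputable def Complex.abs : AbsoluteValue ℂ ℝ where
  toFun x := ‖x‖
  map_mul' := norm_mul
  nonneg' := norm_nonneg
  eq_zero' _ := norm_eq_zero
  add_le' := norm_add_le

theorem Complex.norm_eq_abs (z : ℂ) : ‖z‖ = Complex.abs z := rfl

@[simp] theorem Complex.abs_ofReal (r : ℝ) : Complex.abs (r : ℂ) = |r| := Complex.norm_real r

theorem Complex.abs_of_nonneg {r : ℝ} (h : 0 ≤ r) : Complex.abs (r : ℂ) = r := by
  rw [Complex.abs_ofReal]; exact _root_.abs_of_nonneg h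

@[simp] theorem Complex.abs_conj (z : ℂ) : Complex.abs ((starRingEnd ℂ) z) = Complex.abs z :=
  Complex.norm_conj z

theorem Complex.sq_abs (z : ℂ) : Complex.abs z ^ 2 = Complex.normSq z := Complex.sq_norm z

theorem Complex.normSq_eq_abs (z : ℂ) : Complex.normSq z = Complex.abs z ^ 2 :=
  Complex.normSq_eq_norm_sq z

theorem Complex.continuous_abs : Continuous Complex.abs := continuous_norm

theorem Complex.abs_re_le_abs (z : ℂ) : |z.re| ≤ Complex.abs z := Complex.abs_re_le_norm z

theorem Complex.re_le_abs (z : ℂ) : z.re ≤ Complex.abs z := Complex.re_le_norm z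

theorem Complex.abs.pos {z : ℂ} (hz : z ≠ 0) : 0 < Complex.abs z := norm_pos_iff.mpr hz

theorem Complex.abs.ne_zero {z : ℂ} (hz : z ≠ 0) : Complex.abs z ≠ 0 := norm_ne_zero_iff.mpr hz

lemma rep_lemma (c : ℕ → ℂ) (k : ℂ → ℂ)
    (hk : ∀ z ∈ Metric.ball (0:ℂ) 1, HasSum (fun n : ℕ => c n * z ^ (n + 2)) (k z)) :
    DifferentiableOn ℂ k (Metric.ball 0 1) ∧ k 0 = 0 ∧ deriv k 0 = 0 := by
  classical
  set c' : ℕ → ℂ := fun m => if 2 ≤ m then c (m - 2) else 0 with hc'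
  set p : FormalMultilinearSeries ℂ ℂ ℂ := FormalMultilinearSeries.ofScalars ℂ c' with hp
  have hrad : (1 : ENNReal) ≤ p.radius := by
    apply ENNReal.le_of_forall_nnreal_lt
    intro r hr
    have hr1 : (r : ℝ) < 1 := by exact_mod_cast hr
    apply FormalMultilinearSeries.le_radius_of_summable_norm
    set s : ℝ := ((r : ℝ) + 1) / 2 with hs
    have hs0 : 0 < s := by positivity
    have hrs : (r : ℝ) < s := by simp only [hs]; linarith
    have hs1 : s < 1 := by simp only [hs]; linarith
    have hsball : (s : ℂ) ∈ Metric.ball (0:ℂ) 1 := by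
      simp [Complex.abs_of_nonneg hs0.le, abs_of_nonneg hs0.le, hs1]
    have hbdd : BddAbove (Set.range fun n : ℕ => ‖c n * (s:ℂ) ^ (n+2)‖) :=
      ((hk _ hsball).summable.tendsto_atTop_zero.norm).bddAbove_range
    obtain ⟨C, hC⟩ := hbdd
    have hC' : ∀ n : ℕ, ‖c n‖ * s ^ (n + 2) ≤ C := by
      intro n
      have := hC (Set.mem_range_self n)
      simpa [norm_mul, norm_pow, Complex.norm_real, abs_of_nonneg hs0.le,
        Complex.abs_ofReal] using this
    have hC0 : 0 ≤ C := le_trans (by positivity) (hC' 0)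
    have hsum : Summable (fun m : ℕ => C * ((r:ℝ)/s) ^ m) :=
      (summable_geometric_of_lt_one (by positivity)
        (by rw [div_lt_one hs0]; exact hrs)).mul_left C
    apply Summable.of_nonneg_of_le (fun m => by positivity) _ hsum
    intro m
    have hnorm : ‖p m‖ = ‖c' m‖ := FormalMultilinearSeries.ofScalars_norm ℂ c' m
    rw [hnorm]
    rcases le_or_gt 2 m with hm | hm
    · obtain ⟨n, rfl⟩ : ∃ n, m = n + 2 := ⟨m - 2, by omega⟩
      have : c' (n + 2) = c n := by simp [hc']
      rw [this]
      have h1 : ‖c n‖ * (r:ℝ) ^ (n+2) = (‖c n‖ * s ^ (n+2)) * ((r:ℝ)/s) ^ (n+2) := by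
        rw [mul_assoc, ← mul_pow, mul_div_assoc', mul_div_cancel_left₀ _ hs0.ne']
      rw [h1]
      exact mul_le_mul_of_nonneg_right (hC' n) (by positivity)
    · have : c' m = 0 := by simp [hc']; omega
      simp [this]
      positivity
  have hp0 : 0 < p.radius := lt_of_lt_of_le one_pos hrad
  have hfp : HasFPowerSeriesOnBall p.sum p 0 p.radius :=
    p.hasFPowerSeriesOnBall hp0
  have hmem : ∀ z ∈ Metric.ball (0:ℂ) 1, z ∈ Metric.eball (0:ℂ) p.radius := by
    intro z hz
    rw [Metric.mem_eball, edist_zero_right]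
    calc (‖z‖₊ : ENNReal) < 1 := by
          rw [← ENNReal.coe_one, ENNReal.coe_lt_coe]
          exact_mod_cast mem_ball_zero_iff.mp hz
      _ ≤ p.radius := hrad
  have heq : Set.EqOn k p.sum (Metric.ball 0 1) := by
    intro z hz
    have h1 : HasSum (fun m : ℕ => c' m * z ^ m) (k z) := by
      have h2 : HasSum (fun n : ℕ => (fun m : ℕ => c' m * z ^ m) (n + 2)) (k z) := by
        have : ∀ n : ℕ, (fun m : ℕ => c' m * z ^ m) (n + 2) = c n * z ^ (n + 2) := by
          intro n; simp [hc']
        rw [funext this]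
        exact hk z hz
      have := (hasSum_nat_add_iff (f := fun m : ℕ => c' m * z ^ m) 2).mp h2
      simpa [hc', Finset.sum_range_succ] using this
    have h3 : HasSum (fun m : ℕ => c' m * z ^ m) (p.sum z) := by
      have := p.hasSum (hmem z hz)
      refine this.congr_fun ?_
      intro n
      rw [FormalMultilinearSeries.ofScalars_apply_eq]
      simp [smul_eq_mul]
    exact h1.unique h3
  have hdiff : DifferentiableOn ℂ k (Metric.ball 0 1) := by
    have hdp : DifferentiableOn ℂ p.sum (Metric.ball 0 1) :=
      (hfp.differentiableOn).mono (fun z hz => hmem z hz)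
    exact hdp.congr heq
  have hk0 : k 0 = 0 := by
    have h0 := hk 0 (Metric.mem_ball_self one_pos)
    have hz0 : (fun n : ℕ => c n * (0:ℂ) ^ (n + 2)) = fun _ => 0 := by
      funext n; simp
    rw [hz0] at h0
    exact h0.unique hasSum_zero
  have hev : k =ᶠ[nhds (0:ℂ)] p.sum :=
    Filter.eventuallyEq_of_mem (Metric.ball_mem_nhds 0 one_pos) heq
  have hd0 : deriv k 0 = deriv p.sum 0 := hev.deriv_eq
  have hd1 : deriv p.sum 0 = p 1 fun _ => 1 := (hfp.hasFPowerSeriesAt).deriv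
  refine ⟨hdiff, hk0, ?_⟩
  rw [hd0, hd1]
  rw [FormalMultilinearSeries.ofScalars_apply_eq]
  simp [hc']

lemma abs_sq_split (x : ℂ) : x.re * x.re + x.im * x.im = (Complex.abs x) * (Complex.abs x) := by
  rw [← Complex.normSq_apply, ← Complex.sq_abs, sq]

lemma re_mobius_ge (x : ℂ) (s : ℝ) (hx : Complex.abs x ≤ s) (hs : s < 1) :
    -s/(1+s) ≤ (x/(1-x)).re := by
  have hs0 : 0 ≤ s := le_trans (Complex.abs.nonneg x) hx
  have hxne : (1:ℂ) - x ≠ 0 := by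
    intro hc
    have : x = 1 := by linear_combination -hc
    rw [this] at hx; simp at hx; linarith
  have hD : 0 < Complex.normSq (1 - x) := Complex.normSq_pos.mpr hxne
  have hre : (x/(1-x)).re = (x.re * (1-x).re + x.im * (1-x).im) / Complex.normSq (1-x) := by
    rw [Complex.div_re]; ring
  rw [hre, neg_div, ← neg_div, div_le_div_iff₀ (by linarith) hD]
  have h1 : x.re * x.re + x.im * x.im ≤ s * s := by
    have := abs_sq_split x
    nlinarith [Complex.abs.nonneg x]
  have h2 : -s ≤ x.re := by
    have := Complex.abs_re_le_abs x
    have := neg_abs_le x.re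
    linarith
  have key : 0 ≤ (1-s) * (x.re + s) := by
    apply mul_nonneg <;> linarith
  have hDe : Complex.normSq (1-x) = (1 - x.re) * (1 - x.re) + x.im * x.im := by
    rw [Complex.normSq_apply]; simp
  simp only [Complex.sub_re, Complex.sub_im, Complex.one_re, Complex.one_im]
  nlinarith [h1, key, hDe]

lemma abs_mobius_le (x : ℂ) (s : ℝ) (hx : Complex.abs x ≤ s) (hs : s < 1) :
    Complex.abs (x/(1-x)) ≤ s/(1-s) := by
  have hs0 : 0 ≤ s := le_trans (Complex.abs.nonneg x) hx
  have h1 : 1 - s ≤ Complex.abs (1 - x) := by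
    have hns := norm_sub_norm_le (1:ℂ) x
    rw [norm_one, Complex.norm_eq_abs, Complex.norm_eq_abs] at hns
    linarith
  rw [map_div₀]
  apply div_le_div₀ hs0 hx (by linarith) h1

lemma align_unit (A B : ℂ) :
    ∃ e : ℂ, Complex.abs e = 1 ∧ Complex.abs (A + e * B) = Complex.abs A + Complex.abs B := by
  rcases eq_or_ne B 0 with rfl | hB
  · exact ⟨1, by simp⟩
  rcases eq_or_ne A 0 with rfl | hA
  · refine ⟨(starRingEnd ℂ) B / (Complex.abs B : ℂ), ?_, ?_⟩
    · rw [map_div₀, Complex.abs_conj, Complex.abs_ofReal,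
        abs_of_nonneg (Complex.abs.nonneg B), div_self (Complex.abs.ne_zero hB)]
    · have : (starRingEnd ℂ) B / (Complex.abs B : ℂ) * B = ((Complex.abs B : ℝ) : ℂ) := by
        rw [div_mul_eq_mul_div, mul_comm, Complex.mul_conj]
        rw [Complex.normSq_eq_abs]
        have hB' : (Complex.abs B : ℂ) ≠ 0 := by
          simp [Complex.abs.ne_zero hB]
        field_simp [sq]; exact Complex.ofReal_pow _ _
      rw [zero_add, this]
      simp [Complex.abs_ofReal, abs_of_nonneg (Complex.abs.nonneg B)]
  · refine ⟨A / (Complex.abs A : ℂ) * ((starRingEnd ℂ) B / (Complex.abs B : ℂ)), ?_, ?_⟩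
    · rw [map_mul, map_div₀, map_div₀, Complex.abs_conj, Complex.abs_ofReal,
        Complex.abs_ofReal, abs_of_nonneg (Complex.abs.nonneg B),
        abs_of_nonneg (Complex.abs.nonneg A), div_self (Complex.abs.ne_zero hA),
        div_self (Complex.abs.ne_zero hB), one_mul]
    · have hBC : ((starRingEnd ℂ) B / (Complex.abs B : ℂ)) * B = ((Complex.abs B : ℝ) : ℂ) := by
        rw [div_mul_eq_mul_div, mul_comm, Complex.mul_conj, Complex.normSq_eq_abs]
        have hB' : (Complex.abs B : ℂ) ≠ 0 := by simp [Complex.abs.ne_zero hB]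
        field_simp [sq]; exact Complex.ofReal_pow _ _
      have hA' : (Complex.abs A : ℂ) ≠ 0 := by simp [Complex.abs.ne_zero hA]
      have : A + A / (Complex.abs A : ℂ) * ((starRingEnd ℂ) B / (Complex.abs B : ℂ)) * B
          = A * (1 + (Complex.abs B : ℂ) / (Complex.abs A : ℂ)) := by
        rw [mul_assoc, hBC]; field_simp
      rw [this, map_mul]
      have : Complex.abs (1 + (Complex.abs B : ℂ) / (Complex.abs A : ℂ))
          = 1 + Complex.abs B / Complex.abs A := by
        rw [show (1 + (Complex.abs B : ℂ) / (Complex.abs A : ℂ))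
            = (((1 + Complex.abs B / Complex.abs A : ℝ)) : ℂ) by push_cast; ring]
        rw [Complex.abs_ofReal, abs_of_nonneg]
        positivity
      rw [this]
      field_simp [Complex.abs.ne_zero hA]

lemma align_real (B : ℂ) :
    ∃ c : ℂ, Complex.abs c = 1 ∧ c * B = ((Complex.abs B : ℝ) : ℂ) := by
  rcases eq_or_ne B 0 with rfl | hB
  · exact ⟨1, by simp⟩
  · refine ⟨(starRingEnd ℂ) B / (Complex.abs B : ℂ), ?_, ?_⟩
    · rw [map_div₀, Complex.abs_conj, Complex.abs_ofReal,
        abs_of_nonneg (Complex.abs.nonneg B), div_self (Complex.abs.ne_zero hB)]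
    · rw [div_mul_eq_mul_div, mul_comm, Complex.mul_conj, Complex.normSq_eq_abs]
      have hB' : (Complex.abs B : ℂ) ≠ 0 := by simp [Complex.abs.ne_zero hB]
      field_simp [sq]; exact Complex.ofReal_pow _ _

lemma hasDerivAt_comp_line {F : ℂ → ℂ} {w : ℂ} {t : ℝ} (hF : DifferentiableAt ℂ F ((t:ℂ)*w)) :
    HasDerivAt (fun t : ℝ => F ((t:ℂ)*w)) (deriv F ((t:ℂ)*w) * w) t := by
  have h3 : HasDerivAt (fun v : ℂ => v * w) w (t:ℂ) := by
    simpa using (hasDerivAt_id ((t:ℂ))).mul_const w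
  have h1 : HasDerivAt (fun v : ℂ => F (v*w)) (deriv F ((t:ℂ)*w) * w) (t:ℂ) :=
    (hF.hasDerivAt.comp (t:ℂ) h3 : HasDerivAt (F ∘ fun v : ℂ => v * w) _ _)
  exact h1.comp_ofReal

lemma bound_at_zero {q : ℂ → ℂ} (hq : ContinuousAt q 0) {K : ℝ}
    (hb : ∀ v : ℂ, v ∈ Metric.ball (0:ℂ) 1 → v ≠ 0 →
      Complex.abs (q v) ≤ K/(1 - Complex.abs v)) :
    Complex.abs (q 0) ≤ K := by
  set x : ℕ → ℝ := fun n => 1/((n:ℝ)+1)/2 with hxdef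
  have hx0 : Tendsto x atTop (nhds 0) := by
    have h1 := tendsto_one_div_add_atTop_nhds_zero_nat (𝕜 := ℝ)
    have := h1.div_const (2:ℝ)
    simpa [hxdef] using this
  have hxpos : ∀ n, 0 < x n := by
    intro n; simp only [hxdef]; positivity
  have hxle : ∀ n, x n ≤ 1/2 := by
    intro n
    simp only [hxdef]
    have h1 : (1:ℝ)/((n:ℝ)+1) ≤ 1 := by
      rw [div_le_one (by positivity)]; simp
    linarith
  set v : ℕ → ℂ := fun n => ((x n : ℝ) : ℂ) with hvdef
  have hv : Tendsto v atTop (nhds (0:ℂ)) := by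
    have := (Complex.continuous_ofReal.tendsto 0).comp hx0
    exact this
  have habsv : ∀ n, Complex.abs (v n) = x n := by
    intro n; simp [hvdef, Complex.abs_ofReal, abs_of_pos (hxpos n)]
  have hL : Tendsto (fun n => Complex.abs (q (v n))) atTop (nhds (Complex.abs (q 0))) :=
    (Complex.continuous_abs.tendsto _).comp (hq.tendsto.comp hv)
  have hR : Tendsto (fun n => K/(1 - Complex.abs (v n))) atTop (nhds K) := by
    have h2 : Tendsto (fun n => 1 - Complex.abs (v n)) atTop (nhds 1) := by
      have h3 : Tendsto (fun n => Complex.abs (v n)) atTop (nhds 0) := by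
        simp only [habsv]; exact hx0
      have := h3.const_sub 1
      simpa using this
    have := (tendsto_const_nhds (x := K) (f := atTop (α := ℕ))).div h2 (by norm_num)
    rw [div_one] at this
    exact this
  refine le_of_tendsto_of_tendsto' hL hR ?_
  intro n
  apply hb
  · rw [mem_ball_zero_iff, Complex.norm_eq_abs, habsv]
    linarith [hxle n]
  · simp only [hvdef]
    exact_mod_cast ne_of_gt (hxpos n)

lemma core_estimate (M : ℝ) (hM : 0 < M) (h g : ℂ → ℂ)
    (hh : AnalyticOnNhd ℂ (deriv (deriv h)) (Metric.ball 0 1))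
    (hg : AnalyticOnNhd ℂ (deriv (deriv g)) (Metric.ball 0 1))
    (hRe : ∀ z ∈ Metric.ball (0:ℂ) 1,
      -M + Complex.abs (z * deriv (deriv g) z) < (z * deriv (deriv h) z).re)
    (e : ℂ) (he : Complex.abs e = 1) (u : ℂ) (hu : u ∈ Metric.ball (0:ℂ) 1) :
    -(2*M*Complex.abs u/(1+Complex.abs u))
        ≤ (u * deriv (deriv h) u + e * (u * deriv (deriv g) u)).re
      ∧ Complex.abs (u * deriv (deriv h) u + e * (u * deriv (deriv g) u))
        ≤ 2*M*Complex.abs u/(1-Complex.abs u) := by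
  have hM2 : (0:ℝ) < 2*M := by linarith
  set q : ℂ → ℂ := fun v => v * deriv (deriv h) v + e * (v * deriv (deriv g) v) with hq
  set W : ℂ → ℂ := fun v => ((((2*M)⁻¹ : ℝ)) : ℂ) * q v with hW
  have hqan : AnalyticOnNhd ℂ q (Metric.ball 0 1) :=
    (analyticOnNhd_id.mul hh).add (analyticOnNhd_const.mul (analyticOnNhd_id.mul hg))
  have hWdiff : DifferentiableOn ℂ W (Metric.ball 0 1) :=
    (analyticOnNhd_const.mul hqan).differentiableOn
  have hqre : ∀ v ∈ Metric.ball (0:ℂ) 1, -M < (q v).re := by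
    intro v hv
    have h1 := hRe v hv
    have h2 : -(Complex.abs (e * (v * deriv (deriv g) v))) ≤ (e * (v * deriv (deriv g) v)).re := by
      have := Complex.abs_re_le_abs (e * (v * deriv (deriv g) v))
      have := neg_abs_le (e * (v * deriv (deriv g) v)).re
      linarith
    rw [map_mul, he, one_mul] at h2
    have : (q v).re = (v * deriv (deriv h) v).re + (e * (v * deriv (deriv g) v)).re := by
      simp [hq]
    rw [this]
    linarith
  have hWre : ∀ v ∈ Metric.ball (0:ℂ) 1, -(1/2) < (W v).re := by
    intro v hv
    have : (W v).re = (2*M)⁻¹ * (q v).re := by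
      simp [hW, Complex.re_ofReal_mul]
    rw [this]
    have := hqre v hv
    rw [show -(1/2 : ℝ) = (2*M)⁻¹ * (-M) by field_simp]
    exact (mul_lt_mul_iff_right₀ (by positivity)).mpr this
  have hne : ∀ v ∈ Metric.ball (0:ℂ) 1, (1 : ℂ) + W v ≠ 0 := by
    intro v hv hc
    have := congrArg Complex.re hc
    simp only [Complex.add_re, Complex.one_re, Complex.zero_re] at this
    have := hWre v hv
    linarith
  set ω : ℂ → ℂ := fun v => W v / (1 + W v) with hω
  have hωdiff : DifferentiableOn ℂ ω (Metric.ball 0 1) :=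
    hWdiff.div ((differentiableOn_const 1).add hWdiff) hne
  have habslt : ∀ v ∈ Metric.ball (0:ℂ) 1, Complex.abs (W v) < Complex.abs (1 + W v) := by
    intro v hv
    have hre := hWre v hv
    have e1 : (Complex.abs (W v))^2 = Complex.normSq (W v) := Complex.sq_abs _
    have e2 : (Complex.abs (1 + W v))^2 = Complex.normSq (1 + W v) := Complex.sq_abs _
    have e3 : Complex.normSq (1 + W v) = 1 + 2*(W v).re + Complex.normSq (W v) := by
      simp [Complex.normSq_apply]; ring
    nlinarith [Complex.abs.nonneg (W v), Complex.abs.nonneg (1 + W v)]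
  have hmaps : Set.MapsTo ω (Metric.ball 0 1) (Metric.ball 0 1) := by
    intro v hv
    rw [mem_ball_zero_iff]
    rw [Complex.norm_eq_abs, hω]
    simp only
    rw [map_div₀, div_lt_one (lt_of_le_of_lt (Complex.abs.nonneg _) (habslt v hv))]
    exact habslt v hv
  have hω0 : ω 0 = 0 := by simp [hω, hW, hq]
  have hschwarz : Complex.abs (ω u) ≤ Complex.abs u :=
    Complex.norm_le_norm_of_mapsTo_ball_self hωdiff (hmaps.mono_right ball_subset_closedBall) hω0 (mem_ball_zero_iff.mp hu)
  have hurec : W u = ω u / (1 - ω u) := by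
    have hd := hne u hu
    have hωu : ω u = W u / (1 + W u) := rfl
    have h1 : (1:ℂ) - ω u = 1/(1 + W u) := by
      rw [hωu]
      field_simp
      ring
    rw [h1, one_div, div_inv_eq_mul, hωu, div_mul_cancel₀ _ hd]
  have hres := re_mobius_ge (ω u) (Complex.abs u) hschwarz (mem_ball_zero_iff.mp hu)
  have habs := abs_mobius_le (ω u) (Complex.abs u) hschwarz (mem_ball_zero_iff.mp hu)
  rw [← hurec] at hres habs
  have hqW : ∀ v, q v = ((2*M : ℝ) : ℂ) * W v := by
    intro v
    rw [hW]
    simp only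
    rw [← mul_assoc, ← Complex.ofReal_mul]
    rw [mul_inv_cancel₀ (ne_of_gt hM2)]
    simp
  constructor
  · have : (q u).re = (2*M) * (W u).re := by
      rw [hqW u, Complex.re_ofReal_mul]
    show -(2*M*Complex.abs u/(1+Complex.abs u)) ≤ (q u).re
    rw [this]
    calc -(2*M*Complex.abs u/(1+Complex.abs u))
        = (2*M) * (-(Complex.abs u)/(1+Complex.abs u)) := by ring
      _ ≤ (2*M) * (W u).re := by
          apply mul_le_mul_of_nonneg_left _ (le_of_lt hM2)
          rw [neg_div]
          rw [neg_div] at hres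
          exact hres
  · have : Complex.abs (q u) = (2*M) * Complex.abs (W u) := by
      rw [hqW u, map_mul, Complex.abs_ofReal, abs_of_pos hM2]
    show Complex.abs (q u) ≤ 2*M*Complex.abs u/(1-Complex.abs u)
    rw [this]
    calc (2*M) * Complex.abs (W u) ≤ (2*M) * (Complex.abs u/(1-Complex.abs u)) :=
          mul_le_mul_of_nonneg_left habs (le_of_lt hM2)
      _ = 2*M*Complex.abs u/(1-Complex.abs u) := by ring

lemma second_deriv_bound (M : ℝ) (hM : 0 < M) (h g : ℂ → ℂ)
    (hh : AnalyticOnNhd ℂ (deriv (deriv h)) (Metric.ball 0 1))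
    (hg : AnalyticOnNhd ℂ (deriv (deriv g)) (Metric.ball 0 1))
    (hRe : ∀ z ∈ Metric.ball (0:ℂ) 1,
      -M + Complex.abs (z * deriv (deriv g) z) < (z * deriv (deriv h) z).re)
    (e : ℂ) (he : Complex.abs e = 1) (u : ℂ) (hu : u ∈ Metric.ball (0:ℂ) 1) :
    Complex.abs (deriv (deriv h) u + e * deriv (deriv g) u) ≤ 2*M/(1-Complex.abs u) := by
  set q : ℂ → ℂ := fun v => deriv (deriv h) v + e * deriv (deriv g) v with hqdef
  have key : ∀ v ∈ Metric.ball (0:ℂ) 1, v ≠ 0 →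
      Complex.abs (q v) ≤ (2*M)/(1 - Complex.abs v) := by
    intro v hv hv0
    have hc := (core_estimate M hM h g hh hg hRe e he v hv).2
    have hrw : v * deriv (deriv h) v + e * (v * deriv (deriv g) v) = v * q v := by
      simp only [hqdef]; ring
    rw [hrw, map_mul] at hc
    have hvpos : 0 < Complex.abs v := Complex.abs.pos hv0
    have hv1 : Complex.abs v < 1 := mem_ball_zero_iff.mp hv
    have hrw2 : 2*M*Complex.abs v/(1-Complex.abs v)
        = Complex.abs v * ((2*M)/(1-Complex.abs v)) := by ring
    rw [hrw2] at hc
    exact le_of_mul_le_mul_left hc hvpos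
  rcases eq_or_ne u 0 with rfl | hu0
  · have hcont : ContinuousAt q 0 := by
      have h1 : (0:ℂ) ∈ Metric.ball (0:ℂ) 1 := mem_ball_self one_pos
      exact ((hh 0 h1).continuousAt).add (continuousAt_const.mul (hg 0 h1).continuousAt)
    have := bound_at_zero hcont key
    simpa using this
  · exact key u hu hu0

lemma deriv_dist (M : ℝ) (hM : 0 < M) (h g : ℂ → ℂ)
    (hh' : AnalyticOnNhd ℂ (deriv h) (Metric.ball 0 1))
    (hg' : AnalyticOnNhd ℂ (deriv g) (Metric.ball 0 1))
    (hh : AnalyticOnNhd ℂ (deriv (deriv h)) (Metric.ball 0 1))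
    (hg : AnalyticOnNhd ℂ (deriv (deriv g)) (Metric.ball 0 1))
    (hRe : ∀ z ∈ Metric.ball (0:ℂ) 1,
      -M + Complex.abs (z * deriv (deriv g) z) < (z * deriv (deriv h) z).re)
    (hd1 : deriv h 0 = 1) (hd2 : deriv g 0 = 0)
    (e : ℂ) (he : Complex.abs e = 1) (w : ℂ) (hw : w ∈ Metric.ball (0:ℂ) 1) :
    Complex.abs (deriv h w + e * deriv g w - 1) ≤ -(2*M*Real.log (1 - Complex.abs w)) := by
  set s := Complex.abs w with hsdef
  have hs1 : s < 1 := mem_ball_zero_iff.mp hw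
  have hs0 : 0 ≤ s := Complex.abs.nonneg w
  have hmemt : ∀ t ∈ Icc (0:ℝ) 1, ((t:ℂ)*w) ∈ Metric.ball (0:ℂ) 1 := by
    intro t ht
    rw [mem_ball_zero_iff, Complex.norm_eq_abs, map_mul, Complex.abs_ofReal,
      abs_of_nonneg ht.1]
    calc t * s ≤ 1 * s := by
          apply mul_le_mul_of_nonneg_right ht.2 hs0
      _ = s := one_mul s
      _ < 1 := hs1
  have hpos : ∀ t ∈ Icc (0:ℝ) 1, 0 < 1 - t*s := by
    intro t ht
    have h1 : t * s ≤ 1 * s := mul_le_mul_of_nonneg_right ht.2 hs0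
    nlinarith
  set f : ℝ → ℂ := fun t => deriv h ((t:ℂ)*w) + e * deriv g ((t:ℂ)*w) - 1 with hfdef
  set f' : ℝ → ℂ := fun t =>
    (deriv (deriv h) ((t:ℂ)*w) + e * deriv (deriv g) ((t:ℂ)*w)) * w with hf'def
  set B : ℝ → ℝ := fun t => -(2*M*Real.log (1-t*s)) with hBdef
  set B' : ℝ → ℝ := fun t => 2*M*s/(1-t*s) with hB'def
  have hfd : ∀ t ∈ Icc (0:ℝ) 1, HasDerivAt f (f' t) t := by
    intro t ht
    have hmem := hmemt t ht
    have h1 : HasDerivAt (fun t : ℝ => deriv h ((t:ℂ)*w))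
        (deriv (deriv h) ((t:ℂ)*w) * w) t :=
      hasDerivAt_comp_line ((hh' _ hmem).differentiableAt)
    have h2 : HasDerivAt (fun t : ℝ => deriv g ((t:ℂ)*w))
        (deriv (deriv g) ((t:ℂ)*w) * w) t :=
      hasDerivAt_comp_line ((hg' _ hmem).differentiableAt)
    have h3 := (h1.add (h2.const_mul e)).sub_const 1
    have heq : deriv (deriv h) ((t:ℂ)*w) * w + e * (deriv (deriv g) ((t:ℂ)*w) * w)
        = f' t := by simp only [hf'def]; ring
    rw [heq] at h3
    exact h3
  have hBd : ∀ t ∈ Icc (0:ℝ) 1, HasDerivAt B (B' t) t := by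
    intro t ht
    have hp := hpos t ht
    have hi : HasDerivAt (fun t : ℝ => 1 - t*s) (-s) t := by
      simpa using ((hasDerivAt_id t).mul_const s).const_sub 1
    have hlog : HasDerivAt (fun t : ℝ => Real.log (1 - t*s)) ((1-t*s)⁻¹ * (-s)) t :=
      by have := (Real.hasDerivAt_log (ne_of_gt hp)).comp t hi; exact this
    have h4 := (hlog.const_mul (2*M)).neg
    have heq : -(2*M * ((1-t*s)⁻¹ * (-s))) = B' t := by
      simp only [hB'def]; field_simp
    rw [heq] at h4
    exact h4
  have key := image_norm_le_of_norm_deriv_right_le_deriv_boundary'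
    (f := f) (f' := f') (B := B) (B' := B') (a := 0) (b := 1)
    (fun t ht => (hfd t ht).continuousAt.continuousWithinAt)
    (fun t ht => (hfd t (Ico_subset_Icc_self ht)).hasDerivWithinAt)
    (by simp [hfdef, hBdef, hd1, hd2])
    (fun t ht => (hBd t ht).continuousAt.continuousWithinAt)
    (fun t ht => (hBd t (Ico_subset_Icc_self ht)).hasDerivWithinAt)
    ?_ (right_mem_Icc.mpr zero_le_one)
  · have : f 1 = deriv h w + e * deriv g w - 1 := by
      simp only [hfdef, Complex.ofReal_one, one_mul]
    rw [this] at key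
    rw [Complex.norm_eq_abs] at key
    simpa [hBdef] using key
  · intro t ht
    have htI : t ∈ Icc (0:ℝ) 1 := Ico_subset_Icc_self ht
    have hq := second_deriv_bound M hM h g hh hg hRe e he _ (hmemt t htI)
    have habs : Complex.abs ((t:ℂ)*w) = t * s := by
      rw [map_mul, Complex.abs_ofReal, abs_of_nonneg ht.1]
    rw [habs] at hq
    have : ‖f' t‖ = Complex.abs (deriv (deriv h) ((t:ℂ)*w)
        + e * deriv (deriv g) ((t:ℂ)*w)) * s := by
      rw [Complex.norm_eq_abs, hf'def]
      simp only
      rw [map_mul]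
    rw [this]
    have hB'eq : B' t = (2*M/(1-t*s)) * s := by simp only [hB'def]; ring
    rw [hB'eq]
    exact mul_le_mul_of_nonneg_right hq hs0

lemma growth_upper (M : ℝ) (hM : 0 < M) (h g : ℂ → ℂ)
    (hha : AnalyticOnNhd ℂ h (Metric.ball 0 1))
    (hga : AnalyticOnNhd ℂ g (Metric.ball 0 1))
    (hh' : AnalyticOnNhd ℂ (deriv h) (Metric.ball 0 1))
    (hg' : AnalyticOnNhd ℂ (deriv g) (Metric.ball 0 1))
    (hh : AnalyticOnNhd ℂ (deriv (deriv h)) (Metric.ball 0 1))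
    (hg : AnalyticOnNhd ℂ (deriv (deriv g)) (Metric.ball 0 1))
    (hRe : ∀ z ∈ Metric.ball (0:ℂ) 1,
      -M + Complex.abs (z * deriv (deriv g) z) < (z * deriv (deriv h) z).re)
    (hh0 : h 0 = 0) (hg0 : g 0 = 0) (hd1 : deriv h 0 = 1) (hd2 : deriv g 0 = 0)
    (e : ℂ) (he : Complex.abs e = 1) (z : ℂ) (hz : z ∈ Metric.ball (0:ℂ) 1) :
    Complex.abs (h z + e * g z - z)
      ≤ 2*M*((1 - Complex.abs z)*Real.log (1 - Complex.abs z) + Complex.abs z) := by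
  set s := Complex.abs z with hsdef
  have hs1 : s < 1 := mem_ball_zero_iff.mp hz
  have hs0 : 0 ≤ s := Complex.abs.nonneg z
  have hmemt : ∀ t ∈ Icc (0:ℝ) 1, ((t:ℂ)*z) ∈ Metric.ball (0:ℂ) 1 := by
    intro t ht
    rw [mem_ball_zero_iff, Complex.norm_eq_abs, map_mul, Complex.abs_ofReal,
      abs_of_nonneg ht.1]
    calc t * s ≤ 1 * s := mul_le_mul_of_nonneg_right ht.2 hs0
      _ = s := one_mul s
      _ < 1 := hs1
  have hpos : ∀ t ∈ Icc (0:ℝ) 1, 0 < 1 - t*s := by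
    intro t ht
    have h1 : t * s ≤ 1 * s := mul_le_mul_of_nonneg_right ht.2 hs0
    nlinarith
  set f : ℝ → ℂ := fun t => h ((t:ℂ)*z) + e * g ((t:ℂ)*z) - (t:ℂ)*z with hfdef
  set f' : ℝ → ℂ := fun t =>
    (deriv h ((t:ℂ)*z) + e * deriv g ((t:ℂ)*z) - 1) * z with hf'def
  set B : ℝ → ℝ := fun t => 2*M*((1-t*s)*Real.log (1-t*s) + t*s) with hBdef
  set B' : ℝ → ℝ := fun t => -(2*M*Real.log (1-t*s)) * s with hB'def
  have hfd : ∀ t ∈ Icc (0:ℝ) 1, HasDerivAt f (f' t) t := by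
    intro t ht
    have hmem := hmemt t ht
    have h1 : HasDerivAt (fun t : ℝ => h ((t:ℂ)*z)) (deriv h ((t:ℂ)*z) * z) t :=
      hasDerivAt_comp_line ((hha _ hmem).differentiableAt)
    have h2 : HasDerivAt (fun t : ℝ => g ((t:ℂ)*z)) (deriv g ((t:ℂ)*z) * z) t :=
      hasDerivAt_comp_line ((hga _ hmem).differentiableAt)
    have h4 : HasDerivAt (fun t : ℝ => (t:ℂ)*z) z t := by
      have := hasDerivAt_comp_line (F := id) (w := z) (t := t) differentiableAt_id
      simpa [deriv_id] using this
    have h3 := (h1.add (h2.const_mul e)).sub h4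
    have heq : deriv h ((t:ℂ)*z) * z + e * (deriv g ((t:ℂ)*z) * z) - z = f' t := by
      simp only [hf'def]; ring
    rw [heq] at h3
    exact h3
  have hBd : ∀ t ∈ Icc (0:ℝ) 1, HasDerivAt B (B' t) t := by
    intro t ht
    have hp := hpos t ht
    have hi : HasDerivAt (fun t : ℝ => 1 - t*s) (-s) t := by
      simpa using ((hasDerivAt_id t).mul_const s).const_sub 1
    have hlog : HasDerivAt (fun t : ℝ => Real.log (1 - t*s)) ((1-t*s)⁻¹ * (-s)) t :=
      by have := (Real.hasDerivAt_log (ne_of_gt hp)).comp t hi; exact this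
    have hprod := hi.mul hlog
    have hts : HasDerivAt (fun t : ℝ => t*s) s t := by
      simpa using (hasDerivAt_id t).mul_const s
    have h4 := ((hprod.add hts).const_mul (2*M))
    have heq : 2*M * ((-s) * Real.log (1-t*s) + (1-t*s) * ((1-t*s)⁻¹ * (-s)) + s)
        = B' t := by
      simp only [hB'def]
      rw [mul_inv_cancel_left₀ (ne_of_gt hp)]
      ring
    rw [heq] at h4
    exact h4
  have key := image_norm_le_of_norm_deriv_right_le_deriv_boundary'
    (f := f) (f' := f') (B := B) (B' := B') (a := 0) (b := 1)
    (fun t ht => (hfd t ht).continuousAt.continuousWithinAt)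
    (fun t ht => (hfd t (Ico_subset_Icc_self ht)).hasDerivWithinAt)
    (by simp [hfdef, hBdef, hh0, hg0])
    (fun t ht => (hBd t ht).continuousAt.continuousWithinAt)
    (fun t ht => (hBd t (Ico_subset_Icc_self ht)).hasDerivWithinAt)
    ?_ (right_mem_Icc.mpr zero_le_one)
  · have h5 : f 1 = h z + e * g z - z := by
      simp only [hfdef, Complex.ofReal_one, one_mul]
    rw [h5, Complex.norm_eq_abs] at key
    simpa [hBdef] using key
  · intro t ht
    have htI : t ∈ Icc (0:ℝ) 1 := Ico_subset_Icc_self ht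
    have hq := deriv_dist M hM h g hh' hg' hh hg hRe hd1 hd2 e he _ (hmemt t htI)
    have habs : Complex.abs ((t:ℂ)*z) = t * s := by
      rw [map_mul, Complex.abs_ofReal, abs_of_nonneg ht.1]
    rw [habs] at hq
    have h6 : ‖f' t‖ = Complex.abs (deriv h ((t:ℂ)*z) + e * deriv g ((t:ℂ)*z) - 1) * s := by
      rw [Complex.norm_eq_abs, hf'def]
      simp only
      rw [map_mul]
    rw [h6]
    have hB'eq : B' t = -(2*M*Real.log (1-t*s)) * s := by simp only [hB'def]
    rw [hB'eq]
    exact mul_le_mul_of_nonneg_right hq hs0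

lemma hasDerivAt_re {Φ : ℝ → ℂ} {Φ' : ℂ} {t : ℝ} (hΦ : HasDerivAt Φ Φ' t) :
    HasDerivAt (fun t => (Φ t).re) Φ'.re t := by
  have := (Complex.reCLM.hasFDerivAt (x := Φ t)).comp_hasDerivAt t hΦ
  exact this

lemma deriv_lower (M : ℝ) (hM : 0 < M) (h g : ℂ → ℂ)
    (hh' : AnalyticOnNhd ℂ (deriv h) (Metric.ball 0 1))
    (hg' : AnalyticOnNhd ℂ (deriv g) (Metric.ball 0 1))
    (hh : AnalyticOnNhd ℂ (deriv (deriv h)) (Metric.ball 0 1))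
    (hg : AnalyticOnNhd ℂ (deriv (deriv g)) (Metric.ball 0 1))
    (hRe : ∀ z ∈ Metric.ball (0:ℂ) 1,
      -M + Complex.abs (z * deriv (deriv g) z) < (z * deriv (deriv h) z).re)
    (hd1 : deriv h 0 = 1) (hd2 : deriv g 0 = 0)
    (w : ℂ) (hw : w ∈ Metric.ball (0:ℂ) 1) :
    1 - 2*M*Real.log (1 + Complex.abs w)
      ≤ (deriv h w).re - Complex.abs (deriv g w) := by
  set s := Complex.abs w with hsdef
  have hs1 : s < 1 := mem_ball_zero_iff.mp hw
  have hs0 : 0 ≤ s := Complex.abs.nonneg w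
  obtain ⟨c, hc1, hc2⟩ := align_real (deriv g w)
  have hmemt : ∀ t ∈ Icc (0:ℝ) 1, ((t:ℂ)*w) ∈ Metric.ball (0:ℂ) 1 := by
    intro t ht
    rw [mem_ball_zero_iff, Complex.norm_eq_abs, map_mul, Complex.abs_ofReal,
      abs_of_nonneg ht.1]
    calc t * s ≤ 1 * s := mul_le_mul_of_nonneg_right ht.2 hs0
      _ = s := one_mul s
      _ < 1 := hs1
  have hpos : ∀ t ∈ Icc (0:ℝ) 1, 0 < 1 + t*s := by
    intro t ht
    nlinarith [mul_nonneg ht.1 hs0]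
  set χ : ℝ → ℝ := fun t =>
    (deriv h ((t:ℂ)*w) - c * deriv g ((t:ℂ)*w)).re + 2*M*Real.log (1+t*s) with hχdef
  set χ' : ℝ → ℝ := fun t =>
    ((deriv (deriv h) ((t:ℂ)*w) - c * deriv (deriv g) ((t:ℂ)*w)) * w).re
      + 2*M*s/(1+t*s) with hχ'def
  have hχd : ∀ t ∈ Icc (0:ℝ) 1, HasDerivAt χ (χ' t) t := by
    intro t ht
    have hmem := hmemt t ht
    have hp := hpos t ht
    have h1 : HasDerivAt (fun t : ℝ => deriv h ((t:ℂ)*w))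
        (deriv (deriv h) ((t:ℂ)*w) * w) t :=
      hasDerivAt_comp_line ((hh' _ hmem).differentiableAt)
    have h2 : HasDerivAt (fun t : ℝ => deriv g ((t:ℂ)*w))
        (deriv (deriv g) ((t:ℂ)*w) * w) t :=
      hasDerivAt_comp_line ((hg' _ hmem).differentiableAt)
    have h3 := hasDerivAt_re (h1.sub (h2.const_mul c))
    have hi : HasDerivAt (fun t : ℝ => 1 + t*s) s t := by
      simpa using ((hasDerivAt_id t).mul_const s).const_add 1
    have hlog : HasDerivAt (fun t : ℝ => Real.log (1 + t*s)) ((1+t*s)⁻¹ * s) t :=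
      by have := (Real.hasDerivAt_log (ne_of_gt hp)).comp t hi; exact this
    have h4 := h3.add (hlog.const_mul (2*M))
    have heq : (deriv (deriv h) ((t:ℂ)*w) * w - c * (deriv (deriv g) ((t:ℂ)*w) * w)).re
        + 2*M * ((1+t*s)⁻¹ * s) = χ' t := by
      simp only [hχ'def]
      have : deriv (deriv h) ((t:ℂ)*w) * w - c * (deriv (deriv g) ((t:ℂ)*w) * w)
          = (deriv (deriv h) ((t:ℂ)*w) - c * deriv (deriv g) ((t:ℂ)*w)) * w := by ring
      rw [this]
      field_simp
    rw [heq] at h4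
    exact h4
  have hmono : MonotoneOn χ (Icc (0:ℝ) 1) := by
    apply monotoneOn_of_deriv_nonneg (convex_Icc 0 1)
    · exact fun t ht => (hχd t ht).continuousAt.continuousWithinAt
    · intro t ht
      rw [interior_Icc] at ht
      exact ((hχd t (Ioo_subset_Icc_self ht)).differentiableAt).differentiableWithinAt
    · intro t ht
      rw [interior_Icc] at ht
      rw [(hχd t (Ioo_subset_Icc_self ht)).deriv]
      -- show 0 ≤ χ' t
      have ht0 : 0 < t := ht.1
      have htI : t ∈ Icc (0:ℝ) 1 := Ioo_subset_Icc_self ht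
      have hmem := hmemt t htI
      set u := (t:ℂ)*w with hudef
      have habsu : Complex.abs u = t * s := by
        rw [hudef, map_mul, Complex.abs_ofReal, abs_of_nonneg ht0.le]
      -- choose unit e aligning u * g'' u to -abs
      obtain ⟨c₂, hc₂1, hc₂2⟩ := align_real (u * deriv (deriv g) u)
      have he : Complex.abs (-c₂) = 1 := by rwa [Complex.abs.map_neg]
      have hcore := (core_estimate M hM h g hh hg hRe (-c₂) he u hmem).1
      have hrw : (u * deriv (deriv h) u + -c₂ * (u * deriv (deriv g) u)).re
          = (u * deriv (deriv h) u).re - Complex.abs (u * deriv (deriv g) u) := by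
        have : -c₂ * (u * deriv (deriv g) u) = -(c₂ * (u * deriv (deriv g) u)) := by ring
        rw [this, hc₂2]
        simp only [Complex.add_re, Complex.neg_re, Complex.ofReal_re]
        ring
      rw [hrw, habsu] at hcore
      -- compare Re (c * u g'' u) ≤ abs (u g'' u)
      have hre_le : (c * (u * deriv (deriv g) u)).re ≤ Complex.abs (u * deriv (deriv g) u) := by
        have h5 := Complex.re_le_abs (c * (u * deriv (deriv g) u))
        rwa [map_mul, hc1, one_mul] at h5
      -- t * χ' t ≥ 0
      have hkey : 0 ≤ t * χ' t := by
        have hexp : t * ((deriv (deriv h) u - c * deriv (deriv g) u) * w).re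
            = (u * deriv (deriv h) u).re - (c * (u * deriv (deriv g) u)).re := by
          have : ((t:ℝ)) * ((deriv (deriv h) u - c * deriv (deriv g) u) * w).re
              = (((t:ℂ)) * ((deriv (deriv h) u - c * deriv (deriv g) u) * w)).re := by
            rw [Complex.re_ofReal_mul]
          rw [this]
          have : ((t:ℂ)) * ((deriv (deriv h) u - c * deriv (deriv g) u) * w)
              = u * deriv (deriv h) u - c * (u * deriv (deriv g) u) := by
            rw [hudef]; ring
          rw [this, Complex.sub_re]
        simp only [hχ'def]
        rw [mul_add, hexp]
        have hp := hpos t htI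
        have hfrac : t * (2*M*s/(1+t*s)) = 2*M*(t*s)/(1+t*s) := by ring
        rw [hfrac]
        have := sub_nonneg.mpr hre_le
        linarith
      exact (mul_nonneg_iff_of_pos_left ht0).mp hkey
  have hineq := hmono (left_mem_Icc.mpr zero_le_one) (right_mem_Icc.mpr zero_le_one) zero_le_one
  have hχ0 : χ 0 = 1 := by
    simp [hχdef, hd1, hd2]
  have hχ1 : χ 1 = (deriv h w).re - Complex.abs (deriv g w) + 2*M*Real.log (1+s) := by
    simp only [hχdef, Complex.ofReal_one, one_mul, Complex.sub_re]
    rw [hc2]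
    simp [Complex.ofReal_re]
  rw [hχ0, hχ1] at hineq
  linarith

lemma neg_abs_le_re (ξ : ℂ) : -(Complex.abs ξ) ≤ ξ.re := by
  have h1 := Complex.abs_re_le_abs ξ
  have h2 := neg_abs_le ξ.re
  linarith

lemma growth_lower (M : ℝ) (hM : 0 < M) (h g : ℂ → ℂ)
    (hha : AnalyticOnNhd ℂ h (Metric.ball 0 1))
    (hga : AnalyticOnNhd ℂ g (Metric.ball 0 1))
    (hh' : AnalyticOnNhd ℂ (deriv h) (Metric.ball 0 1))
    (hg' : AnalyticOnNhd ℂ (deriv g) (Metric.ball 0 1))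
    (hh : AnalyticOnNhd ℂ (deriv (deriv h)) (Metric.ball 0 1))
    (hg : AnalyticOnNhd ℂ (deriv (deriv g)) (Metric.ball 0 1))
    (hRe : ∀ z ∈ Metric.ball (0:ℂ) 1,
      -M + Complex.abs (z * deriv (deriv g) z) < (z * deriv (deriv h) z).re)
    (hh0 : h 0 = 0) (hg0 : g 0 = 0) (hd1 : deriv h 0 = 1) (hd2 : deriv g 0 = 0)
    (z : ℂ) (hz : z ∈ Metric.ball (0:ℂ) 1) :
    Complex.abs z * Complex.abs z
      - 2*M*Complex.abs z*((1+Complex.abs z)*Real.log (1+Complex.abs z) - Complex.abs z)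
      ≤ ((starRingEnd ℂ) z * h z + z * g z).re := by
  set r := Complex.abs z with hrdef
  have hr1 : r < 1 := mem_ball_zero_iff.mp hz
  have hr0 : 0 ≤ r := Complex.abs.nonneg z
  have hmemt : ∀ t ∈ Icc (0:ℝ) 1, ((t:ℂ)*z) ∈ Metric.ball (0:ℂ) 1 := by
    intro t ht
    rw [mem_ball_zero_iff, Complex.norm_eq_abs, map_mul, Complex.abs_ofReal,
      abs_of_nonneg ht.1]
    calc t * r ≤ 1 * r := mul_le_mul_of_nonneg_right ht.2 hr0
      _ = r := one_mul r
      _ < 1 := hr1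
  have hpos : ∀ t ∈ Icc (0:ℝ) 1, 0 < 1 + t*r := by
    intro t ht
    nlinarith [mul_nonneg ht.1 hr0]
  set χ : ℝ → ℝ := fun t => ((starRingEnd ℂ) z * h ((t:ℂ)*z) + z * g ((t:ℂ)*z)).re
    - (r*r*t - 2*M*r*((1+t*r)*Real.log (1+t*r) - t*r)) with hχdef
  set χ' : ℝ → ℝ := fun t =>
    ((starRingEnd ℂ) z * (deriv h ((t:ℂ)*z) * z) + z * (deriv g ((t:ℂ)*z) * z)).re
      - (r*r - 2*M*(r*r)*Real.log (1+t*r)) with hχ'def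
  have hχd : ∀ t ∈ Icc (0:ℝ) 1, HasDerivAt χ (χ' t) t := by
    intro t ht
    have hmem := hmemt t ht
    have hp := hpos t ht
    have h1 : HasDerivAt (fun t : ℝ => h ((t:ℂ)*z)) (deriv h ((t:ℂ)*z) * z) t :=
      hasDerivAt_comp_line ((hha _ hmem).differentiableAt)
    have h2 : HasDerivAt (fun t : ℝ => g ((t:ℂ)*z)) (deriv g ((t:ℂ)*z) * z) t :=
      hasDerivAt_comp_line ((hga _ hmem).differentiableAt)
    have h3 := hasDerivAt_re ((h1.const_mul ((starRingEnd ℂ) z)).add (h2.const_mul z))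
    have hi : HasDerivAt (fun t : ℝ => 1 + t*r) r t := by
      simpa using ((hasDerivAt_id t).mul_const r).const_add 1
    have hlog : HasDerivAt (fun t : ℝ => Real.log (1 + t*r)) ((1+t*r)⁻¹ * r) t :=
      by have := (Real.hasDerivAt_log (ne_of_gt hp)).comp t hi; exact this
    have hprod := hi.mul hlog
    have htr : HasDerivAt (fun t : ℝ => t*r) r t := by
      simpa using (hasDerivAt_id t).mul_const r
    have hB := (((hasDerivAt_id t).const_mul (r*r)).sub
      (((hprod.sub htr).const_mul (2*M*r))))
    have h4 := h3.sub hB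
    have heq : ((starRingEnd ℂ) z * (deriv h ((t:ℂ)*z) * z)
          + z * (deriv g ((t:ℂ)*z) * z)).re
        - (r*r*1 - 2*M*r*(r * Real.log (1+t*r) + (1+t*r) * ((1+t*r)⁻¹ * r) - r)) = χ' t := by
      simp only [hχ'def]
      have hinv : (1+t*r) * ((1+t*r)⁻¹ * r) = r := by
        field_simp
      rw [hinv]
      ring
    rw [heq] at h4
    exact h4
  have hmono : MonotoneOn χ (Icc (0:ℝ) 1) := by
    apply monotoneOn_of_deriv_nonneg (convex_Icc 0 1)
    · exact fun t ht => (hχd t ht).continuousAt.continuousWithinAt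
    · intro t ht
      rw [interior_Icc] at ht
      exact ((hχd t (Ioo_subset_Icc_self ht)).differentiableAt).differentiableWithinAt
    · intro t ht
      rw [interior_Icc] at ht
      have htI : t ∈ Icc (0:ℝ) 1 := Ioo_subset_Icc_self ht
      rw [(hχd t htI).deriv]
      have hmem := hmemt t htI
      have habs : Complex.abs ((t:ℂ)*z) = t * r := by
        rw [map_mul, Complex.abs_ofReal, abs_of_nonneg ht.1.le]
      have hdl := deriv_lower M hM h g hh' hg' hh hg hRe hd1 hd2 _ hmem
      rw [habs] at hdl
      set d1 := deriv h ((t:ℂ)*z) with hd1def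
      set d2 := deriv g ((t:ℂ)*z) with hd2def
      have hAre : ((starRingEnd ℂ) z * (d1 * z)).re = (r*r) * d1.re := by
        have hcz : (starRingEnd ℂ) z * (d1 * z) = ((Complex.normSq z : ℝ) : ℂ) * d1 := by
          rw [show (starRingEnd ℂ) z * (d1 * z) = (z * (starRingEnd ℂ) z) * d1 by ring,
            Complex.mul_conj]
        rw [hcz, Complex.re_ofReal_mul, Complex.normSq_eq_abs]
        rw [← hrdef]; ring
      have hBre : -((r*r) * Complex.abs d2) ≤ (z * (d2 * z)).re := by
        have h6 : z * (d2 * z) = z^2 * d2 := by ring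
        have h7 := neg_abs_le_re (z^2 * d2)
        rw [map_mul, map_pow] at h7
        rw [h6]
        calc -((r*r) * Complex.abs d2) = -(Complex.abs z ^ 2 * Complex.abs d2) := by
              rw [hrdef]; ring_nf
          _ ≤ (z^2 * d2).re := h7
      have hmul := mul_le_mul_of_nonneg_left hdl (by positivity : (0:ℝ) ≤ r*r)
      simp only [hχ'def, Complex.add_re]
      rw [hAre]
      nlinarith [hBre, hmul]
  have h0mem : (0:ℝ) ∈ Icc (0:ℝ) 1 := left_mem_Icc.mpr zero_le_one
  have h1mem : (1:ℝ) ∈ Icc (0:ℝ) 1 := right_mem_Icc.mpr zero_le_one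
  have hineq := hmono h0mem h1mem zero_le_one
  have hχ0 : χ 0 = 0 := by
    simp [hχdef, hh0, hg0]
  have hχ1 : χ 1 = ((starRingEnd ℂ) z * h z + z * g z).re
      - (r*r - 2*M*r*((1+r)*Real.log (1+r) - r)) := by
    simp only [hχdef, Complex.ofReal_one, one_mul, mul_one]
  rw [hχ0, hχ1] at hineq
  linarith

lemma hasSum_aux (x : ℝ) (hx : |x| < 1) :
    HasSum (fun n : ℕ => x^(n+2)/(((n:ℝ)+2)*((n:ℝ)+1))) (x + (1-x)*Real.log (1-x)) := by
  have L := Real.hasSum_pow_div_log_of_abs_lt_one hx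
  have S1 := L.mul_left x
  have S2 : HasSum (fun n : ℕ => x^(n+2)/((n:ℝ)+2)) (-Real.log (1-x) - x) := by
    have h2 : HasSum (fun n : ℕ => (fun m : ℕ => x^(m+1)/((m:ℝ)+1)) (n+1))
        (-Real.log (1-x) - x) := by
      apply (hasSum_nat_add_iff (f := fun m : ℕ => x^(m+1)/((m:ℝ)+1)) 1).mpr
      convert L using 1
      · rfl
      · simp
    have heq : ∀ n : ℕ, (fun m : ℕ => x^(m+1)/((m:ℝ)+1)) (n+1) = x^(n+2)/((n:ℝ)+2) := by
      intro n
      push_cast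
      ring_nf
    rw [funext heq] at h2
    exact h2
  have S := S1.sub S2
  have hval : x * -Real.log (1-x) - (-Real.log (1-x) - x)
      = x + (1-x)*Real.log (1-x) := by ring
  rw [hval] at S
  have hpt : ∀ n : ℕ, x * (x^(n+1)/((n:ℝ)+1)) - x^(n+2)/((n:ℝ)+2)
      = x^(n+2)/(((n:ℝ)+2)*((n:ℝ)+1)) := by
    intro n
    have h1 : ((n:ℝ)+1) ≠ 0 := by positivity
    have h2 : ((n:ℝ)+2) ≠ 0 := by positivity
    field_simp
    ring
  rw [← funext hpt]
  exact S

lemma hasSum_aux_neg (x : ℝ) (hx : |x| < 1) :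
    HasSum (fun n : ℕ => (-1:ℝ)^(n+1) * x^(n+2)/(((n:ℝ)+2)*((n:ℝ)+1)))
      (x - (1+x)*Real.log (1+x)) := by
  have H := (hasSum_aux (-x) (by rwa [abs_neg])).neg
  have hval : -((-x) + (1-(-x))*Real.log (1-(-x))) = x - (1+x)*Real.log (1+x) := by
    ring_nf
  rw [hval] at H
  have hpt : ∀ n : ℕ, -((-x)^(n+2)/(((n:ℝ)+2)*((n:ℝ)+1)))
      = (-1:ℝ)^(n+1) * x^(n+2)/(((n:ℝ)+2)*((n:ℝ)+1)) := by
    intro n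
    have h3 : (-x)^(n+2) = (-1:ℝ)^(n+2) * x^(n+2) := by
      rw [neg_pow]
    rw [h3, pow_succ]
    have h4 : (-1:ℝ)^(n+1) = (-1:ℝ)^n * (-1) := pow_succ (-1) n
    rw [h4]
    ring
  rw [← funext hpt]
  exact H


/-- Growth theorem for the class `P⁰_H(M)`. -/
theorem growth_estimate (M : ℝ) (hM : 0 < M) (a b : ℕ → ℂ) (h g : ℂ → ℂ)
    (hf : PH0 M a b h g) (z : ℂ) (hz : z ∈ Metric.ball (0 : ℂ) 1) :
    ‖z‖ + 2 * M * ∑' n : ℕ,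
        (-1 : ℝ) ^ (n + 1) * (‖z‖) ^ (n + 2) / (((n : ℝ) + 2) * ((n : ℝ) + 1))
      ≤ ‖h z + (starRingEnd ℂ) (g z)‖ ∧
    ‖h z + (starRingEnd ℂ) (g z)‖
      ≤ ‖z‖ + 2 * M * ∑' n : ℕ,
          (‖z‖) ^ (n + 2) / (((n : ℝ) + 2) * ((n : ℝ) + 1)) := by
  simp only [Complex.norm_eq_abs] at hf ⊢
  obtain ⟨hfa, hfb, hRe⟩ := hf
  obtain ⟨hkdiff, hk0, hkd0⟩ := rep_lemma (fun n => a (n+2)) (fun z => h z - z) hfa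
  obtain ⟨hgdiff, hg0, hgd0⟩ := rep_lemma (fun n => b (n+2)) g hfb
  have hhdiff : DifferentiableOn ℂ h (Metric.ball 0 1) := by
    have h1 : DifferentiableOn ℂ (fun z : ℂ => (h z - z) + z) (Metric.ball 0 1) :=
      hkdiff.add differentiableOn_id
    simpa using h1
  have hh0 : h 0 = 0 := by simpa using hk0
  have hd1 : deriv h 0 = 1 := by
    have hDk : DifferentiableAt ℂ (fun z : ℂ => h z - z) 0 :=
      hkdiff.differentiableAt (Metric.ball_mem_nhds _ one_pos)
    have hk' := hDk.hasDerivAt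
    rw [hkd0] at hk'
    have hh' : HasDerivAt h (0 + 1) 0 := by
      have h2 := hk'.add (hasDerivAt_id (0:ℂ))
      have h3 : ((fun z : ℂ => h z - z) + id) = h := by funext w; simp
      rwa [h3] at h2
    simpa using hh'.deriv
  have hd2 : deriv g 0 = 0 := hgd0
  have hha : AnalyticOnNhd ℂ h (Metric.ball 0 1) := hhdiff.analyticOnNhd Metric.isOpen_ball
  have hga : AnalyticOnNhd ℂ g (Metric.ball 0 1) := hgdiff.analyticOnNhd Metric.isOpen_ball
  have hh1 : AnalyticOnNhd ℂ (deriv h) (Metric.ball 0 1) := hha.deriv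
  have hg1 : AnalyticOnNhd ℂ (deriv g) (Metric.ball 0 1) := hga.deriv
  have hh2 : AnalyticOnNhd ℂ (deriv (deriv h)) (Metric.ball 0 1) := hh1.deriv
  have hg2 : AnalyticOnNhd ℂ (deriv (deriv g)) (Metric.ball 0 1) := hg1.deriv
  set r := Complex.abs z with hrdef
  have hr1 : r < 1 := mem_ball_zero_iff.mp hz
  have hr0 : 0 ≤ r := Complex.abs.nonneg z
  have habs : |r| < 1 := by rwa [abs_of_nonneg hr0]
  have htsum1 : ∑' n : ℕ, (Complex.abs z)^(n+2)/(((n:ℝ)+2)*((n:ℝ)+1))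
      = r + (1-r)*Real.log (1-r) := (hasSum_aux r habs).tsum_eq
  have htsum2 : ∑' n : ℕ,
      (-1:ℝ)^(n+1) * (Complex.abs z)^(n+2)/(((n:ℝ)+2)*((n:ℝ)+1))
      = r - (1+r)*Real.log (1+r) := (hasSum_aux_neg r habs).tsum_eq
  constructor
  · -- lower bound
    rw [htsum2]
    rcases eq_or_ne z 0 with hz0 | hz0
    · have hr00 : r = 0 := by rw [hrdef, hz0, map_zero]
      rw [hz0, hh0, hg0, hr00]
      simp [Real.log_one]
    · have hlb := growth_lower M hM h g hha hga hh1 hg1 hh2 hg2 hRe hh0 hg0 hd1 hd2 z hz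
      have hre : ((starRingEnd ℂ) z * h z + z * g z).re
          = ((starRingEnd ℂ) z * (h z + (starRingEnd ℂ) (g z))).re := by
        rw [mul_add, ← map_mul]
        simp [Complex.add_re, Complex.conj_re]
      have hle : ((starRingEnd ℂ) z * (h z + (starRingEnd ℂ) (g z))).re
          ≤ r * Complex.abs (h z + (starRingEnd ℂ) (g z)) := by
        have h5 := Complex.re_le_abs ((starRingEnd ℂ) z * (h z + (starRingEnd ℂ) (g z)))
        rwa [map_mul, Complex.abs_conj] at h5
      have hrpos : 0 < r := Complex.abs.pos hz0
      have hchain : r * (r + 2*M*(r - (1+r)*Real.log (1+r)))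
          ≤ r * Complex.abs (h z + (starRingEnd ℂ) (g z)) := by
        calc r * (r + 2*M*(r - (1+r)*Real.log (1+r)))
            = r*r - 2*M*r*((1+r)*Real.log (1+r) - r) := by ring
          _ ≤ ((starRingEnd ℂ) z * h z + z * g z).re := hlb
          _ = ((starRingEnd ℂ) z * (h z + (starRingEnd ℂ) (g z))).re := hre
          _ ≤ r * Complex.abs (h z + (starRingEnd ℂ) (g z)) := hle
      have hfin := le_of_mul_le_mul_left hchain hrpos
      linarith
  · -- upper bound
    rw [htsum1]
    obtain ⟨e, he1, he2⟩ := align_unit (h z - z) (g z)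
    have hub := growth_upper M hM h g hha hga hh1 hg1 hh2 hg2 hRe hh0 hg0 hd1 hd2 e he1 z hz
    have hrw : h z + e * g z - z = (h z - z) + e * g z := by ring
    rw [hrw, he2] at hub
    have htri : Complex.abs (h z + (starRingEnd ℂ) (g z))
        ≤ r + (Complex.abs (h z - z) + Complex.abs (g z)) := by
      have h6 : h z + (starRingEnd ℂ) (g z) = z + ((h z - z) + (starRingEnd ℂ) (g z)) := by
        ring
      rw [h6]
      calc Complex.abs (z + ((h z - z) + (starRingEnd ℂ) (g z)))
          ≤ Complex.abs z + Complex.abs ((h z - z) + (starRingEnd ℂ) (g z)) :=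
            Complex.abs.add_le _ _
        _ ≤ r + (Complex.abs (h z - z) + Complex.abs ((starRingEnd ℂ) (g z))) := by
            exact add_le_add_right (Complex.abs.add_le _ _) r
        _ = r + (Complex.abs (h z - z) + Complex.abs (g z)) := by
            rw [Complex.abs_conj]
    linarith
end

section
/- Let M > 0 and let f belong to the class P⁰_H(M). Then the Euclidean distance from f(0) to the boundary of f(𝔻) satisfies d(f(0), ∂f(𝔻)) ≥ 1 + 2M Σ_{n=2}^∞ (−1)^{n−1}/(n(n−1)) = 1 + 2M(1 − 2 ln 2). -/
open Filter MeasureTheory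

open Metric Set Complex intervalIntegral FormalMultilinearSeries

lemma tsum_alt : ∑' n : ℕ, (-1 : ℝ) ^ (n + 1) / (((n : ℝ) + 2) * ((n : ℝ) + 1))
    = 1 - 2 * Real.log 2 := by
  set c : ℕ → ℝ := fun n => (-1 : ℝ) ^ (n + 1) / (((n : ℝ) + 2) * ((n : ℝ) + 1)) with hc
  have hsumm : Summable c := by
    refine Summable.of_norm_bounded (g := fun n => 1 / ((n : ℝ) + 1) ^ 2) ?_ ?_
    · simpa using (summable_nat_add_iff (f := fun n : ℕ => 1 / (n : ℝ) ^ 2) 1).mpr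
        ((Real.summable_one_div_nat_pow (p := 2)).mpr one_lt_two)
    · intro n
      rw [hc]
      rw [Real.norm_eq_abs, _root_.abs_div, _root_.abs_pow, _root_.abs_neg, _root_.abs_one, one_pow]
      rw [_root_.abs_of_pos (by positivity)]
      rw [div_le_div_iff₀ (by positivity) (by positivity)]
      nlinarith [sq_nonneg ((n:ℝ))]
  have habel := Real.tendsto_tsum_powerSeries_nhdsWithin_lt hsumm.hasSum.tendsto_sum_nat
  have hclosed : ∀ x : ℝ, 0 < x → x < 1 →
      ∑' n, c n * x ^ n = (x - (1 + x) * Real.log (1 + x)) / x ^ 2 := by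
    intro x hx0 hx1
    have habs : |(-x)| < 1 := by rw [_root_.abs_neg, _root_.abs_of_pos hx0]; exact hx1
    have h1 := Real.hasSum_pow_div_log_of_abs_lt_one habs
    rw [sub_neg_eq_add] at h1
    have hA := h1.mul_left x
    have hB := (hasSum_nat_add_iff' (f := fun n : ℕ => (-x) ^ (n + 1) / ((n : ℝ) + 1)) 1).mpr h1
    simp only [Finset.range_one, Finset.sum_singleton] at hB
    have hC := hA.add hB
    have hD : HasSum (fun n : ℕ => c n * x ^ n * x ^ 2)
        (x * -Real.log (1 + x) + (-Real.log (1 + x) -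
          (-x) ^ (0 + 1) / ((0 : ℕ) + 1))) := by
      refine hC.congr_fun fun n => ?_
      have h1n : ((n : ℝ) + 1) ≠ 0 := by positivity
      have h2n : ((n : ℝ) + 2) ≠ 0 := by positivity
      have e1 : (-x : ℝ) ^ (n + 1) = (-1) ^ (n + 1) * x ^ (n + 1) := neg_pow x (n+1)
      have e2 : (-x : ℝ) ^ (n + 1 + 1) = (-1) ^ (n + 1 + 1) * x ^ (n + 1 + 1) := neg_pow x (n+2)
      rw [hc]
      simp only [e1, e2]
      push_cast
      field_simp
      ring
    have hE := hD.div_const (x ^ 2)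
    have hx2 : (x : ℝ) ^ 2 ≠ 0 := by positivity
    have hF : HasSum (fun n : ℕ => c n * x ^ n)
        ((x * -Real.log (1 + x) + (-Real.log (1 + x) - (-x) ^ (0 + 1) / ((0:ℕ) + 1))) / x ^ 2) := by
      refine hE.congr_fun fun n => ?_
      field_simp
    rw [hF.tsum_eq]
    push_cast
    field_simp
    ring
  have hlog2 : ContinuousAt Real.log 2 := Real.continuousAt_log (by norm_num)
  have hloga : ContinuousAt (fun x : ℝ => Real.log (1 + x)) 1 := by
    have : ContinuousAt (fun x : ℝ => 1 + x) 1 := by fun_prop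
    have h2 : (fun x : ℝ => 1 + x) 1 = 2 := by norm_num
    exact (h2 ▸ hlog2).comp this
  have hca : ContinuousAt (fun x : ℝ => (x - (1 + x) * Real.log (1 + x)) / x ^ 2) 1 := by
    refine ContinuousAt.div ?_ (by fun_prop) (by norm_num)
    exact continuousAt_id.sub ((continuousAt_const.add continuousAt_id).mul hloga)
  have hcont : Tendsto (fun x : ℝ => (x - (1 + x) * Real.log (1 + x)) / x ^ 2)
      (nhdsWithin 1 (Set.Iio 1)) (nhds (1 - 2 * Real.log 2)) := by
    have := hca.continuousWithinAt (s := Set.Iio 1)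
    unfold ContinuousWithinAt at this
    convert this using 2
    norm_num
  have heq : (fun x : ℝ => ∑' n, c n * x ^ n) =ᶠ[nhdsWithin 1 (Set.Iio 1)]
      (fun x : ℝ => (x - (1 + x) * Real.log (1 + x)) / x ^ 2) := by
    filter_upwards [Ioo_mem_nhdsLT_of_mem (a := (0:ℝ)) (b := 1) (c := 1)
      ⟨zero_lt_one, le_refl 1⟩] with x hx
    exact hclosed x hx.1 hx.2
  exact tendsto_nhds_unique (habel.congr' heq) hcont

lemma analyticOnNhd_of_hasSum {c : ℕ → ℂ} {c1 : ℂ} {F : ℂ → ℂ}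
    (hF : ∀ z ∈ ball (0 : ℂ) 1, HasSum (fun n : ℕ => c (n + 2) * z ^ (n + 2)) (F z - c1 * z)) :
    AnalyticOnNhd ℂ F (ball 0 1) ∧ F 0 = 0 ∧ deriv F 0 = c1 := by
  classical
  set d : ℕ → ℂ := fun n => if n = 1 then c1 else if n ≤ 1 then 0 else c n with hd
  set p := FormalMultilinearSeries.ofScalars ℂ d with hp
  have hps : ∀ z ∈ ball (0 : ℂ) 1, HasSum (fun n => d n * z ^ n) (F z) := by
    intro z hz
    have h2 : HasSum (fun n : ℕ => d (n + 2) * z ^ (n + 2)) (F z - c1 * z) := by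
      refine (hF z hz).congr_fun fun n => ?_
      simp [hd]
    have h3 := (hasSum_nat_add_iff (f := fun n => d n * z ^ n) 2).mp h2
    have : F z - c1 * z + ∑ i ∈ Finset.range 2, d i * z ^ i = F z := by
      simp [Finset.sum_range_succ, hd]
    rwa [this] at h3
  have hrad : 1 ≤ p.radius := by
    refine ENNReal.le_of_forall_nnreal_lt fun r hr => ?_
    have hr1 : (r : ℝ) < 1 := by exact_mod_cast hr
    have hz : ((r : ℝ) : ℂ) ∈ ball (0 : ℂ) 1 := by
      simp [Complex.norm_of_nonneg r.coe_nonneg, hr1]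
    have hsum := (hps _ hz).summable
    have htend : Tendsto (fun n => ‖p n‖ * (r : ℝ) ^ n) atTop (nhds 0) := by
      have h0 := hsum.tendsto_atTop_zero
      have := (continuous_norm.tendsto 0).comp h0
      simp only [Function.comp_def, norm_zero] at this
      refine this.congr fun n => ?_
      rw [ofScalars_norm]
      rw [norm_mul, norm_pow, Complex.norm_real, Real.norm_eq_abs,
        _root_.abs_of_nonneg r.coe_nonneg]
    exact p.le_radius_of_isBigO (htend.isBigO_one ℝ)
  have hball : HasFPowerSeriesOnBall F p 0 1 := by
    refine ⟨hrad, by norm_num, fun {y} hy => ?_⟩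
    have hy' : y ∈ ball (0 : ℂ) 1 := by
      rw [EMetric.mem_ball, edist_zero_right] at hy
      rw [mem_ball_zero_iff]
      rwa [← ofReal_norm, ENNReal.ofReal_lt_one] at hy
    have := hps y hy'
    rw [zero_add]
    refine this.congr_fun fun n => ?_
    rw [ofScalars_apply_eq]
    simp [smul_eq_mul, mul_comm]
  have hF0 : F 0 = 0 := by
    have h0 := hF 0 (by simp)
    have : (fun n : ℕ => c (n + 2) * (0:ℂ) ^ (n + 2)) = fun _ => (0:ℂ) := by
      funext n; simp
    rw [this] at h0
    have := h0.unique hasSum_zero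
    simpa using this
  refine ⟨fun z hz => ?_, hF0, ?_⟩
  · have hz' : z ∈ Metric.eball (0 : ℂ) 1 := by
      rw [Metric.mem_eball, edist_zero_right]
      rw [mem_ball_zero_iff] at hz
      rwa [← ofReal_norm, ENNReal.ofReal_lt_one]
    exact hball.analyticAt_of_mem hz'
  · have := hball.hasFPowerSeriesAt.deriv
    rw [this, ofScalars_apply_eq]
    simp [hd]

lemma re_div_one_add_le {w : ℂ} (hw : norm w < 1) :
    (w / (1 + w)).re ≤ norm w / (1 + norm w) := by
  set t := norm w with ht
  have h1w : (1 : ℂ) + w ≠ 0 := by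
    intro h
    have hw1 : w = -1 := by linear_combination h
    have h2 : t = 1 := by rw [ht, hw1]; simp
    linarith
  have hpos : 0 < Complex.normSq (1 + w) := Complex.normSq_pos.mpr h1w
  have hsq : w.re ^ 2 + w.im ^ 2 = t ^ 2 := by
    rw [ht, Complex.sq_norm, Complex.normSq_apply]; ring
  have hre_le : w.re ≤ t := Complex.re_le_norm w
  have ht0 : 0 ≤ t := norm_nonneg w
  rw [Complex.div_re]
  have hnsq : Complex.normSq (1 + w) = (1 + w.re) ^ 2 + w.im ^ 2 := by
    simp [Complex.normSq_apply, Complex.add_re, Complex.add_im]; ring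
  rw [← add_div, div_le_div_iff₀ hpos (by positivity), hnsq]
  simp only [Complex.add_re, Complex.add_im, Complex.one_re, Complex.one_im, zero_add]
  nlinarith [mul_nonneg (sub_nonneg.mpr hre_le) (sub_nonneg.mpr hw.le),
    mul_nonneg ht0 (sq_nonneg w.re), sq_nonneg w.im]

lemma herglotz_bounds {M : ℝ} (hM : 0 < M) {q : ℂ → ℂ}
    (hq : DifferentiableOn ℂ q (ball 0 1))
    (hre : ∀ z ∈ ball (0 : ℂ) 1, 0 < (q z).re)
    (hq0 : q 0 = M) :
    ∀ z ∈ ball (0 : ℂ) 1,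
      -(2 * M * norm z / (1 + norm z)) ≤ (q z).re - M ∧
      norm (q z - M) ≤ 2 * M * norm z / (1 - norm z) := by
  have hden : ∀ z ∈ ball (0 : ℂ) 1, ((M : ℂ) + q z) ≠ 0 := by
    intro z hz h
    have h2 := congrArg Complex.re h
    simp only [Complex.add_re, Complex.ofReal_re, Complex.zero_re] at h2
    have := hre z hz
    linarith
  set ω : ℂ → ℂ := fun z => ((M : ℂ) - q z) / ((M : ℂ) + q z) with hω
  have hωd : DifferentiableOn ℂ ω (ball 0 1) :=
    ((differentiableOn_const _).sub hq).div ((differentiableOn_const _).add hq) hden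
  have hmaps : MapsTo ω (ball 0 1) (ball 0 1) := by
    intro z hz
    rw [mem_ball_zero_iff]
    have h1 : Complex.normSq ((M : ℂ) - q z) < Complex.normSq ((M : ℂ) + q z) := by
      simp only [Complex.normSq_apply, Complex.sub_re, Complex.add_re, Complex.sub_im,
        Complex.add_im, Complex.ofReal_re, Complex.ofReal_im]
      nlinarith [hre z hz]
    have h2 : norm ((M : ℂ) - q z) < norm ((M : ℂ) + q z) := by
      rw [Complex.norm_def, Complex.norm_def]
      exact Real.sqrt_lt_sqrt (Complex.normSq_nonneg _) h1
    rw [hω]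
    simp only [norm_div]
    rw [div_lt_one (lt_of_le_of_lt (norm_nonneg _) h2)]
    exact h2
  have hω0 : ω 0 = 0 := by rw [hω]; simp [hq0]
  have hSch : ∀ z ∈ ball (0 : ℂ) 1, norm (ω z) ≤ norm z := fun z hz =>
    Complex.norm_le_norm_of_mapsTo_ball hωd (hmaps.mono_right ball_subset_closedBall) hω0 (mem_ball_zero_iff.mp hz)
  intro z hz
  set r := norm z with hr
  have hr1 : r < 1 := mem_ball_zero_iff.mp hz
  have hr0 : 0 ≤ r := norm_nonneg z
  set w := ω z with hwdef
  set t := norm w with htdef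
  clear_value w t
  have htr : t ≤ r := by rw [htdef, hwdef]; exact hSch z hz
  have ht1 : t < 1 := lt_of_le_of_lt htr hr1
  have ht0 : 0 ≤ t := htdef ▸ norm_nonneg w
  have h1w : (1 : ℂ) + w ≠ 0 := by
    intro h
    have hw1 : w = -1 := by linear_combination h
    have h2 : t = 1 := by rw [htdef, hw1]; simp
    linarith
  have hrep : q z - M = -(((2 * M : ℝ) : ℂ) * w) / (1 + w) := by
    have hd := hden z hz
    have e : w * ((M : ℂ) + q z) = (M : ℂ) - q z := by
      rw [hwdef, hω]; field_simp
    rw [eq_div_iff h1w]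
    push_cast
    linear_combination e
  constructor
  · have h1 : (q z - (M : ℂ)).re = (q z).re - M := by
      simp [Complex.sub_re]
    rw [← h1, hrep]
    have h2 : (-(((2 * M : ℝ) : ℂ) * w) / (1 + w)) = ((-(2 * M) : ℝ) : ℂ) * (w / (1 + w)) := by
      push_cast; ring
    rw [h2, Complex.re_ofReal_mul]
    have h3 : (w / (1 + w)).re ≤ t / (1 + t) := by
      rw [htdef]; exact re_div_one_add_le (htdef ▸ ht1)
    have h4 : t / (1 + t) ≤ r / (1 + r) := by
      rw [div_le_div_iff₀ (by linarith) (by linarith)]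
      nlinarith
    have h5 : (w / (1 + w)).re ≤ r / (1 + r) := le_trans h3 h4
    have := mul_le_mul_of_nonpos_left h5 (by linarith : -(2 * M) ≤ 0)
    calc -(2 * M * r / (1 + r)) = -(2 * M) * (r / (1 + r)) := by ring
    _ ≤ -(2 * M) * (w / (1 + w)).re := this
  · rw [hrep]
    rw [norm_div, norm_neg, norm_mul, Complex.norm_real, Real.norm_eq_abs, _root_.abs_of_pos (by linarith), ← htdef]
    have habs1w : 1 - t ≤ norm (1 + w) := by
      have := norm_add_le (1 + w) (-w)
      simp only [add_neg_cancel_right, norm_neg] at this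
      simp at this ⊢
      linarith
    have hpos : 0 < norm (1 + w) := by linarith
    calc 2 * M * t / norm (1 + w) ≤ 2 * M * t / (1 - t) := by
          apply div_le_div_of_nonneg_left (by positivity) (by linarith) habs1w
    _ ≤ 2 * M * r / (1 - r) := by
          rw [div_le_div_iff₀ (by linarith) (by linarith)]
          nlinarith

lemma ae_ne_zero_restrict : ∀ᵐ (t : ℝ) ∂(volume.restrict (Icc (0:ℝ) 1)), t ≠ 0 := by
  refine (MeasureTheory.ae_iff).mpr ?_
  have h : {t : ℝ | ¬ t ≠ 0} = {(0:ℝ)} := by ext t; simp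
  rw [h, Measure.restrict_apply (measurableSet_singleton 0)]
  exact measure_mono_null Set.inter_subset_left Real.volume_singleton

/-- derivative of `t ↦ log (1 + t * s)` -/
lemma hasDerivAt_log_one_add (s t : ℝ) (hpos : 0 < 1 + t * s) :
    HasDerivAt (fun t : ℝ => Real.log (1 + t * s)) (s / (1 + t * s)) t := by
  have ha : HasDerivAt (fun t : ℝ => 1 + t * s) s t := by
    simpa using (hasDerivAt_mul_const (x := t) s).const_add 1
  have := (Real.hasDerivAt_log (ne_of_gt hpos)).comp t ha
  simpa [div_eq_inv_mul, Function.comp_def] using this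

lemma growth_bounds {M : ℝ} (hM : 0 < M) {φ : ℂ → ℂ}
    (hφ : AnalyticOnNhd ℂ φ (ball 0 1)) (h0 : φ 0 = 0) (h1 : deriv φ 0 = 1)
    (hre : ∀ z ∈ ball (0 : ℂ) 1, -M < (z * deriv (deriv φ) z).re) :
    ∀ z ∈ ball (0 : ℂ) 1,
      ((1 + 2 * M) * norm z
          - 2 * M * (1 + norm z) * Real.log (1 + norm z)
          ≤ norm (φ z)) ∧ norm (φ z) ≤ 1 + 2 * M := by
  set ψ : ℂ → ℂ := deriv (deriv φ) with hψdef
  have hφ' : AnalyticOnNhd ℂ (deriv φ) (ball 0 1) := hφ.deriv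
  have hψ : AnalyticOnNhd ℂ ψ (ball 0 1) := hφ'.deriv
  -- the Herglotz function
  set q : ℂ → ℂ := fun z => z * ψ z + (M : ℝ) with hqdef
  have hqa : AnalyticOnNhd ℂ q (ball 0 1) := (analyticOnNhd_id.mul hψ).add analyticOnNhd_const
  have hreq : ∀ z ∈ ball (0 : ℂ) 1, 0 < (q z).re := by
    intro z hz
    have := hre z hz
    simp only [hqdef, Complex.add_re, Complex.ofReal_re]
    linarith
  have hq0 : q 0 = (M : ℝ) := by simp [hqdef]
  have hherg := herglotz_bounds hM hqa.differentiableOn hreq hq0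
  have hlow : ∀ w ∈ ball (0 : ℂ) 1,
      -(2 * M * norm w / (1 + norm w)) ≤ (w * ψ w).re := by
    intro w hw
    have := (hherg w hw).1
    have he : (q w).re - M = (w * ψ w).re := by
      simp [hqdef, Complex.add_re, Complex.ofReal_re]
    linarith [he ▸ this]
  have hupp : ∀ w ∈ ball (0 : ℂ) 1,
      norm (w * ψ w) ≤ 2 * M * norm w / (1 - norm w) := by
    intro w hw
    have := (hherg w hw).2
    have he : q w - (M : ℝ) = w * ψ w := by rw [hqdef]; ring
    rwa [he] at this
  -- membership of segment points
  have hmem : ∀ w ∈ ball (0 : ℂ) 1, ∀ t ∈ Icc (0:ℝ) 1, ((t : ℂ) * w) ∈ ball (0 : ℂ) 1 := by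
    intro w hw t ht
    rw [mem_ball_zero_iff] at hw ⊢
    rw [norm_mul, Complex.norm_real, Real.norm_eq_abs, _root_.abs_of_nonneg ht.1]
    calc t * ‖w‖ ≤ 1 * ‖w‖ := mul_le_mul_of_nonneg_right ht.2 (norm_nonneg w)
    _ < 1 := by rwa [one_mul]
  have hmapsTo : ∀ w ∈ ball (0 : ℂ) 1,
      MapsTo (fun t : ℝ => (t : ℂ) * w) (uIcc (0:ℝ) 1) (ball (0 : ℂ) 1) := by
    intro w hw t ht
    rw [uIcc_of_le zero_le_one] at ht
    exact hmem w hw t ht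
  have hcst : ∀ w : ℂ, Continuous (fun t : ℝ => (t : ℂ) * w) := fun w =>
    Complex.continuous_ofReal.mul continuous_const
  have hcw : ∀ w ∈ ball (0 : ℂ) 1, ∀ t : ℝ, HasDerivAt (fun t : ℝ => (t : ℂ) * w) w t := by
    intro w _ t
    have := (hasDerivAt_id t).smul_const w
    simpa [Complex.real_smul] using this
  -- key derivative-of-deriv-φ facts
  have hBkey : ∀ w ∈ ball (0 : ℂ) 1,
      (1 - 2 * M * Real.log (1 + norm w) ≤ (deriv φ w).re ∧
       norm (deriv φ w) ≤ 1 + 2 * M * (-Real.log (1 - norm w))) := by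
    intro w hw
    set s := norm w with hsdef
    have hs1 : s < 1 := mem_ball_zero_iff.mp hw
    have hs0 : 0 ≤ s := norm_nonneg w
    -- FTC for deriv φ along the segment
    have hder : ∀ t ∈ uIcc (0:ℝ) 1,
        HasDerivAt (fun t : ℝ => deriv φ ((t : ℂ) * w)) (w * ψ ((t : ℂ) * w)) t := by
      intro t ht
      have hmemt := hmapsTo w hw ht
      have hψt : HasDerivAt (deriv φ) (ψ ((t : ℂ) * w)) ((t : ℂ) * w) :=
        (hφ' _ hmemt).differentiableAt.hasDerivAt
      have := hψt.scomp t (hcw w hw t)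
      simpa [smul_eq_mul, Function.comp_def] using this
    have hcont : ContinuousOn (fun t : ℝ => w * ψ ((t : ℂ) * w)) (uIcc (0:ℝ) 1) :=
      continuousOn_const.mul ((hψ.continuousOn).comp ((hcst w).continuousOn) (hmapsTo w hw))
    have hint : IntervalIntegrable (fun t : ℝ => w * ψ ((t : ℂ) * w)) volume 0 1 :=
      hcont.intervalIntegrable
    have hFTC := integral_eq_sub_of_hasDerivAt hder hint
    simp only [Complex.ofReal_one, Complex.ofReal_zero, one_mul, zero_mul, h1] at hFTC
    -- real part of the integral
    have hreint : (∫ t in (0:ℝ)..1, w * ψ ((t : ℂ) * w)).re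
        = ∫ t in (0:ℝ)..1, (w * ψ ((t : ℂ) * w)).re := by
      exact (ContinuousLinearMap.intervalIntegral_comp_comm Complex.reCLM hint).symm
    have hintre : IntervalIntegrable (fun t : ℝ => (w * ψ ((t : ℂ) * w)).re) volume 0 1 :=
      (Complex.continuous_re.comp_continuousOn hcont).intervalIntegrable
    have habsint : IntervalIntegrable (fun t : ℝ => norm (w * ψ ((t : ℂ) * w))) volume 0 1 := by
      have : ContinuousOn (fun t : ℝ => norm (w * ψ ((t : ℂ) * w))) (uIcc (0:ℝ) 1) :=
        continuous_norm.comp_continuousOn hcont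
      exact this.intervalIntegrable
    have hlowint : IntervalIntegrable (fun t : ℝ => -(2 * M * s / (1 + t * s))) volume 0 1 := by
      apply ContinuousOn.intervalIntegrable
      apply ContinuousOn.neg
      exact continuousOn_const.div (continuousOn_const.add
        ((continuousOn_id).mul continuousOn_const)) (fun t ht => by
          rw [uIcc_of_le zero_le_one] at ht
          exact ne_of_gt (by nlinarith [ht.1, ht.2]))
    have huppint : IntervalIntegrable (fun t : ℝ => 2 * M * s / (1 - t * s)) volume 0 1 := by
      apply ContinuousOn.intervalIntegrable
      exact continuousOn_const.div (continuousOn_const.sub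
        ((continuousOn_id).mul continuousOn_const)) (fun t ht => by
          rw [uIcc_of_le zero_le_one] at ht
          exact ne_of_gt (by nlinarith [ht.1, ht.2]))
    -- pointwise a.e. bounds
    have haelow : (fun t : ℝ => -(2 * M * s / (1 + t * s)))
        ≤ᵐ[volume.restrict (Icc (0:ℝ) 1)] (fun t : ℝ => (w * ψ ((t : ℂ) * w)).re) := by
      filter_upwards [ae_restrict_mem measurableSet_Icc, ae_ne_zero_restrict] with t ht ht0
      have htpos : 0 < t := lt_of_le_of_ne ht.1 (Ne.symm ht0)
      have hmemt := hmem w hw t ht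
      have hl := hlow _ hmemt
      have habs : norm ((t : ℂ) * w) = t * s := by
        rw [norm_mul, Complex.norm_real, Real.norm_eq_abs, _root_.abs_of_nonneg ht.1, hsdef]
      rw [habs] at hl
      have hrw : (((t : ℂ) * w) * ψ ((t : ℂ) * w)).re = t * (w * ψ ((t : ℂ) * w)).re := by
        rw [mul_assoc, Complex.re_ofReal_mul]
      rw [hrw] at hl
      have hineq : -(2 * M * (t * s) / (1 + t * s)) = t * (-(2 * M * s / (1 + t * s))) := by
        ring
      rw [hineq] at hl
      exact le_of_mul_le_mul_left hl htpos
    have haeupp : (fun t : ℝ => norm (w * ψ ((t : ℂ) * w)))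
        ≤ᵐ[volume.restrict (Icc (0:ℝ) 1)] (fun t : ℝ => 2 * M * s / (1 - t * s)) := by
      filter_upwards [ae_restrict_mem measurableSet_Icc, ae_ne_zero_restrict] with t ht ht0
      have htpos : 0 < t := lt_of_le_of_ne ht.1 (Ne.symm ht0)
      have hmemt := hmem w hw t ht
      have hu := hupp _ hmemt
      have habs : norm ((t : ℂ) * w) = t * s := by
        rw [norm_mul, Complex.norm_real, Real.norm_eq_abs, _root_.abs_of_nonneg ht.1, hsdef]
      rw [habs] at hu
      have hrw : norm (((t : ℂ) * w) * ψ ((t : ℂ) * w))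
          = t * norm (w * ψ ((t : ℂ) * w)) := by
        rw [mul_assoc, norm_mul, Complex.norm_real, Real.norm_eq_abs, _root_.abs_of_nonneg ht.1]
      rw [hrw] at hu
      have hineq : 2 * M * (t * s) / (1 - t * s) = t * (2 * M * s / (1 - t * s)) := by
        ring
      rw [hineq] at hu
      exact (mul_le_mul_iff_right₀ htpos).mp hu
    -- integral of the lower bound
    have hlowval : ∫ t in (0:ℝ)..1, -(2 * M * s / (1 + t * s))
        = -(2 * M * Real.log (1 + s)) := by
      have hder2 : ∀ t ∈ uIcc (0:ℝ) 1,
          HasDerivAt (fun t : ℝ => -(2 * M * Real.log (1 + t * s)))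
            (-(2 * M * s / (1 + t * s))) t := by
        intro t ht
        rw [uIcc_of_le zero_le_one] at ht
        have hpos : 0 < 1 + t * s := by nlinarith [ht.1, ht.2]
        have := ((hasDerivAt_log_one_add s t hpos).const_mul (2 * M)).neg
        refine this.congr_deriv ?_
        ring
      have := integral_eq_sub_of_hasDerivAt hder2 hlowint
      rw [this]
      simp
    have huppval : ∫ t in (0:ℝ)..1, 2 * M * s / (1 - t * s)
        = -(2 * M * Real.log (1 - s)) := by
      have hder2 : ∀ t ∈ uIcc (0:ℝ) 1,
          HasDerivAt (fun t : ℝ => -(2 * M * Real.log (1 - t * s)))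
            (2 * M * s / (1 - t * s)) t := by
        intro t ht
        rw [uIcc_of_le zero_le_one] at ht
        have hpos : 0 < 1 - t * s := by nlinarith [ht.1, ht.2]
        have ha : HasDerivAt (fun t : ℝ => 1 - t * s) (-s) t := by
          simpa [sub_eq_add_neg] using ((hasDerivAt_mul_const (x := t) s).neg).const_add 1
        have hl := (Real.hasDerivAt_log (ne_of_gt hpos)).comp t ha
        have := (hl.const_mul (2 * M)).neg
        refine this.congr_deriv ?_
        field_simp
      have := integral_eq_sub_of_hasDerivAt hder2 huppint
      rw [this]
      simp
    constructor
    · -- lower bound on re (deriv φ w)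
      have hmono := integral_mono_ae_restrict zero_le_one hlowint hintre haelow
      rw [hlowval] at hmono
      have hre2 : (deriv φ w).re = 1 + (∫ t in (0:ℝ)..1, w * ψ ((t : ℂ) * w)).re := by
        have : deriv φ w = 1 + ∫ t in (0:ℝ)..1, w * ψ ((t : ℂ) * w) := by
          rw [hFTC]; ring
        rw [this]
        simp [Complex.add_re]
      rw [hre2, hreint]
      linarith
    · -- upper bound on abs (deriv φ w)
      have hmono := integral_mono_ae_restrict zero_le_one habsint huppint haeupp
      rw [huppval] at hmono
      have htri : norm (deriv φ w) ≤ 1 + norm (deriv φ w - 1) := by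
        have := norm_add_le 1 (deriv φ w - 1)
        simpa using this
      have habs2 : norm (deriv φ w - 1)
          ≤ ∫ t in (0:ℝ)..1, norm (w * ψ ((t : ℂ) * w)) := by
        have : deriv φ w - 1 = ∫ t in (0:ℝ)..1, w * ψ ((t : ℂ) * w) := hFTC.symm
        rw [this]
        have := intervalIntegral.norm_integral_le_integral_norm
          (f := fun t : ℝ => w * ψ ((t : ℂ) * w)) (μ := volume) zero_le_one
        simpa using this
      linarith
  -- FTC for φ along the segment at z
  intro z hz
  set r := norm z with hrdef
  have hr1 : r < 1 := mem_ball_zero_iff.mp hz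
  have hr0 : 0 ≤ r := norm_nonneg z
  have hderφ : ∀ t ∈ uIcc (0:ℝ) 1,
      HasDerivAt (fun t : ℝ => φ ((t : ℂ) * z)) (z * deriv φ ((t : ℂ) * z)) t := by
    intro t ht
    have hmemt := hmapsTo z hz ht
    have hφt : HasDerivAt φ (deriv φ ((t : ℂ) * z)) ((t : ℂ) * z) :=
      (hφ _ hmemt).differentiableAt.hasDerivAt
    have := hφt.scomp t (hcw z hz t)
    simpa [smul_eq_mul, Function.comp_def] using this
  have hcontφ : ContinuousOn (fun t : ℝ => z * deriv φ ((t : ℂ) * z)) (uIcc (0:ℝ) 1) :=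
    continuousOn_const.mul ((hφ'.continuousOn).comp ((hcst z).continuousOn) (hmapsTo z hz))
  have hintφ : IntervalIntegrable (fun t : ℝ => z * deriv φ ((t : ℂ) * z)) volume 0 1 :=
    hcontφ.intervalIntegrable
  have hFTCφ := integral_eq_sub_of_hasDerivAt hderφ hintφ
  simp only [Complex.ofReal_one, Complex.ofReal_zero, one_mul, zero_mul, h0, sub_zero] at hFTCφ
  -- lower-bound integrand and its integral
  have hlbint : IntervalIntegrable (fun t : ℝ => r * (1 - 2 * M * Real.log (1 + t * r)))
      volume 0 1 := by
    apply ContinuousOn.intervalIntegrable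
    apply ContinuousOn.mul continuousOn_const
    apply ContinuousOn.sub continuousOn_const
    apply ContinuousOn.mul continuousOn_const
    apply ContinuousOn.comp Real.continuousOn_log
      (continuousOn_const.add ((continuousOn_id).mul continuousOn_const))
    intro t ht
    rw [uIcc_of_le zero_le_one] at ht
    simp only [mem_compl_iff, mem_singleton_iff, id_eq, Pi.add_apply, Pi.sub_apply, Pi.mul_apply, ← hrdef]
    exact ne_of_gt (by nlinarith [ht.1, ht.2])
  have hlbval : ∫ t in (0:ℝ)..1, r * (1 - 2 * M * Real.log (1 + t * r))
      = r - 2 * M * ((1 + r) * Real.log (1 + r) - r) := by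
    have hder2 : ∀ t ∈ uIcc (0:ℝ) 1,
        HasDerivAt (fun t : ℝ => r * t - 2 * M * ((1 + t * r) * Real.log (1 + t * r) - t * r))
          (r * (1 - 2 * M * Real.log (1 + t * r))) t := by
      intro t ht
      rw [uIcc_of_le zero_le_one] at ht
      have hpos : 0 < 1 + t * r := by nlinarith [ht.1, ht.2]
      have haff : HasDerivAt (fun t : ℝ => 1 + t * r) r t := by
        simpa using (hasDerivAt_mul_const (x := t) r).const_add 1
      have hlog := hasDerivAt_log_one_add r t hpos
      have hprod := haff.mul hlog
      have hid : HasDerivAt (fun t : ℝ => t * r) r t := hasDerivAt_mul_const r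
      have hrt : HasDerivAt (fun t : ℝ => r * t) r t := by
        simpa [mul_comm] using hid
      have := hrt.sub (((hprod.sub hid)).const_mul (2 * M))
      refine this.congr_deriv ?_
      rw [mul_div_assoc', mul_div_cancel_left₀ _ hpos.ne']
      ring
    have := integral_eq_sub_of_hasDerivAt hder2 hlbint
    rw [this]
    simp
  have hlbptwise : ∀ t ∈ Icc (0:ℝ) 1,
      r * (1 - 2 * M * Real.log (1 + t * r)) ≤ r * (deriv φ ((t : ℂ) * z)).re := by
    intro t ht
    have hmemt := hmem z hz t ht
    have hB := (hBkey _ hmemt).1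
    have habs : norm ((t : ℂ) * z) = t * r := by
      rw [norm_mul, Complex.norm_real, Real.norm_eq_abs, _root_.abs_of_nonneg ht.1, hrdef]
    rw [habs] at hB
    apply mul_le_mul_of_nonneg_left _ hr0
    linarith
  -- upper-bound integrand and its integral
  have hubint : IntervalIntegrable (fun t : ℝ => r * (1 + 2 * M * (-Real.log (1 - t * r))))
      volume 0 1 := by
    apply ContinuousOn.intervalIntegrable
    apply ContinuousOn.mul continuousOn_const
    apply ContinuousOn.add continuousOn_const
    apply ContinuousOn.mul continuousOn_const
    apply ContinuousOn.neg
    apply ContinuousOn.comp Real.continuousOn_log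
      (continuousOn_const.sub ((continuousOn_id).mul continuousOn_const))
    intro t ht
    rw [uIcc_of_le zero_le_one] at ht
    simp only [mem_compl_iff, mem_singleton_iff, id_eq, Pi.add_apply, Pi.sub_apply, Pi.mul_apply, ← hrdef]
    exact ne_of_gt (by nlinarith [ht.1, ht.2])
  have hubval : ∫ t in (0:ℝ)..1, r * (1 + 2 * M * (-Real.log (1 - t * r)))
      = r + 2 * M * (r + (1 - r) * Real.log (1 - r)) := by
    have hder2 : ∀ t ∈ uIcc (0:ℝ) 1,
        HasDerivAt (fun t : ℝ => r * t + 2 * M * (t * r + (1 - t * r) * Real.log (1 - t * r)))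
          (r * (1 + 2 * M * (-Real.log (1 - t * r)))) t := by
      intro t ht
      rw [uIcc_of_le zero_le_one] at ht
      have hpos : 0 < 1 - t * r := by nlinarith [ht.1, ht.2]
      have haff : HasDerivAt (fun t : ℝ => 1 - t * r) (-r) t := by
        simpa [sub_eq_add_neg] using ((hasDerivAt_mul_const (x := t) r).neg).const_add 1
      have hlog : HasDerivAt (fun t : ℝ => Real.log (1 - t * r)) ((1 - t * r)⁻¹ * (-r)) t := by
        have := (Real.hasDerivAt_log (ne_of_gt hpos)).comp t haff; exact this
      have hprod := haff.mul hlog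
      have hid : HasDerivAt (fun t : ℝ => t * r) r t := hasDerivAt_mul_const r
      have hrt : HasDerivAt (fun t : ℝ => r * t) r t := by
        simpa [mul_comm] using hid
      have := hrt.add ((hid.add hprod).const_mul (2 * M))
      refine this.congr_deriv ?_
      rw [mul_inv_cancel_left₀ hpos.ne']
      ring
    have := integral_eq_sub_of_hasDerivAt hder2 hubint
    rw [this]
    simp
  have hubptwise : ∀ t ∈ Icc (0:ℝ) 1,
      norm (z * deriv φ ((t : ℂ) * z)) ≤ r * (1 + 2 * M * (-Real.log (1 - t * r))) := by
    intro t ht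
    have hmemt := hmem z hz t ht
    have hB := (hBkey _ hmemt).2
    have habs : norm ((t : ℂ) * z) = t * r := by
      rw [norm_mul, Complex.norm_real, Real.norm_eq_abs, _root_.abs_of_nonneg ht.1, hrdef]
    rw [habs] at hB
    rw [norm_mul]
    rw [← hrdef]
    exact mul_le_mul_of_nonneg_left hB hr0
  constructor
  · -- lower growth bound
    by_cases hz0 : z = 0
    · subst hz0
      simp only [hrdef, map_zero, mul_zero, Real.log_one, zero_sub, add_zero]
      simp [h0]
    · have hrpos : 0 < r := by
        rw [hrdef]
        exact norm_pos_iff.mpr hz0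
      set e : ℂ := (starRingEnd ℂ) z / (r : ℂ) with hedef
      have hez : e * z = (r : ℂ) := by
        rw [hedef]
        have h1 : (starRingEnd ℂ) z * z = ((r^2 : ℝ) : ℂ) := by
          rw [mul_comm, Complex.mul_conj, Complex.normSq_eq_norm_sq, ← hrdef]
        rw [div_mul_eq_mul_div, h1]
        have : ((r^2 : ℝ) : ℂ) = (r : ℂ) * (r : ℂ) := by push_cast; ring
        rw [this]
        rw [mul_div_assoc]
        rw [div_self (by exact_mod_cast ne_of_gt hrpos), mul_one]
      have heabs : norm e = 1 := by
        rw [hedef, norm_div, Complex.norm_conj, Complex.norm_real, Real.norm_eq_abs, _root_.abs_of_pos hrpos, ← hrdef]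
        exact div_self (ne_of_gt hrpos)
      have hre_le : (e * φ z).re ≤ norm (φ z) := by
        calc (e * φ z).re ≤ norm (e * φ z) := Complex.re_le_norm _
        _ = norm (φ z) := by rw [norm_mul, heabs, one_mul]
      have heint : e * φ z = ∫ t in (0:ℝ)..1, (r : ℂ) * deriv φ ((t : ℂ) * z) := by
        rw [← hFTCφ, ← intervalIntegral.integral_const_mul]
        congr 1
        funext t
        rw [← mul_assoc, hez]
      have hreint2 : (e * φ z).re = ∫ t in (0:ℝ)..1, r * (deriv φ ((t : ℂ) * z)).re := by
        have hint2 : IntervalIntegrable (fun t : ℝ => (r : ℂ) * deriv φ ((t : ℂ) * z)) volume 0 1 := by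
          apply ContinuousOn.intervalIntegrable
          exact continuousOn_const.mul ((hφ'.continuousOn).comp ((hcst z).continuousOn) (hmapsTo z hz))
        have h2 : (∫ t in (0:ℝ)..1, (r : ℂ) * deriv φ ((t : ℂ) * z)).re
            = ∫ t in (0:ℝ)..1, ((r : ℂ) * deriv φ ((t : ℂ) * z)).re :=
          (ContinuousLinearMap.intervalIntegral_comp_comm Complex.reCLM hint2).symm
        rw [heint, h2]
        congr 1
        funext t
        exact Complex.re_ofReal_mul r (deriv φ ((t : ℂ) * z))
      have hint3 : IntervalIntegrable (fun t : ℝ => r * (deriv φ ((t : ℂ) * z)).re) volume 0 1 := by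
        apply ContinuousOn.intervalIntegrable
        apply ContinuousOn.mul continuousOn_const
        exact Complex.continuous_re.comp_continuousOn
          ((hφ'.continuousOn).comp ((hcst z).continuousOn) (hmapsTo z hz))
      have hmono := intervalIntegral.integral_mono_on zero_le_one hlbint hint3 hlbptwise
      rw [hlbval] at hmono
      rw [hreint2] at hre_le
      have : (1 + 2 * M) * r - 2 * M * (1 + r) * Real.log (1 + r)
          = r - 2 * M * ((1 + r) * Real.log (1 + r) - r) := by ring
      rw [this]
      linarith
  · -- upper growth bound
    have habs_le : norm (φ z) ≤ ∫ t in (0:ℝ)..1, norm (z * deriv φ ((t : ℂ) * z)) := by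
      rw [← hFTCφ]
      have := intervalIntegral.norm_integral_le_integral_norm
        (f := fun t : ℝ => z * deriv φ ((t : ℂ) * z)) (μ := volume) zero_le_one
      simpa using this
    have habsint2 : IntervalIntegrable (fun t : ℝ => norm (z * deriv φ ((t : ℂ) * z))) volume 0 1 :=
      (continuous_norm.comp_continuousOn hcontφ).intervalIntegrable
    have hmono := intervalIntegral.integral_mono_on zero_le_one habsint2 hubint hubptwise
    rw [hubval] at hmono
    have hfinal : r + 2 * M * (r + (1 - r) * Real.log (1 - r)) ≤ 1 + 2 * M := by
      have hlog_np : Real.log (1 - r) ≤ 0 := Real.log_nonpos (by linarith) (by linarith)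
      nlinarith [mul_nonpos_of_nonneg_of_nonpos (by linarith : (0:ℝ) ≤ 1 - r) hlog_np]
    linarith

/-- Distance to the boundary bound: `d(f(0), ∂f(𝔻)) ≥ 1 + 2M ∑_{n≥2} (-1)^{n-1}/(n(n-1))
 = 1 + 2M(1 - 2 log 2)` for `f ∈ P⁰_H(M)`. -/
theorem dist_boundary_lower_bound (M : ℝ) (hM : 0 < M) (a b : ℕ → ℂ) (h g : ℂ → ℂ)
    (hf : PH0 M a b h g) :
    (1 + 2 * M * ∑' n : ℕ, (-1 : ℝ) ^ (n + 1) / (((n : ℝ) + 2) * ((n : ℝ) + 1))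
        = 1 + 2 * M * (1 - 2 * Real.log 2)) ∧
    1 + 2 * M * (1 - 2 * Real.log 2)
        ≤ bdyDist (fun z => h z + (starRingEnd ℂ) (g z)) := by
  obtain ⟨hh, hgs, hrei⟩ := hf
  refine ⟨by rw [tsum_alt], ?_⟩
  -- analyticity of h and g
  obtain ⟨Ah, h00, h'0⟩ := analyticOnNhd_of_hasSum (c := a) (c1 := 1) (F := h)
    (fun z hz => by simpa [one_mul] using hh z hz)
  obtain ⟨Ag, g00, g'0⟩ := analyticOnNhd_of_hasSum (c := b) (c1 := 0) (F := g)
    (fun z hz => by simpa using hgs z hz)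
  -- the key uniform estimate for h + ε g
  have key : ∀ ε : ℂ, norm ε = 1 → ∀ z ∈ ball (0 : ℂ) 1,
      ((1 + 2 * M) * norm z
          - 2 * M * (1 + norm z) * Real.log (1 + norm z)
          ≤ norm (h z + ε * g z)) ∧ norm (h z + ε * g z) ≤ 1 + 2 * M := by
    intro ε hε
    set φ : ℂ → ℂ := fun z => h z + ε * g z with hφdef
    have Aεg : AnalyticOnNhd ℂ (fun z => ε * g z) (ball 0 1) := analyticOnNhd_const.mul Ag
    have Aφ : AnalyticOnNhd ℂ φ (ball 0 1) := Ah.add Aεg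
    have φ0 : φ 0 = 0 := by simp [hφdef, h00, g00]
    have dφ : Set.EqOn (deriv φ) (fun z => deriv h z + ε * deriv g z) (ball 0 1) := by
      intro z hz
      have h1 := deriv_fun_add ((Ah z hz).differentiableAt) ((Aεg z hz).differentiableAt)
      rw [hφdef]
      rw [h1, deriv_const_mul ε ((Ag z hz).differentiableAt)]
    have φ'0 : deriv φ 0 = 1 := by
      rw [dφ (mem_ball_self one_pos)]
      simp [h'0, g'0]
    have dψ : ∀ z ∈ ball (0 : ℂ) 1,
        deriv (deriv φ) z = deriv (deriv h) z + ε * deriv (deriv g) z := by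
      intro z hz
      have hev : deriv φ =ᶠ[nhds z] (fun w => deriv h w + ε * deriv g w) :=
        Filter.eventuallyEq_of_mem (isOpen_ball.mem_nhds hz) dφ
      rw [hev.deriv_eq]
      have h1 := deriv_fun_add ((Ah.deriv z hz).differentiableAt)
        ((((analyticOnNhd_const (v := ε)).mul Ag.deriv) z hz).differentiableAt)
      rw [h1, deriv_const_mul ε ((Ag.deriv z hz).differentiableAt)]
    have hreφ : ∀ z ∈ ball (0 : ℂ) 1, -M < (z * deriv (deriv φ) z).re := by
      intro z hz
      rw [dψ z hz]
      have hsplit : z * (deriv (deriv h) z + ε * deriv (deriv g) z)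
          = z * deriv (deriv h) z + ε * (z * deriv (deriv g) z) := by ring
      rw [hsplit, Complex.add_re]
      have habs : norm (ε * (z * deriv (deriv g) z))
          = norm (z * deriv (deriv g) z) := by
        rw [norm_mul, hε, one_mul]
      have hge : -(norm (z * deriv (deriv g) z)) ≤ (ε * (z * deriv (deriv g) z)).re := by
        have := (_root_.abs_le.mp (Complex.abs_re_le_norm (ε * (z * deriv (deriv g) z)))).1
        rwa [habs] at this
      have := hrei z hz
      linarith
    exact growth_bounds hM Aφ φ0 φ'0 hreφ
  -- pointwise lower bound for f = h + conj g
  have hflow : ∀ z ∈ ball (0 : ℂ) 1,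
      (1 + 2 * M) * norm z
        - 2 * M * (1 + norm z) * Real.log (1 + norm z)
        ≤ norm (h z + (starRingEnd ℂ) (g z)) := by
    intro z hz
    by_cases hgz : g z = 0
    · have := (key 1 (by simp) z hz).1
      simpa [hgz] using this
    · by_cases hhz : h z = 0
      · have := (key 1 (by simp) z hz).1
        rw [hhz] at this ⊢
        simpa [Complex.norm_conj] using this
      · set ε : ℂ := -(h z * (norm (g z) : ℝ)) / ((norm (h z) : ℝ) * g z) with hεdef
        have hhabs : (0:ℝ) < norm (h z) := norm_pos_iff.mpr hhz
        have hgabs : (0:ℝ) < norm (g z) := norm_pos_iff.mpr hgz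
        have hε : norm ε = 1 := by
          rw [hεdef, norm_div, norm_neg, norm_mul, norm_mul, Complex.norm_real, Real.norm_eq_abs,
            Complex.norm_real, Real.norm_eq_abs, _root_.abs_of_pos hgabs, _root_.abs_of_pos hhabs]
          rw [mul_comm (norm (h z)) (norm (g z))]
          exact div_self (by positivity)
        have hφe : h z + ε * g z
            = h z * (((norm (h z) - norm (g z) : ℝ) : ℂ) / (norm (h z) : ℝ)) := by
          rw [hεdef]
          have hne1 : ((norm (h z) : ℝ) : ℂ) ≠ 0 := by
            exact_mod_cast ne_of_gt hhabs
          field_simp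
          push_cast
          ring
        have habsφ : norm (h z + ε * g z)
            = |norm (h z) - norm (g z)| := by
          rw [hφe, norm_mul, norm_div, Complex.norm_real, Real.norm_eq_abs, Complex.norm_real, Real.norm_eq_abs,
            _root_.abs_of_pos hhabs]
          rw [mul_div_assoc']
          rw [mul_comm]
          rw [mul_div_assoc]
          rw [div_self (ne_of_gt hhabs), mul_one]
        have hkey := (key ε hε z hz).1
        rw [habsφ] at hkey
        have htri : |norm (h z) - norm (g z)|
            ≤ norm (h z + (starRingEnd ℂ) (g z)) := by
          have := abs_norm_sub_norm_le (h z) (-((starRingEnd ℂ) (g z)))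
          simp only [norm_neg, sub_neg_eq_add] at this
          simpa [Complex.norm_conj] using this
        linarith
  -- pointwise upper bound
  have hfupp : ∀ z ∈ ball (0 : ℂ) 1,
      norm (h z + (starRingEnd ℂ) (g z)) ≤ 2 * (1 + 2 * M) := by
    intro z hz
    have k1 := (key 1 (by simp) z hz).2
    have k2 := (key (-1) (by simp) z hz).2
    have hh2 : norm (h z) ≤ 1 + 2 * M := by
      have hsum : (h z + 1 * g z) + (h z + (-1) * g z) = 2 * h z := by ring
      have htri := norm_add_le (h z + 1 * g z) (h z + (-1) * g z)
      rw [hsum, norm_mul, Complex.norm_two] at htri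
      linarith
    have hg2 : norm (g z) ≤ 1 + 2 * M := by
      have hsum : (h z + 1 * g z) - (h z + (-1) * g z) = 2 * g z := by ring
      have htri : norm ((h z + 1 * g z) - (h z + (-1) * g z))
          ≤ norm (h z + 1 * g z) + norm (h z + (-1) * g z) := by
        simpa using norm_sub_le (h z + 1 * g z) (h z + (-1) * g z)
      rw [hsum, norm_mul, Complex.norm_two] at htri
      linarith
    calc norm (h z + (starRingEnd ℂ) (g z))
        ≤ norm (h z) + norm ((starRingEnd ℂ) (g z)) := norm_add_le _ _
    _ = norm (h z) + norm (g z) := by rw [Complex.norm_conj]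
    _ ≤ 2 * (1 + 2 * M) := by linarith

  -- liminf analysis
  set F := Filter.comap (fun z : ℂ => norm z) (nhdsWithin 1 (Set.Iio 1)) with hFdef
  haveI hFne : F.NeBot := by
    rw [hFdef]
    refine Filter.comap_neBot_iff.mpr (fun U hU => ?_)
    rw [Metric.mem_nhdsWithin_iff] at hU
    obtain ⟨δ, hδ, hsub⟩ := hU
    set t : ℝ := 1 - min δ 1 / 2 with htdef
    have hmin : 0 < min δ 1 := lt_min hδ one_pos
    have hmin1 : min δ 1 ≤ 1 := min_le_right δ 1
    have hminδ : min δ 1 ≤ δ := min_le_left δ 1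
    have ht0 : 0 ≤ t := by rw [htdef]; linarith
    have ht1 : t < 1 := by rw [htdef]; linarith
    refine ⟨(t : ℂ), ?_⟩
    have habs : norm ((t : ℝ) : ℂ) = t := by
      rw [Complex.norm_real, Real.norm_eq_abs, _root_.abs_of_nonneg ht0]
    rw [habs]
    apply hsub
    constructor
    · rw [mem_ball, Real.dist_eq]
      have he : |t - 1| = min δ 1 / 2 := by
        rw [htdef, abs_of_nonpos (by linarith)]
        ring
      rw [he]
      linarith
    · exact ht1
  have hf0 : h 0 + (starRingEnd ℂ) (g 0) = 0 := by rw [h00, g00]; simp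
  unfold bdyDist
  simp only [hf0, sub_zero]
  rw [← hFdef]
  have htendabs : Tendsto (fun z : ℂ => norm z) F (nhdsWithin 1 (Set.Iio 1)) := by
    rw [hFdef]; exact Filter.tendsto_comap
  have hev_ball : ∀ᶠ z in F, z ∈ ball (0 : ℂ) 1 := by
    have h1 : Set.Iio (1:ℝ) ∈ nhdsWithin (1:ℝ) (Set.Iio 1) := self_mem_nhdsWithin
    filter_upwards [htendabs.eventually_mem h1] with z hz
    exact mem_ball_zero_iff.mpr hz
  set L : ℝ → ℝ := fun x => (1 + 2 * M) * x - 2 * M * (1 + x) * Real.log (1 + x) with hLdef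
  have hloga : ContinuousAt (fun x : ℝ => Real.log (1 + x)) 1 := by
    have hc : ContinuousAt (fun x : ℝ => 1 + x) 1 := by fun_prop
    have h2 : (fun x : ℝ => 1 + x) 1 = 2 := by norm_num
    exact (h2 ▸ (Real.continuousAt_log (by norm_num : (2:ℝ) ≠ 0))).comp hc
  have hLc : ContinuousAt L 1 := by
    rw [hLdef]
    exact (continuousAt_const.mul continuousAt_id).sub
      ((continuousAt_const.mul (continuousAt_const.add continuousAt_id)).mul hloga)
  have hLt : Tendsto (fun z : ℂ => L (norm z)) F (nhds (L 1)) :=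
    hLc.tendsto.comp (htendabs.mono_right nhdsWithin_le_nhds)
  have hL1 : L 1 = 1 + 2 * M * (1 - 2 * Real.log 2) := by
    rw [hLdef]
    simp only
    rw [show (1:ℝ) + 1 = 2 by norm_num]
    ring
  have hlb : ∀ᶠ z in F, L (norm z) ≤ norm (h z + (starRingEnd ℂ) (g z)) := by
    filter_upwards [hev_ball] with z hz
    exact hflow z hz
  have hbdd : Filter.IsBoundedUnder (· ≥ ·) F (fun z : ℂ => L (norm z)) :=
    hLt.isBoundedUnder_ge
  have hcb : Filter.IsCoboundedUnder (· ≥ ·) F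
      (fun z : ℂ => norm (h z + (starRingEnd ℂ) (g z))) := by
    apply Filter.IsBoundedUnder.isCoboundedUnder_ge
    apply Filter.isBoundedUnder_of_eventually_le (a := 2 * (1 + 2 * M))
    filter_upwards [hev_ball] with z hz
    exact hfupp z hz
  calc 1 + 2 * M * (1 - 2 * Real.log 2) = L 1 := hL1.symm
  _ = Filter.liminf (fun z : ℂ => L (norm z)) F := (hLt.liminf_eq).symm
  _ ≤ Filter.liminf (fun z : ℂ => norm (h z + (starRingEnd ℂ) (g z))) F :=
      Filter.liminf_le_liminf hlb hbdd hcb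
end
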